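/- arXiv:1910.10783 — 4 statements merged into one kernel-verified Lean document; each statement's English description precedes it below -/
import Mathlib

section
/- For any two normalized distributions x, x' on an n×m grid, there exists at least one local flow plan δ such that x' = Δ(x, δ); moreover, the minimum of ‖δ‖₁ over all local flow plans δ satisfying x' = Δ(x, δ) equals W₁(x, x'), the 1-Wasserstein distance between x and x' with the L1 ground metric. -/
noncomputable section

open Finset MeasureTheory

/-- Grid positions of an `n × m` image (0-based indexing). -/
abbrev Pos (n m : ℕ) := Fin n × Fin m

/-- A normalized distribution: nonnegative entries summing to one. -/
def IsNormalized {n m : ℕ} (x : Fin n → Fin m → ℝ) : Prop :=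
  (∀ i j, 0 ≤ x i j) ∧ (∑ i, ∑ j, x i j) = 1

/-- `Π` is a coupling of `x` and `x'`. -/
def IsCoupling {n m : ℕ} (x x' : Fin n → Fin m → ℝ)
    (P : Pos n m → Pos n m → ℝ) : Prop :=
  (∀ p q, 0 ≤ P p q) ∧ (∀ p, (∑ q, P p q) = x p.1 p.2) ∧
    (∀ q, (∑ p, P p q) = x' q.1 q.2)

/-- Transport cost of a plan `P` with ground metric `d`. -/
def transportCost {n m : ℕ} (d : Pos n m → Pos n m → ℝ)
    (P : Pos n m → Pos n m → ℝ) : ℝ :=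
  ∑ p, ∑ q, P p q * d p q

/-- 1-Wasserstein distance with ground metric `d`. -/
def wassersteinD {n m : ℕ} (d : Pos n m → Pos n m → ℝ)
    (x x' : Fin n → Fin m → ℝ) : ℝ :=
  sInf {c | ∃ P, IsCoupling x x' P ∧ transportCost d P = c}

/-- The `L1` ground metric on pixel positions. -/
def groundL1 {n m : ℕ} (p q : Pos n m) : ℝ :=
  |((p.1 : ℕ) : ℝ) - ((q.1 : ℕ) : ℝ)| + |((p.2 : ℕ) : ℝ) - ((q.2 : ℕ) : ℝ)|

/-- The `L2` ground metric on pixel positions. -/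
def groundL2 {n m : ℕ} (p q : Pos n m) : ℝ :=
  Real.sqrt ((((p.1 : ℕ) : ℝ) - ((q.1 : ℕ) : ℝ)) ^ 2 +
    (((p.2 : ℕ) : ℝ) - ((q.2 : ℕ) : ℝ)) ^ 2)

/-- 1-Wasserstein distance with the `L1` ground metric. -/
def W1 {n m : ℕ} (x x' : Fin n → Fin m → ℝ) : ℝ := wassersteinD groundL1 x x'

/-- Value of the vertical part of a flow plan at integer indices,
zero out of range. -/
def padV {n m : ℕ} (δv : Fin (n - 1) → Fin m → ℝ) (a b : ℤ) : ℝ :=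
  ∑ i : Fin (n - 1), ∑ j : Fin m,
    if ((i : ℕ) : ℤ) = a ∧ ((j : ℕ) : ℤ) = b then δv i j else 0

/-- Value of the horizontal part of a flow plan at integer indices,
zero out of range. -/
def padH {n m : ℕ} (δh : Fin n → Fin (m - 1) → ℝ) (a b : ℤ) : ℝ :=
  ∑ i : Fin n, ∑ j : Fin (m - 1),
    if ((i : ℕ) : ℤ) = a ∧ ((j : ℕ) : ℤ) = b then δh i j else 0

/-- Application `Δ(x, δ)` of a local flow plan `δ = (δv, δh)` to an image `x`. -/
def applyFlow {n m : ℕ} (x : Fin n → Fin m → ℝ) (δv : Fin (n - 1) → Fin m → ℝ)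
    (δh : Fin n → Fin (m - 1) → ℝ) : Fin n → Fin m → ℝ :=
  fun i j =>
    x i j + padV δv (((i : ℕ) : ℤ) - 1) ((j : ℕ) : ℤ) - padV δv ((i : ℕ) : ℤ) ((j : ℕ) : ℤ)
      + padH δh ((i : ℕ) : ℤ) (((j : ℕ) : ℤ) - 1) - padH δh ((i : ℕ) : ℤ) ((j : ℕ) : ℤ)

/-- `L1` norm of a local flow plan. -/
def flowNorm {n m : ℕ} (δv : Fin (n - 1) → Fin m → ℝ)
    (δh : Fin n → Fin (m - 1) → ℝ) : ℝ :=
  (∑ i, ∑ j, |δv i j|) + (∑ i, ∑ j, |δh i j|)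

/-- Lower endpoint of a vertical edge. -/
def vlow {n : ℕ} (i : Fin (n - 1)) : Fin n := ⟨i, by have := i.isLt; omega⟩

/-- Upper endpoint of a vertical edge. -/
def vhigh {n : ℕ} (i : Fin (n - 1)) : Fin n := ⟨i + 1, by have := i.isLt; omega⟩

/-- Left endpoint of a horizontal edge. -/
def hlow {m : ℕ} (j : Fin (m - 1)) : Fin m := ⟨j, by have := j.isLt; omega⟩

/-- Right endpoint of a horizontal edge. -/
def hhigh {m : ℕ} (j : Fin (m - 1)) : Fin m := ⟨j + 1, by have := j.isLt; omega⟩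

/-- The neighbors of a position: positions at `L1` distance exactly one. -/
def nbrs {n m : ℕ} (p : Pos n m) : Finset (Pos n m) :=
  Finset.univ.filter fun q =>
    (((p.1 : ℕ) : ℤ) - ((q.1 : ℕ) : ℤ)).natAbs +
      (((p.2 : ℕ) : ℤ) - ((q.2 : ℕ) : ℤ)).natAbs = 1

/-- Index set for coordinates of local flow plans: `r = (n-1)m + n(m-1)`. -/
abbrev FlowIdx (n m : ℕ) := (Fin (n - 1) × Fin m) ⊕ (Fin n × Fin (m - 1))

/-- Vertical part of a flow-domain vector. -/
def vPart {n m : ℕ} (δ : FlowIdx n m → ℝ) : Fin (n - 1) → Fin m → ℝ :=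
  fun i j => δ (Sum.inl (i, j))

/-- Horizontal part of a flow-domain vector. -/
def hPart {n m : ℕ} (δ : FlowIdx n m → ℝ) : Fin n → Fin (m - 1) → ℝ :=
  fun i j => δ (Sum.inr (i, j))

/-- The Laplace distribution with mean `0` and standard deviation `σ`. -/
def laplaceM (σ : ℝ) : Measure ℝ :=
  volume.withDensity fun t =>
    ENNReal.ofReal ((Real.sqrt 2 * σ)⁻¹ * Real.exp (-(Real.sqrt 2 * |t|) / σ))

/-- Product of i.i.d. Laplace noise over the flow domain. -/
def flowNoise (n m : ℕ) (σ : ℝ) : Measure (FlowIdx n m → ℝ) :=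
  Measure.pi fun _ => laplaceM σ

/-- The Wasserstein-smoothed classifier. -/
def smoothed {n m k : ℕ} (σ : ℝ) (f : (Fin n → Fin m → ℝ) → Fin k → ℝ)
    (x : Fin n → Fin m → ℝ) (i : Fin k) : ℝ :=
  ∫ δ, f (applyFlow x (vPart δ) (hPart δ)) i ∂(flowNoise n m σ)

set_option linter.unusedSectionVars false
set_option maxHeartbeats 1000000

namespace FlowWass

variable {V E : Type*} [Fintype V] [DecidableEq V] [Fintype E] [DecidableEq E]

def idiv (s t : E → V) (δ : E → ℤ) (p : V) : ℤ :=
  ∑ e, δ e * ((if t e = p then 1 else 0) - (if s e = p then 1 else 0))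

lemma sum_idiv (s t : E → V) (δ : E → ℤ) : ∑ p, idiv s t δ p = 0 := by
  unfold idiv
  rw [Finset.sum_comm]
  refine Finset.sum_eq_zero fun e _ => ?_
  rw [← Finset.mul_sum]
  rw [Finset.sum_sub_distrib, Finset.sum_ite_eq, Finset.sum_ite_eq]
  simp

lemma idiv_update (s t : E → V) (δ : E → ℤ) (e : E) (w : ℤ) (p : V) :
    idiv s t (Function.update δ e w) p =
      idiv s t δ p + (w - δ e) * ((if t e = p then 1 else 0) - (if s e = p then 1 else 0)) := by
  unfold idiv
  have h : ∀ e' : E, Function.update δ e w e' *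
      ((if t e' = p then (1:ℤ) else 0) - (if s e' = p then 1 else 0)) =
      δ e' * ((if t e' = p then 1 else 0) - (if s e' = p then 1 else 0)) +
      (if e' = e then (w - δ e) * ((if t e = p then 1 else 0) - (if s e = p then 1 else 0)) else 0) := by
    intro e'
    by_cases h : e' = e
    · subst h; simp [Function.update_self]; ring
    · simp [Function.update_of_ne h, h]
  simp only [h]
  rw [Finset.sum_add_distrib, Finset.sum_ite_eq' Finset.univ e]
  simp

lemma sum_natAbs_update (f : E → ℤ) (e : E) (w : ℤ) :
    ∑ e', (Function.update f e w e').natAbs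
      = w.natAbs + ∑ e' ∈ Finset.univ.erase e, (f e').natAbs := by
  have h : ∀ e', (Function.update f e w e').natAbs
      = Function.update (fun e'' => (f e'').natAbs) e w.natAbs e' := by
    intro e'
    by_cases h : e' = e
    · subst h; simp
    · simp [Function.update_of_ne h]
  simp only [h]
  rw [Finset.sum_update_of_mem (Finset.mem_univ e), Finset.erase_eq]


lemma surgery (d : V → V → ℝ) (xt x' : V → ℤ) (u v : V)
    (hd : ∀ r, d u r ≤ 1 + d v r) (hv : 1 ≤ xt v)
    (P : V → V → ℤ) (hP0 : ∀ p q, 0 ≤ P p q)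
    (hrow : ∀ p, ∑ q, P p q = xt p) (hcol : ∀ q, ∑ p, P p q = x' q) :
    ∃ Q : V → V → ℤ, (∀ p q, 0 ≤ Q p q) ∧
      (∀ p, ∑ q, Q p q = xt p + (if u = p then 1 else 0) - (if v = p then 1 else 0)) ∧
      (∀ q, ∑ p, Q p q = x' q) ∧
      (∑ p, ∑ q, (Q p q : ℝ) * d p q) ≤ (∑ p, ∑ q, (P p q : ℝ) * d p q) + 1 := by
  -- find a column r with 1 ≤ P v r
  have hex : ∃ r, 1 ≤ P v r := by
    by_contra hc
    push_neg at hc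
    have : ∑ q, P v q ≤ 0 := Finset.sum_nonpos (fun q _ => by have := hc q; omega)
    rw [hrow v] at this; omega
  obtain ⟨r, hr⟩ := hex
  refine ⟨fun p q => P p q + (if u = p ∧ q = r then 1 else 0) - (if v = p ∧ q = r then 1 else 0),
    ?_, ?_, ?_, ?_⟩
  · intro p q
    dsimp only
    have h1 := hP0 p q
    by_cases hpv : v = p
    · by_cases hqr : q = r
      · subst hpv; subst hqr; split_ifs <;> omega
      · simp [hqr]; omega
    · simp [hpv]; split_ifs <;> omega
  · intro p
    rw [Finset.sum_sub_distrib, Finset.sum_add_distrib, hrow p]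
    congr 1
    · congr 1
      simp only [ite_and]
      by_cases h : u = p <;> simp [h, Finset.sum_ite_eq']
    · simp only [ite_and]
      by_cases h : v = p <;> simp [h, Finset.sum_ite_eq']
  · intro q
    rw [Finset.sum_sub_distrib, Finset.sum_add_distrib, hcol q]
    by_cases hqr : q = r
    · subst hqr
      simp only [and_true]
      rw [Finset.sum_ite_eq Finset.univ u fun _ => (1:ℤ), Finset.sum_ite_eq Finset.univ v fun _ => (1:ℤ)]
      simp
    · simp [hqr]
  · have key : ∀ p q, ((P p q + (if u = p ∧ q = r then 1 else 0) - (if v = p ∧ q = r then 1 else 0) : ℤ) : ℝ) * d p q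
        = (P p q : ℝ) * d p q + (if u = p ∧ q = r then d p q else 0) - (if v = p ∧ q = r then d p q else 0) := by
      intro p q
      push_cast [apply_ite (fun z : ℤ => (z : ℝ))]
      split_ifs <;> ring
    simp only [key]
    have exp1 : ∀ (w : V), (∑ p, ∑ q, (if w = p ∧ q = r then d p q else 0)) = d w r := by
      intro w
      have inner : ∀ p, (∑ q, if w = p ∧ q = r then d p q else 0) = if w = p then d p r else 0 := by
        intro p
        by_cases h : w = p
        · simp only [h, true_and]
          rw [Finset.sum_ite_eq' Finset.univ r]; simp
        · simp [h]
      simp only [inner]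
      rw [Finset.sum_ite_eq Finset.univ w]; simp
    simp only [Finset.sum_sub_distrib, Finset.sum_add_distrib, exp1]
    have := hd r
    linarith


/-- helper: one induction step given the new flow and vertex pair. -/
lemma main_step (s t : E → V) (d : V → V → ℝ)
    (N : ℕ)
    (IH : ∀ M, M < N → ∀ (x x' : V → ℤ) (δ : E → ℤ), (∀ p, 0 ≤ x p) → (∀ p, 0 ≤ x' p) →
      (∑ e, (δ e).natAbs) = M → (∀ p, x' p = x p + idiv s t δ p) →
      ∃ P : V → V → ℤ, (∀ p q, 0 ≤ P p q) ∧ (∀ p, ∑ q, P p q = x p) ∧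
        (∀ q, ∑ p, P p q = x' q) ∧ (∑ p, ∑ q, (P p q : ℝ) * d p q) ≤ (M : ℝ))
    (x x' : V → ℤ) (hx : ∀ p, 0 ≤ x p) (hx' : ∀ p, 0 ≤ x' p)
    (u v : V) (huv : u ≠ v) (hu : x' u < x u)
    (δ' : E → ℤ) (hsum' : (∑ e, (δ' e).natAbs) + 1 = N)
    (hd_uv : ∀ r, d u r ≤ 1 + d v r)
    (hdiv' : ∀ p, x' p = (x p - (if u = p then 1 else 0) + (if v = p then 1 else 0)) + idiv s t δ' p) :
    ∃ P : V → V → ℤ, (∀ p q, 0 ≤ P p q) ∧ (∀ p, ∑ q, P p q = x p) ∧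
      (∀ q, ∑ p, P p q = x' q) ∧ (∑ p, ∑ q, (P p q : ℝ) * d p q) ≤ (N : ℝ) := by
  set xt : V → ℤ := fun p => x p - (if u = p then 1 else 0) + (if v = p then 1 else 0) with hxt
  have hxt0 : ∀ p, 0 ≤ xt p := by
    intro p
    simp only [hxt]
    by_cases h4 : u = p
    · subst h4
      rw [if_pos rfl, if_neg (fun h => huv h.symm)]
      have := hx' u; omega
    · rw [if_neg h4]
      by_cases h5 : v = p
      · rw [if_pos h5]; have := hx p; omega
      · rw [if_neg h5]; have := hx p; omega
  have hM : (∑ e, (δ' e).natAbs) < N := by omega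
  obtain ⟨Pt, hPt0, hPtrow, hPtcol, hPtcost⟩ :=
    IH _ hM xt x' δ' hxt0 hx' rfl (fun p => hdiv' p)
  obtain ⟨Q, hQ0, hQrow, hQcol, hQcost⟩ :=
    surgery d xt x' u v hd_uv
      (by have h5 := hx v
          simp only [hxt]
          rw [if_neg huv]
          simp
          omega) Pt hPt0 hPtrow hPtcol
  refine ⟨Q, hQ0, ?_, hQcol, ?_⟩
  · intro p
    rw [hQrow p]
    simp only [hxt]
    ring
  · have hNcast : ((∑ e, (δ' e).natAbs : ℕ) : ℝ) = (N : ℝ) - 1 := by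
      have : ((∑ e, (δ' e).natAbs) + 1 : ℕ) = N := hsum'
      push_cast [← this]
      ring
    calc (∑ p, ∑ q, (Q p q : ℝ) * d p q) ≤ (∑ p, ∑ q, (Pt p q : ℝ) * d p q) + 1 := hQcost
    _ ≤ ((N:ℝ) - 1) + 1 := by rw [← hNcast]; linarith
    _ = N := by ring

lemma lemA (s t : E → V) (d : V → V → ℝ) (hd0 : ∀ p, d p p = 0)
    (hdst : ∀ e r, d (s e) r ≤ 1 + d (t e) r)
    (hdts : ∀ e r, d (t e) r ≤ 1 + d (s e) r) :
    ∀ (N : ℕ) (x x' : V → ℤ) (δ : E → ℤ), (∀ p, 0 ≤ x p) → (∀ p, 0 ≤ x' p) →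
    (∑ e, (δ e).natAbs) = N → (∀ p, x' p = x p + idiv s t δ p) →
    ∃ P : V → V → ℤ, (∀ p q, 0 ≤ P p q) ∧ (∀ p, ∑ q, P p q = x p) ∧
      (∀ q, ∑ p, P p q = x' q) ∧ (∑ p, ∑ q, (P p q : ℝ) * d p q) ≤ (N : ℝ) := by
  intro N
  induction N using Nat.strong_induction_on with
  | _ N IH =>
    intro x x' δ hx hx' hN hdiv
    by_cases hxx : ∀ p, x p = x' p
    · -- diagonal coupling
      refine ⟨fun p q => if p = q then x p else 0, ?_, ?_, ?_, ?_⟩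
      · intro p q; dsimp only; split_ifs with h
        · exact hx p
        · exact le_refl 0
      · intro p; dsimp only; rw [Finset.sum_ite_eq Finset.univ p]; simp
      · intro q
        dsimp only
        have h2 : ∀ p : V, (if p = q then x p else 0) = (if p = q then x q else 0) := by
          intro p; by_cases h : p = q <;> simp [h]
        simp only [h2]
        rw [Finset.sum_ite_eq' Finset.univ q]
        simp [hxx q]
      · have h3 : ∀ p q : V, ((if p = q then x p else 0 : ℤ) : ℝ) * d p q = 0 := by
          intro p q
          split_ifs with h
          · subst h; simp [hd0]
          · simp
        simp only [h3]
        simp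
    · -- main step
      push_neg at hxx
      obtain ⟨p0, hp0⟩ := hxx
      have htot : ∑ p, x p = ∑ p, x' p := by
        have h4 : ∑ p, x' p = ∑ p, x p + ∑ p, idiv s t δ p := by
          rw [← Finset.sum_add_distrib]
          exact Finset.sum_congr rfl fun p _ => hdiv p
        rw [h4, sum_idiv]; ring
      have hexu : ∃ u, x' u < x u := by
        by_contra hc
        push_neg at hc
        have hstrict : ∑ p, x p < ∑ p, x' p := by
          apply Finset.sum_lt_sum (fun i _ => hc i)
          refine ⟨p0, Finset.mem_univ _, ?_⟩
          cases lt_or_eq_of_le (hc p0) with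
          | inl h => exact h
          | inr h => exact absurd h hp0
        omega
      obtain ⟨u, hu⟩ := hexu
      have hdivu : idiv s t δ u < 0 := by have := hdiv u; omega
      have hexe : ∃ e, δ e * ((if t e = u then (1:ℤ) else 0) - (if s e = u then 1 else 0)) < 0 := by
        by_contra hc
        push_neg at hc
        have : (0:ℤ) ≤ idiv s t δ u := Finset.sum_nonneg fun e _ => hc e
        omega
      obtain ⟨e, he⟩ := hexe
      have hNpos : (δ e).natAbs ≤ N := by
        rw [← hN]
        exact Finset.single_le_sum (f := fun e' => (δ e').natAbs)
          (fun e' _ => Nat.zero_le _) (Finset.mem_univ e)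
      by_cases ht : t e = u <;> by_cases hs : s e = u
      · rw [ht, hs] at he; simp at he
      · -- t e = u, s e ≠ u, δ e < 0 ; v := s e ; δ' := update δ e (δ e + 1)
        rw [if_pos ht, if_neg hs] at he
        have hde : δ e < 0 := by omega
        apply main_step s t d N IH x x' hx hx' u (s e) (fun h => hs h.symm) hu
          (Function.update δ e (δ e + 1))
        · rw [sum_natAbs_update]
          rw [← Finset.add_sum_erase Finset.univ _ (Finset.mem_univ e)] at hN
          omega
        · intro r; rw [← ht]; exact hdts e r
        · intro p
          rw [idiv_update, ht]
          have := hdiv p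
          have harith : ((δ e + 1) - δ e) = (1:ℤ) := by ring
          rw [harith, one_mul, this]
          ring
      · -- s e = u, t e ≠ u, δ e > 0 ; v := t e ; δ' := update δ e (δ e - 1)
        rw [if_neg ht, if_pos hs] at he
        have hde : 0 < δ e := by omega
        apply main_step s t d N IH x x' hx hx' u (t e) (fun h => ht h.symm) hu
          (Function.update δ e (δ e - 1))
        · rw [sum_natAbs_update]
          rw [← Finset.add_sum_erase Finset.univ _ (Finset.mem_univ e)] at hN
          omega
        · intro r; rw [← hs]; exact hdst e r
        · intro p
          rw [idiv_update, hs]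
          have := hdiv p
          have harith : ((δ e - 1) - δ e) = (-1:ℤ) := by ring
          rw [harith]
          have hexp : (-1 : ℤ) * ((if t e = p then 1 else 0) - (if u = p then 1 else 0))
              = (if u = p then 1 else 0) - (if t e = p then 1 else 0) := by ring
          rw [hexp, this]
          ring
      · rw [if_neg ht, if_neg hs] at he; simp at he


def rdiv (s t : E → V) (δ : E → ℝ) (p : V) : ℝ :=
  ∑ e, δ e * ((if t e = p then 1 else 0) - (if s e = p then 1 else 0))

lemma idiv_cast (s t : E → V) (δ : E → ℤ) (p : V) :
    ((idiv s t δ p : ℤ) : ℝ) = rdiv s t (fun e => (δ e : ℝ)) p := by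
  unfold idiv rdiv
  push_cast
  rfl

lemma rdiv_diff_le (s t : E → V) (f g : E → ℝ) (p : V) :
    |rdiv s t f p - rdiv s t g p| ≤ ∑ e, |f e - g e| := by
  unfold rdiv
  rw [← Finset.sum_sub_distrib]
  refine (Finset.abs_sum_le_sum_abs _ _).trans ?_
  apply Finset.sum_le_sum
  intro e _
  rw [← sub_mul, abs_mul]
  have h1 : |((if t e = p then (1:ℝ) else 0) - (if s e = p then 1 else 0))| ≤ 1 := by
    split_ifs <;> norm_num
  calc |f e - g e| * |(if t e = p then (1:ℝ) else 0) - (if s e = p then 1 else 0)|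
      ≤ |f e - g e| * 1 := mul_le_mul_of_nonneg_left h1 (abs_nonneg _)
    _ = |f e - g e| := mul_one _

lemma rdiv_mul (s t : E → V) (δ : E → ℝ) (c : ℝ) (p : V) :
    rdiv s t (fun e => δ e * c) p = c * rdiv s t δ p := by
  unfold rdiv
  rw [Finset.mul_sum]
  exact Finset.sum_congr rfl fun e _ => by ring

lemma floor_dist (y : ℝ) : |(⌊y⌋ : ℝ) - y| ≤ 1 :=
  abs_le.mpr ⟨by linarith [Int.lt_floor_add_one y], by linarith [Int.floor_le y]⟩

lemma tendsto_div_aux (f : ℕ → ℝ) (y c : ℝ) (hf : ∀ k, |f k - y * ((k:ℝ)+1)| ≤ c) :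
    Filter.Tendsto (fun k : ℕ => f k / ((k:ℝ)+1)) Filter.atTop (nhds y) := by
  have h0 : Filter.Tendsto (fun k : ℕ => f k / ((k:ℝ)+1) - y) Filter.atTop (nhds 0) := by
    refine squeeze_zero_norm (a := fun k : ℕ => c / ((k:ℝ)+1)) ?_ ?_
    · intro k
      have hk : (0:ℝ) < (k:ℝ)+1 := by positivity
      rw [Real.norm_eq_abs]
      have h2 : f k / ((k:ℝ)+1) - y = (f k - y*((k:ℝ)+1)) / ((k:ℝ)+1) := by field_simp
      rw [h2, abs_div, abs_of_pos hk]
      exact div_le_div_of_nonneg_right (hf k) hk.le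
    · exact Filter.Tendsto.div_atTop tendsto_const_nhds
        (Filter.tendsto_atTop_add_const_right _ 1 tendsto_natCast_atTop_atTop)
  simpa using h0.add (tendsto_const_nhds (x := y))


lemma lemB (s t : E → V) (d : V → V → ℝ) (hd0 : ∀ p, d p p = 0)
    (hdst : ∀ e r, d (s e) r ≤ 1 + d (t e) r)
    (hdts : ∀ e r, d (t e) r ≤ 1 + d (s e) r)
    (x x' : V → ℝ) (δ : E → ℝ) (hx : ∀ p, 0 ≤ x p) (hx' : ∀ p, 0 ≤ x' p)
    (hdiv : ∀ p, x' p = x p + rdiv s t δ p) :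
    ∃ P : V → V → ℝ, (∀ p q, 0 ≤ P p q) ∧ (∀ p, ∑ q, P p q = x p) ∧
      (∀ q, ∑ p, P p q = x' q) ∧
      (∑ p, ∑ q, P p q * d p q) ≤ ∑ e, |δ e| := by
  classical
  -- integer approximations at scale (k+1)
  set C : ℤ := Fintype.card E + 1 with hC
  have hC0 : (0:ℤ) ≤ C := by rw [hC]; positivity
  set δk : ℕ → E → ℤ := fun k e => ⌊δ e * ((k:ℝ)+1)⌋ with hδk
  set xk : ℕ → V → ℤ := fun k p => ⌊x p * ((k:ℝ)+1)⌋ + C with hxk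
  set x'k : ℕ → V → ℤ := fun k p => xk k p + idiv s t (δk k) p with hx'k
  -- approximation of divergence
  have fact2 : ∀ (k : ℕ) (p : V),
      |((idiv s t (δk k) p : ℤ) : ℝ) - ((k:ℝ)+1) * rdiv s t δ p| ≤ Fintype.card E := by
    intro k p
    rw [idiv_cast, ← rdiv_mul s t δ ((k:ℝ)+1) p]
    refine (rdiv_diff_le s t _ _ p).trans ?_
    calc (∑ e, |((δk k e : ℤ) : ℝ) - δ e * ((k:ℝ)+1)|) ≤ ∑ _e : E, (1:ℝ) :=
          Finset.sum_le_sum (fun e _ => floor_dist _)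
      _ = Fintype.card E := by simp
  have hxk0 : ∀ k p, 0 ≤ xk k p := by
    intro k p
    have h1 : (0:ℤ) ≤ ⌊x p * ((k:ℝ)+1)⌋ := Int.floor_nonneg.mpr (by
      have := hx p
      positivity)
    simp only [hxk]
    omega
  have hxkbound : ∀ k p, ((xk k p : ℤ) : ℝ) ≤ x p * ((k:ℝ)+1) + C := by
    intro k p
    have := Int.floor_le (x p * ((k:ℝ)+1))
    simp only [hxk]
    push_cast
    linarith
  have hxkdist : ∀ k p, |((xk k p : ℤ) : ℝ) - x p * ((k:ℝ)+1)| ≤ 1 + (C:ℝ) := by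
    intro k p
    have h1 := floor_dist (x p * ((k:ℝ)+1))
    have hCr : (0:ℝ) ≤ (C:ℝ) := by exact_mod_cast hC0
    simp only [hxk]
    push_cast
    rw [abs_le] at h1 ⊢
    constructor <;> [linarith [h1.1]; linarith [h1.2]]
  have hx'kdist : ∀ k q, |((x'k k q : ℤ) : ℝ) - x' q * ((k:ℝ)+1)|
      ≤ 1 + (C:ℝ) + Fintype.card E := by
    intro k q
    have h1 := hxkdist k q
    have h2 := fact2 k q
    have key : ((x'k k q : ℤ):ℝ) - x' q * ((k:ℝ)+1)
        = (((xk k q : ℤ):ℝ) - x q * ((k:ℝ)+1))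
          + (((idiv s t (δk k) q : ℤ):ℝ) - ((k:ℝ)+1) * rdiv s t δ q) := by
      rw [hdiv q]
      simp only [hx'k]
      push_cast
      ring
    rw [key]
    calc |_ + _| ≤ |((xk k q : ℤ):ℝ) - x q * ((k:ℝ)+1)|
          + |((idiv s t (δk k) q : ℤ):ℝ) - ((k:ℝ)+1) * rdiv s t δ q| := abs_add_le _ _
      _ ≤ (1 + (C:ℝ)) + Fintype.card E := add_le_add h1 h2
  have hx'k0 : ∀ k q, 0 ≤ x'k k q := by
    intro k q
    have h2 := (abs_le.mp (fact2 k q)).1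
    have h6 := (abs_le.mp (floor_dist (x q * ((k:ℝ)+1)))).1
    have h5 : rdiv s t δ q = x' q - x q := by linarith [hdiv q]
    have h4 : ((k:ℝ)+1) * rdiv s t δ q = x' q * ((k:ℝ)+1) - x q * ((k:ℝ)+1) := by
      rw [h5]; ring
    have h8 : (0:ℝ) ≤ x' q * ((k:ℝ)+1) := by
      have := hx' q; positivity
    have hgoal : (0:ℝ) ≤ ((x'k k q : ℤ):ℝ) := by
      have hexp : ((x'k k q : ℤ):ℝ)
          = (⌊x q * ((k:ℝ)+1)⌋ : ℝ) + ((Fintype.card E : ℝ) + 1)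
            + ((idiv s t (δk k) q : ℤ):ℝ) := by
        simp only [hx'k, hxk, hC]
        push_cast
        ring
      rw [hexp]
      linarith [h4 ▸ h2]
    exact_mod_cast hgoal
  -- apply the integer lemma at each scale
  have main : ∀ k : ℕ, ∃ P : V → V → ℤ, (∀ p q, 0 ≤ P p q) ∧
      (∀ p, ∑ q, P p q = xk k p) ∧ (∀ q, ∑ p, P p q = x'k k q) ∧
      (∑ p, ∑ q, ((P p q : ℤ) : ℝ) * d p q) ≤ ((∑ e, (δk k e).natAbs : ℕ) : ℝ) :=
    fun k => lemA s t d hd0 hdst hdts _ (xk k) (x'k k) (δk k)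
      (hxk0 k) (hx'k0 k) rfl (fun p => by simp only [hx'k])
  choose P hP0 hProw hPcol hPcost using main
  set u : ℕ → V → V → ℝ := fun k p q => ((P k p q : ℤ) : ℝ)/((k:ℝ)+1) with hu
  set B : ℝ := (∑ p, x p) + (C:ℝ) with hB
  have hK : ∀ k : ℕ, (0:ℝ) < (k:ℝ)+1 := fun k => by positivity
  have humem : ∀ k, u k ∈ Set.Icc (0 : V → V → ℝ) (fun _ _ => B) := by
    intro k
    constructor
    · intro p q
      simp only [hu, Pi.zero_apply]
      exact div_nonneg (by exact_mod_cast hP0 k p q) (hK k).le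
    · intro p q
      simp only [hu]
      rw [div_le_iff₀ (hK k)]
      have s1 : P k p q ≤ xk k p := by
        rw [← hProw k p]
        exact Finset.single_le_sum (f := fun q' => P k p q') (fun q' _ => hP0 k p q') (Finset.mem_univ q)
      have s2 := hxkbound k p
      have s3 : x p ≤ ∑ p', x p' :=
        Finset.single_le_sum (f := fun p' => x p') (fun p' _ => hx p') (Finset.mem_univ p)
      have s4 : (1:ℝ) ≤ (k:ℝ)+1 := by
        have : (0:ℝ) ≤ (k:ℝ) := Nat.cast_nonneg k
        linarith
      have hCr : (0:ℝ) ≤ (C:ℝ) := by exact_mod_cast hC0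
      have s5 : ((P k p q : ℤ):ℝ) ≤ ((xk k p : ℤ):ℝ) := by exact_mod_cast s1
      have s6 : (C:ℝ) ≤ (C:ℝ) * ((k:ℝ)+1) := le_mul_of_one_le_right hCr s4
      have s7 : x p * ((k:ℝ)+1) ≤ (∑ p', x p') * ((k:ℝ)+1) :=
        mul_le_mul_of_nonneg_right s3 (hK k).le
      calc ((P k p q : ℤ):ℝ) ≤ x p * ((k:ℝ)+1) + (C:ℝ) := s5.trans s2
        _ ≤ (∑ p', x p') * ((k:ℝ)+1) + (C:ℝ) * ((k:ℝ)+1) := add_le_add s7 s6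
        _ = B * ((k:ℝ)+1) := by rw [hB]; ring
  obtain ⟨PL, hPLmem, φ, hφ, hconv⟩ := isCompact_Icc.tendsto_subseq humem
  have hcoord : ∀ p q, Filter.Tendsto (fun j => u (φ j) p q) Filter.atTop (nhds (PL p q)) := by
    intro p q
    exact tendsto_pi_nhds.mp (tendsto_pi_nhds.mp hconv p) q
  have hrowPL : ∀ p, ∑ q, PL p q = x p := by
    intro p
    have h1 : Filter.Tendsto (fun j => ∑ q, u (φ j) p q) Filter.atTop (nhds (∑ q, PL p q)) :=
      tendsto_finset_sum _ (fun q _ => hcoord p q)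
    have h2 : ∀ k, ∑ q, u k p q = ((xk k p : ℤ):ℝ) / ((k:ℝ)+1) := by
      intro k
      simp only [hu]
      rw [← Finset.sum_div]
      congr 1
      exact_mod_cast hProw k p
    have h3 : Filter.Tendsto (fun k : ℕ => ((xk k p : ℤ):ℝ) / ((k:ℝ)+1))
        Filter.atTop (nhds (x p)) :=
      tendsto_div_aux _ _ _ (fun k => hxkdist k p)
    have h4 := h3.comp hφ.tendsto_atTop
    simp only [h2] at h1
    exact tendsto_nhds_unique h1 h4
  have hcolPL : ∀ q, ∑ p, PL p q = x' q := by
    intro q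
    have h1 : Filter.Tendsto (fun j => ∑ p, u (φ j) p q) Filter.atTop (nhds (∑ p, PL p q)) :=
      tendsto_finset_sum _ (fun p _ => hcoord p q)
    have h2 : ∀ k, ∑ p, u k p q = ((x'k k q : ℤ):ℝ) / ((k:ℝ)+1) := by
      intro k
      simp only [hu]
      rw [← Finset.sum_div]
      congr 1
      exact_mod_cast hPcol k q
    have h3 : Filter.Tendsto (fun k : ℕ => ((x'k k q : ℤ):ℝ) / ((k:ℝ)+1))
        Filter.atTop (nhds (x' q)) :=
      tendsto_div_aux _ _ _ (fun k => hx'kdist k q)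
    have h4 := h3.comp hφ.tendsto_atTop
    simp only [h2] at h1
    exact tendsto_nhds_unique h1 h4
  have hcostk : ∀ k, ∑ p, ∑ q, u k p q * d p q
      ≤ (∑ e, |δ e|) + (Fintype.card E : ℝ)/((k:ℝ)+1) := by
    intro k
    have e1 : ∑ p, ∑ q, u k p q * d p q
        = (∑ p, ∑ q, ((P k p q : ℤ):ℝ) * d p q)/((k:ℝ)+1) := by
      simp only [hu, div_mul_eq_mul_div, ← Finset.sum_div]
    have e2 : ((∑ e, (δk k e).natAbs : ℕ) : ℝ) ≤ (∑ e, |δ e|) * ((k:ℝ)+1) + Fintype.card E := by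
      push_cast
      have step : ∀ e : E, ((δk k e).natAbs : ℝ) ≤ |δ e| * ((k:ℝ)+1) + 1 := by
        intro e
        have hfd := floor_dist (δ e * ((k:ℝ)+1))
        have : ((δk k e).natAbs : ℝ) = |((δk k e : ℤ):ℝ)| := by
          simp [Nat.cast_natAbs]
        rw [this]
        have habs : |((δk k e : ℤ):ℝ)| ≤ |δ e * ((k:ℝ)+1)| + 1 := by
          have := abs_sub_abs_le_abs_sub ((δk k e : ℤ):ℝ) (δ e * ((k:ℝ)+1))
          simp only [hδk] at hfd ⊢
          linarith [this.trans hfd]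
        rw [abs_mul, abs_of_pos (hK k)] at habs
        simpa using habs
      calc ∑ e, ((δk k e).natAbs : ℝ) ≤ ∑ e, (|δ e| * ((k:ℝ)+1) + 1) :=
            Finset.sum_le_sum (fun e _ => step e)
        _ = (∑ e, |δ e|) * ((k:ℝ)+1) + Fintype.card E := by
            rw [Finset.sum_add_distrib, Finset.sum_mul]
            simp
    rw [e1]
    rw [div_le_iff₀ (hK k)]
    calc (∑ p, ∑ q, ((P k p q : ℤ):ℝ) * d p q) ≤ ((∑ e, (δk k e).natAbs : ℕ) : ℝ) := hPcost k
      _ ≤ (∑ e, |δ e|) * ((k:ℝ)+1) + Fintype.card E := e2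
      _ = ((∑ e, |δ e|) + (Fintype.card E : ℝ)/((k:ℝ)+1)) * ((k:ℝ)+1) := by
          field_simp
  refine ⟨PL, ?_, hrowPL, hcolPL, ?_⟩
  · intro p q
    have := hPLmem.1
    exact this p q
  · have h1 : Filter.Tendsto (fun j => ∑ p, ∑ q, u (φ j) p q * d p q)
        Filter.atTop (nhds (∑ p, ∑ q, PL p q * d p q)) :=
      tendsto_finset_sum _ (fun p _ => tendsto_finset_sum _ (fun q _ => (hcoord p q).mul_const (d p q)))
    have h2 : Filter.Tendsto (fun j => (∑ e, |δ e|) + (Fintype.card E : ℝ)/(((φ j):ℝ)+1))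
        Filter.atTop (nhds ((∑ e, |δ e|))) := by
      have h3 : Filter.Tendsto (fun k : ℕ => (Fintype.card E : ℝ)/((k:ℝ)+1)) Filter.atTop (nhds 0) :=
        Filter.Tendsto.div_atTop tendsto_const_nhds
          (Filter.tendsto_atTop_add_const_right _ 1 tendsto_natCast_atTop_atTop)
      have h4 := h3.comp hφ.tendsto_atTop
      simpa using (tendsto_const_nhds (x := (∑ e, |δ e|)) (f := Filter.atTop (α := ℕ))).add h4
    exact le_of_tendsto_of_tendsto' h1 h2 (fun j => hcostk (φ j))

variable {n m : ℕ}

def gs : FlowIdx n m → Pos n m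
  | .inl ij => (vlow ij.1, ij.2)
  | .inr ij => (ij.1, hlow ij.2)

def gt : FlowIdx n m → Pos n m
  | .inl ij => (vhigh ij.1, ij.2)
  | .inr ij => (ij.1, hhigh ij.2)

def flat (δv : Fin (n - 1) → Fin m → ℝ) (δh : Fin n → Fin (m - 1) → ℝ) :
    FlowIdx n m → ℝ
  | .inl ij => δv ij.1 ij.2
  | .inr ij => δh ij.1 ij.2

lemma rdiv_grid (δv : Fin (n - 1) → Fin m → ℝ) (δh : Fin n → Fin (m - 1) → ℝ)
    (p : Pos n m) :
    rdiv gs gt (flat δv δh) p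
      = padV δv ((p.1 : ℤ) - 1) (p.2 : ℤ) - padV δv (p.1 : ℤ) (p.2 : ℤ)
        + (padH δh (p.1 : ℤ) ((p.2 : ℤ) - 1) - padH δh (p.1 : ℤ) (p.2 : ℤ)) := by
  unfold rdiv
  rw [Fintype.sum_sum_type]
  have hV : ∑ ij : Fin (n-1) × Fin m, flat δv δh (.inl ij) *
      ((if gt (.inl ij) = p then (1:ℝ) else 0) - (if gs (.inl ij) = p then 1 else 0))
      = padV δv ((p.1 : ℤ) - 1) (p.2 : ℤ) - padV δv (p.1 : ℤ) (p.2 : ℤ) := by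
    unfold padV
    rw [← Finset.sum_sub_distrib, Fintype.sum_prod_type]
    refine Finset.sum_congr rfl fun i _ => ?_
    rw [← Finset.sum_sub_distrib]
    refine Finset.sum_congr rfl fun j _ => ?_
    have h1 : (gt (.inl (i, j)) = p) ↔ (((i:ℕ):ℤ) = (p.1:ℤ) - 1 ∧ ((j:ℕ):ℤ) = ((p.2:ℕ):ℤ)) := by
      show ((vhigh i, j) = p) ↔ _
      rw [Prod.ext_iff, Fin.ext_iff, Fin.ext_iff]
      simp only [vhigh]
      omega
    have h2 : (gs (.inl (i, j)) = p) ↔ (((i:ℕ):ℤ) = (p.1:ℤ) ∧ ((j:ℕ):ℤ) = ((p.2:ℕ):ℤ)) := by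
      show ((vlow i, j) = p) ↔ _
      rw [Prod.ext_iff, Fin.ext_iff, Fin.ext_iff]
      simp only [vlow]
      omega
    rw [if_congr h1 rfl rfl, if_congr h2 rfl rfl]
    show δv i j * _ = _
    split_ifs <;> ring
  have hH : ∑ ij : Fin n × Fin (m-1), flat δv δh (.inr ij) *
      ((if gt (.inr ij) = p then (1:ℝ) else 0) - (if gs (.inr ij) = p then 1 else 0))
      = padH δh (p.1 : ℤ) ((p.2 : ℤ) - 1) - padH δh (p.1 : ℤ) (p.2 : ℤ) := by
    unfold padH
    rw [← Finset.sum_sub_distrib, Fintype.sum_prod_type]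
    refine Finset.sum_congr rfl fun i _ => ?_
    rw [← Finset.sum_sub_distrib]
    refine Finset.sum_congr rfl fun j _ => ?_
    have h1 : (gt (.inr (i, j)) = p) ↔ (((i:ℕ):ℤ) = ((p.1:ℕ):ℤ) ∧ ((j:ℕ):ℤ) = (p.2:ℤ) - 1) := by
      show ((i, hhigh j) = p) ↔ _
      rw [Prod.ext_iff, Fin.ext_iff, Fin.ext_iff]
      simp only [hhigh]
      omega
    have h2 : (gs (.inr (i, j)) = p) ↔ (((i:ℕ):ℤ) = ((p.1:ℕ):ℤ) ∧ ((j:ℕ):ℤ) = ((p.2:ℕ):ℤ)) := by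
      show ((i, hlow j) = p) ↔ _
      rw [Prod.ext_iff, Fin.ext_iff, Fin.ext_iff]
      simp only [hlow]
      omega
    rw [if_congr h1 rfl rfl, if_congr h2 rfl rfl]
    show δh i j * _ = _
    split_ifs <;> ring
  rw [hV, hH]

lemma applyFlow_iff (x x' : Fin n → Fin m → ℝ) (δv : Fin (n - 1) → Fin m → ℝ)
    (δh : Fin n → Fin (m - 1) → ℝ) :
    applyFlow x δv δh = x' ↔
      ∀ p : Pos n m, x' p.1 p.2 = x p.1 p.2 + rdiv gs gt (flat δv δh) p := by
  rw [funext_iff]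
  constructor
  · intro h p
    rw [rdiv_grid]
    have := congrFun (h p.1) p.2
    unfold applyFlow at this
    rw [← this]
    ring
  · intro h
    intro i
    funext j
    have := h (i, j)
    rw [rdiv_grid] at this
    unfold applyFlow
    rw [this]
    ring

lemma flowNorm_eq (δv : Fin (n - 1) → Fin m → ℝ) (δh : Fin n → Fin (m - 1) → ℝ) :
    flowNorm δv δh = ∑ e : FlowIdx n m, |flat δv δh e| := by
  rw [Fintype.sum_sum_type]
  unfold flowNorm
  congr 1
  · rw [Fintype.sum_prod_type]; rfl
  · rw [Fintype.sum_prod_type]; rfl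

lemma groundL1_self (p : Pos n m) : groundL1 p p = 0 := by simp [groundL1]

lemma groundL1_nonneg (p q : Pos n m) : 0 ≤ groundL1 p q :=
  add_nonneg (abs_nonneg _) (abs_nonneg _)

lemma abs_helper (a c : ℝ) : |a - c| ≤ 1 + |a + 1 - c| := by
  calc |a - c| = |(a + 1 - c) + (-1)| := by ring_nf
    _ ≤ |a + 1 - c| + |(-1 : ℝ)| := abs_add_le _ _
    _ = 1 + |a + 1 - c| := by rw [abs_neg, abs_one]; ring

lemma abs_helper' (a c : ℝ) : |a + 1 - c| ≤ 1 + |a - c| := by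
  calc |a + 1 - c| = |(a - c) + 1| := by ring_nf
    _ ≤ |a - c| + |(1 : ℝ)| := abs_add_le _ _
    _ = 1 + |a - c| := by rw [abs_one]; ring

lemma ground_st (e : FlowIdx n m) (r : Pos n m) :
    groundL1 (gs e) r ≤ 1 + groundL1 (gt e) r := by
  cases e with
  | inl ij =>
    show groundL1 (vlow ij.1, ij.2) r ≤ 1 + groundL1 (vhigh ij.1, ij.2) r
    unfold groundL1
    have h1 : ((vlow ij.1 : ℕ) : ℝ) = ((ij.1 : ℕ) : ℝ) := by simp [vlow]
    have h2 : ((vhigh ij.1 : ℕ) : ℝ) = ((ij.1 : ℕ) : ℝ) + 1 := by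
      simp [vhigh]
    simp only [h1, h2]
    have := abs_helper ((ij.1 : ℕ) : ℝ) ((r.1 : ℕ) : ℝ)
    linarith
  | inr ij =>
    show groundL1 (ij.1, hlow ij.2) r ≤ 1 + groundL1 (ij.1, hhigh ij.2) r
    unfold groundL1
    have h1 : ((hlow ij.2 : ℕ) : ℝ) = ((ij.2 : ℕ) : ℝ) := by simp [hlow]
    have h2 : ((hhigh ij.2 : ℕ) : ℝ) = ((ij.2 : ℕ) : ℝ) + 1 := by
      simp [hhigh]
    simp only [h1, h2]
    have := abs_helper ((ij.2 : ℕ) : ℝ) ((r.2 : ℕ) : ℝ)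
    linarith

lemma ground_ts (e : FlowIdx n m) (r : Pos n m) :
    groundL1 (gt e) r ≤ 1 + groundL1 (gs e) r := by
  cases e with
  | inl ij =>
    show groundL1 (vhigh ij.1, ij.2) r ≤ 1 + groundL1 (vlow ij.1, ij.2) r
    unfold groundL1
    have h1 : ((vlow ij.1 : ℕ) : ℝ) = ((ij.1 : ℕ) : ℝ) := by simp [vlow]
    have h2 : ((vhigh ij.1 : ℕ) : ℝ) = ((ij.1 : ℕ) : ℝ) + 1 := by
      simp [vhigh]
    simp only [h1, h2]
    have := abs_helper' ((ij.1 : ℕ) : ℝ) ((r.1 : ℕ) : ℝ)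
    linarith
  | inr ij =>
    show groundL1 (ij.1, hhigh ij.2) r ≤ 1 + groundL1 (ij.1, hlow ij.2) r
    unfold groundL1
    have h1 : ((hlow ij.2 : ℕ) : ℝ) = ((ij.2 : ℕ) : ℝ) := by simp [hlow]
    have h2 : ((hhigh ij.2 : ℕ) : ℝ) = ((ij.2 : ℕ) : ℝ) + 1 := by
      simp [hhigh]
    simp only [h1, h2]
    have := abs_helper' ((ij.2 : ℕ) : ℝ) ((r.2 : ℕ) : ℝ)
    linarith

lemma sum_pick (N : ℕ) (g : ℤ → ℝ) (h0 : ∀ z : ℤ, z < 0 → g z = 0)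
    (hN : ∀ z : ℤ, (N:ℤ) ≤ z → g z = 0) (c : ℤ) :
    ∑ i : Fin N, (if ((i:ℕ):ℤ) = c then 1 else 0) * g ((i:ℕ):ℤ) = g c := by
  by_cases hc : 0 ≤ c ∧ c < (N:ℤ)
  · have hlt : c.toNat < N := by omega
    rw [Finset.sum_eq_single (⟨c.toNat, hlt⟩ : Fin N)]
    · have h1 : (((⟨c.toNat, hlt⟩ : Fin N) : ℕ) : ℤ) = c := by
        simp [Int.toNat_of_nonneg hc.1]
      rw [h1]
      simp
    · intro i _ hne
      have h2 : ((i:ℕ):ℤ) ≠ c := by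
        intro h
        apply hne
        apply Fin.ext
        simp only []
        omega
      simp [h2]
    · intro h; exact absurd (Finset.mem_univ _) h
  · push_neg at hc
    rcases lt_or_ge c 0 with h | h
    · rw [h0 c h]
      apply Finset.sum_eq_zero
      intro i _
      have hne : ((i:ℕ):ℤ) ≠ c := by omega
      simp [hne]
    · rw [hN c (hc h)]
      apply Finset.sum_eq_zero
      intro i _
      have hi := i.isLt
      have hne : ((i:ℕ):ℤ) ≠ c := by omega
      simp [hne]

def gV (p q : Pos n m) : ℤ → ℝ := fun z =>
  (if ((p.1:ℕ):ℤ) ≤ z ∧ z < ((q.1:ℕ):ℤ) then 1 else 0)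
    - (if ((q.1:ℕ):ℤ) ≤ z ∧ z < ((p.1:ℕ):ℤ) then 1 else 0)

def gH (p q : Pos n m) : ℤ → ℝ := fun z =>
  (if ((p.2:ℕ):ℤ) ≤ z ∧ z < ((q.2:ℕ):ℤ) then 1 else 0)
    - (if ((q.2:ℕ):ℤ) ≤ z ∧ z < ((p.2:ℕ):ℤ) then 1 else 0)

def fV (p q : Pos n m) : Fin (n-1) → Fin m → ℝ := fun k l =>
  (if l = p.2 then 1 else 0) * gV p q ((k:ℕ):ℤ)

def fH (p q : Pos n m) : Fin n → Fin (m-1) → ℝ := fun k l =>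
  (if k = q.1 then 1 else 0) * gH p q ((l:ℕ):ℤ)

lemma gV_neg (p q : Pos n m) (z : ℤ) (h : z < 0) : gV p q z = 0 := by
  unfold gV; split_ifs <;> first | (exfalso; omega) | norm_num

lemma gV_big (p q : Pos n m) (z : ℤ) (h : ((n-1 : ℕ):ℤ) ≤ z) : gV p q z = 0 := by
  have h1 := p.1.isLt
  have h2 := q.1.isLt
  unfold gV; split_ifs <;> first | (exfalso; omega) | norm_num

lemma gH_neg (p q : Pos n m) (z : ℤ) (h : z < 0) : gH p q z = 0 := by
  unfold gH; split_ifs <;> first | (exfalso; omega) | norm_num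

lemma gH_big (p q : Pos n m) (z : ℤ) (h : ((m-1 : ℕ):ℤ) ≤ z) : gH p q z = 0 := by
  have h1 := p.2.isLt
  have h2 := q.2.isLt
  unfold gH; split_ifs <;> first | (exfalso; omega) | norm_num

lemma ite_one_and (X Y : Prop) [Decidable X] [Decidable Y] :
    (if X ∧ Y then (1:ℝ) else 0) = (if X then 1 else 0) * (if Y then 1 else 0) := by
  by_cases hX : X <;> by_cases hY : Y <;> simp [hX, hY]

lemma prod_ite_split (w a : Pos n m) :
    (if w = a then (1:ℝ) else 0) = (if a.1 = w.1 then 1 else 0) * (if a.2 = w.2 then 1 else 0) := by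
  by_cases h1 : a.1 = w.1
  · by_cases h2 : a.2 = w.2
    · have h : w = a := Prod.ext_iff.mpr ⟨h1.symm, h2.symm⟩
      simp [h, h1, h2]
    · have h : w ≠ a := by
        intro h; exact h2 (by rw [h])
      simp [h, h1, h2]
  · have h : w ≠ a := by
      intro h; exact h1 (by rw [h])
    simp [h, h1]

lemma route_div (p q a : Pos n m) :
    rdiv gs gt (flat (fV p q) (fH p q)) a
      = (if q = a then 1 else 0) - (if p = a then 1 else 0) := by
  unfold rdiv
  rw [Fintype.sum_sum_type]
  have hV : ∑ ij : Fin (n-1) × Fin m, flat (fV p q) (fH p q) (.inl ij) *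
      ((if gt (.inl ij) = a then (1:ℝ) else 0) - (if gs (.inl ij) = a then 1 else 0))
      = (if a.2 = p.2 then 1 else 0) * (gV p q (((a.1:ℕ):ℤ) - 1) - gV p q ((a.1:ℕ):ℤ)) := by
    rw [Fintype.sum_prod_type]
    have hterm : ∀ (i : Fin (n-1)) (j : Fin m),
        flat (fV p q) (fH p q) (.inl (i, j)) *
          ((if gt (.inl (i, j)) = a then (1:ℝ) else 0) - (if gs (.inl (i, j)) = a then 1 else 0))
        = ((if j = p.2 then 1 else 0) * (if j = a.2 then 1 else 0)) *
            ((if ((i:ℕ):ℤ) = ((a.1:ℕ):ℤ) - 1 then 1 else 0) * gV p q ((i:ℕ):ℤ)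
              - (if ((i:ℕ):ℤ) = ((a.1:ℕ):ℤ) then 1 else 0) * gV p q ((i:ℕ):ℤ)) := by
      intro i j
      have e1 : (gt (.inl (i,j)) = a) ↔ (((i:ℕ):ℤ) = ((a.1:ℕ):ℤ) - 1 ∧ j = a.2) := by
        show ((vhigh i, j) = a) ↔ _
        rw [Prod.ext_iff]
        constructor
        · rintro ⟨h1, h2⟩
          rw [Fin.ext_iff] at h1
          simp only [vhigh] at h1
          exact ⟨by omega, h2⟩
        · rintro ⟨h1, h2⟩
          refine ⟨?_, h2⟩
          rw [Fin.ext_iff]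
          simp only [vhigh]
          omega
      have e2 : (gs (.inl (i,j)) = a) ↔ (((i:ℕ):ℤ) = ((a.1:ℕ):ℤ) ∧ j = a.2) := by
        show ((vlow i, j) = a) ↔ _
        rw [Prod.ext_iff]
        constructor
        · rintro ⟨h1, h2⟩
          rw [Fin.ext_iff] at h1
          simp only [vlow] at h1
          exact ⟨by omega, h2⟩
        · rintro ⟨h1, h2⟩
          refine ⟨?_, h2⟩
          rw [Fin.ext_iff]
          simp only [vlow]
          omega
      rw [if_congr e1 rfl rfl, if_congr e2 rfl rfl, ite_one_and, ite_one_and]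
      show (if j = p.2 then (1:ℝ) else 0) * gV p q ((i:ℕ):ℤ) * _ = _
      ring
    simp only [hterm]
    have hsumj : ∑ j : Fin m, ((if j = p.2 then (1:ℝ) else 0) * (if j = a.2 then 1 else 0))
        = (if a.2 = p.2 then 1 else 0) := by
      by_cases h : a.2 = p.2
      · have hj : ∀ j : Fin m, (if j = p.2 then (1:ℝ) else 0) * (if j = a.2 then 1 else 0)
            = (if j = p.2 then 1 else 0) := by
          intro j; by_cases hj : j = p.2 <;> simp [hj, h]
        simp only [hj]
        rw [Finset.sum_ite_eq' Finset.univ p.2]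
        simp [h]
      · have hj : ∀ j : Fin m, (if j = p.2 then (1:ℝ) else 0) * (if j = a.2 then 1 else 0) = 0 := by
          intro j
          by_cases hj1 : j = p.2
          · by_cases hj2 : j = a.2
            · exfalso; exact h (hj2.symm.trans hj1)
            · simp [hj2]
          · simp [hj1]
        simp only [hj]
        simp [h]
    calc ∑ i : Fin (n-1), ∑ j : Fin m,
          ((if j = p.2 then (1:ℝ) else 0) * (if j = a.2 then 1 else 0)) *
          ((if ((i:ℕ):ℤ) = ((a.1:ℕ):ℤ) - 1 then 1 else 0) * gV p q ((i:ℕ):ℤ)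
            - (if ((i:ℕ):ℤ) = ((a.1:ℕ):ℤ) then 1 else 0) * gV p q ((i:ℕ):ℤ))
        = ∑ i : Fin (n-1), (if a.2 = p.2 then (1:ℝ) else 0) *
          ((if ((i:ℕ):ℤ) = ((a.1:ℕ):ℤ) - 1 then 1 else 0) * gV p q ((i:ℕ):ℤ)
            - (if ((i:ℕ):ℤ) = ((a.1:ℕ):ℤ) then 1 else 0) * gV p q ((i:ℕ):ℤ)) := by
          refine Finset.sum_congr rfl fun i _ => ?_
          rw [← Finset.sum_mul, hsumj]
      _ = (if a.2 = p.2 then 1 else 0) * (gV p q (((a.1:ℕ):ℤ) - 1) - gV p q ((a.1:ℕ):ℤ)) := by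
          rw [← Finset.mul_sum]
          congr 1
          rw [Finset.sum_sub_distrib]
          rw [sum_pick (n-1) (gV p q) (gV_neg p q) (gV_big p q) (((a.1:ℕ):ℤ) - 1)]
          rw [sum_pick (n-1) (gV p q) (gV_neg p q) (gV_big p q) ((a.1:ℕ):ℤ)]
  have hH : ∑ ij : Fin n × Fin (m-1), flat (fV p q) (fH p q) (.inr ij) *
      ((if gt (.inr ij) = a then (1:ℝ) else 0) - (if gs (.inr ij) = a then 1 else 0))
      = (if a.1 = q.1 then 1 else 0) * (gH p q (((a.2:ℕ):ℤ) - 1) - gH p q ((a.2:ℕ):ℤ)) := by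
    rw [Fintype.sum_prod_type]
    have hterm : ∀ (i : Fin n) (j : Fin (m-1)),
        flat (fV p q) (fH p q) (.inr (i, j)) *
          ((if gt (.inr (i, j)) = a then (1:ℝ) else 0) - (if gs (.inr (i, j)) = a then 1 else 0))
        = ((if i = q.1 then 1 else 0) * (if i = a.1 then 1 else 0)) *
            ((if ((j:ℕ):ℤ) = ((a.2:ℕ):ℤ) - 1 then 1 else 0) * gH p q ((j:ℕ):ℤ)
              - (if ((j:ℕ):ℤ) = ((a.2:ℕ):ℤ) then 1 else 0) * gH p q ((j:ℕ):ℤ)) := by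
      intro i j
      have e1 : (gt (.inr (i,j)) = a) ↔ (i = a.1 ∧ ((j:ℕ):ℤ) = ((a.2:ℕ):ℤ) - 1) := by
        show ((i, hhigh j) = a) ↔ _
        rw [Prod.ext_iff]
        constructor
        · rintro ⟨h1, h2⟩
          rw [Fin.ext_iff] at h2
          simp only [hhigh] at h2
          exact ⟨h1, by omega⟩
        · rintro ⟨h1, h2⟩
          refine ⟨h1, ?_⟩
          rw [Fin.ext_iff]
          simp only [hhigh]
          omega
      have e2 : (gs (.inr (i,j)) = a) ↔ (i = a.1 ∧ ((j:ℕ):ℤ) = ((a.2:ℕ):ℤ)) := by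
        show ((i, hlow j) = a) ↔ _
        rw [Prod.ext_iff]
        constructor
        · rintro ⟨h1, h2⟩
          rw [Fin.ext_iff] at h2
          simp only [hlow] at h2
          exact ⟨h1, by omega⟩
        · rintro ⟨h1, h2⟩
          refine ⟨h1, ?_⟩
          rw [Fin.ext_iff]
          simp only [hlow]
          omega
      rw [if_congr e1 rfl rfl, if_congr e2 rfl rfl, ite_one_and, ite_one_and]
      show (if i = q.1 then (1:ℝ) else 0) * gH p q ((j:ℕ):ℤ) * _ = _
      ring
    simp only [hterm]
    have hsumi_aux : ∀ (F : Fin (m-1) → ℝ), ∑ i : Fin n, ∑ j : Fin (m-1),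
        ((if i = q.1 then (1:ℝ) else 0) * (if i = a.1 then 1 else 0)) * F j
        = (if a.1 = q.1 then 1 else 0) * ∑ j, F j := by
      intro F
      have hs : ∑ i : Fin n, ((if i = q.1 then (1:ℝ) else 0) * (if i = a.1 then 1 else 0))
          = (if a.1 = q.1 then 1 else 0) := by
        by_cases h : a.1 = q.1
        · have hi : ∀ i : Fin n, (if i = q.1 then (1:ℝ) else 0) * (if i = a.1 then 1 else 0)
              = (if i = q.1 then 1 else 0) := by
            intro i; by_cases hi : i = q.1 <;> simp [hi, h]
          simp only [hi]
          rw [Finset.sum_ite_eq' Finset.univ q.1]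
          simp [h]
        · have hi : ∀ i : Fin n, (if i = q.1 then (1:ℝ) else 0) * (if i = a.1 then 1 else 0) = 0 := by
            intro i
            by_cases hi1 : i = q.1
            · by_cases hi2 : i = a.1
              · exfalso; exact h (hi2.symm.trans hi1)
              · simp [hi2]
            · simp [hi1]
          simp only [hi]
          simp [h]
      calc ∑ i : Fin n, ∑ j : Fin (m-1),
            ((if i = q.1 then (1:ℝ) else 0) * (if i = a.1 then 1 else 0)) * F j
          = ∑ i : Fin n, ((if i = q.1 then (1:ℝ) else 0) * (if i = a.1 then 1 else 0)) * ∑ j, F j := by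
            refine Finset.sum_congr rfl fun i _ => ?_
            rw [Finset.mul_sum]
        _ = (if a.1 = q.1 then 1 else 0) * ∑ j, F j := by rw [← Finset.sum_mul, hs]
    rw [hsumi_aux]
    congr 1
    rw [Finset.sum_sub_distrib]
    rw [sum_pick (m-1) (gH p q) (gH_neg p q) (gH_big p q) (((a.2:ℕ):ℤ) - 1)]
    rw [sum_pick (m-1) (gH p q) (gH_neg p q) (gH_big p q) ((a.2:ℕ):ℤ)]
  have idV : gV p q (((a.1:ℕ):ℤ) - 1) - gV p q ((a.1:ℕ):ℤ)
      = (if a.1 = q.1 then (1:ℝ) else 0) - (if a.1 = p.1 then 1 else 0) := by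
    simp only [Fin.ext_iff]
    unfold gV
    split_ifs <;> first | (exfalso; omega) | norm_num
  have idH : gH p q (((a.2:ℕ):ℤ) - 1) - gH p q ((a.2:ℕ):ℤ)
      = (if a.2 = q.2 then (1:ℝ) else 0) - (if a.2 = p.2 then 1 else 0) := by
    simp only [Fin.ext_iff]
    unfold gH
    split_ifs <;> first | (exfalso; omega) | norm_num
  rw [hV, hH, idV, idH, prod_ite_split q a, prod_ite_split p a]
  ring

lemma nat_abs_helper (a b : ℕ) : ((b - a : ℕ):ℝ) + ((a - b : ℕ):ℝ) = |(a:ℝ) - (b:ℝ)| := by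
  rcases le_total a b with h | h
  · rw [Nat.sub_eq_zero_of_le h, abs_sub_comm,
      abs_of_nonneg (sub_nonneg.mpr (Nat.cast_le.mpr h))]
    rw [Nat.cast_sub h]
    push_cast
    ring
  · rw [Nat.sub_eq_zero_of_le h,
      abs_of_nonneg (sub_nonneg.mpr (Nat.cast_le.mpr h))]
    rw [Nat.cast_sub h]
    push_cast
    ring

lemma sum_interval_ind (N : ℕ) (a b : ℕ) (hb : b ≤ N) :
    ∑ k : Fin N, (if (a:ℤ) ≤ ((k:ℕ):ℤ) ∧ ((k:ℕ):ℤ) < (b:ℤ) then (1:ℝ) else 0)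
      = ((b - a : ℕ) : ℝ) := by
  rw [Fin.sum_univ_eq_sum_range (fun k => if (a:ℤ) ≤ ((k:ℕ):ℤ) ∧ ((k:ℕ):ℤ) < (b:ℤ) then (1:ℝ) else 0) N]
  rw [Finset.sum_boole]
  have hfil : (Finset.range N).filter (fun k => (a:ℤ) ≤ ((k:ℕ):ℤ) ∧ ((k:ℕ):ℤ) < (b:ℤ))
      = Finset.Ico a b := by
    ext k
    simp only [Finset.mem_filter, Finset.mem_range, Finset.mem_Ico]
    omega
  rw [hfil]
  simp

lemma route_norm (p q : Pos n m) :
    (∑ k, ∑ l, |fV p q k l|) + (∑ k, ∑ l, |fH p q k l|) = groundL1 p q := by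
  have habsV : ∀ (k : Fin (n-1)) (l : Fin m), |fV p q k l|
      = (if l = p.2 then 1 else 0) *
        ((if ((p.1:ℕ):ℤ) ≤ ((k:ℕ):ℤ) ∧ ((k:ℕ):ℤ) < ((q.1:ℕ):ℤ) then (1:ℝ) else 0)
          + (if ((q.1:ℕ):ℤ) ≤ ((k:ℕ):ℤ) ∧ ((k:ℕ):ℤ) < ((p.1:ℕ):ℤ) then 1 else 0)) := by
    intro k l
    unfold fV gV
    rw [abs_mul]
    congr 1
    · rw [abs_of_nonneg]; split_ifs <;> norm_num
    · split_ifs <;> first | (exfalso; omega) | norm_num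
  have habsH : ∀ (k : Fin n) (l : Fin (m-1)), |fH p q k l|
      = (if k = q.1 then 1 else 0) *
        ((if ((p.2:ℕ):ℤ) ≤ ((l:ℕ):ℤ) ∧ ((l:ℕ):ℤ) < ((q.2:ℕ):ℤ) then (1:ℝ) else 0)
          + (if ((q.2:ℕ):ℤ) ≤ ((l:ℕ):ℤ) ∧ ((l:ℕ):ℤ) < ((p.2:ℕ):ℤ) then 1 else 0)) := by
    intro k l
    unfold fH gH
    rw [abs_mul]
    congr 1
    · rw [abs_of_nonneg]; split_ifs <;> norm_num
    · split_ifs <;> first | (exfalso; omega) | norm_num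
  have hV : (∑ k, ∑ l, |fV p q k l|) = |((p.1:ℕ):ℝ) - ((q.1:ℕ):ℝ)| := by
    simp only [habsV]
    have hswap : ∀ k : Fin (n-1), ∑ l : Fin m, ((if l = p.2 then (1:ℝ) else 0) *
        ((if ((p.1:ℕ):ℤ) ≤ ((k:ℕ):ℤ) ∧ ((k:ℕ):ℤ) < ((q.1:ℕ):ℤ) then (1:ℝ) else 0)
          + (if ((q.1:ℕ):ℤ) ≤ ((k:ℕ):ℤ) ∧ ((k:ℕ):ℤ) < ((p.1:ℕ):ℤ) then 1 else 0)))
        = ((if ((p.1:ℕ):ℤ) ≤ ((k:ℕ):ℤ) ∧ ((k:ℕ):ℤ) < ((q.1:ℕ):ℤ) then (1:ℝ) else 0)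
          + (if ((q.1:ℕ):ℤ) ≤ ((k:ℕ):ℤ) ∧ ((k:ℕ):ℤ) < ((p.1:ℕ):ℤ) then 1 else 0)) := by
      intro k
      rw [← Finset.sum_mul, Finset.sum_ite_eq' Finset.univ p.2]
      simp
    simp only [hswap]
    rw [Finset.sum_add_distrib]
    rw [sum_interval_ind (n-1) (p.1:ℕ) (q.1:ℕ) (by have := q.1.isLt; omega)]
    rw [sum_interval_ind (n-1) (q.1:ℕ) (p.1:ℕ) (by have := p.1.isLt; omega)]
    exact nat_abs_helper (p.1:ℕ) (q.1:ℕ)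
  have hH : (∑ k, ∑ l, |fH p q k l|) = |((p.2:ℕ):ℝ) - ((q.2:ℕ):ℝ)| := by
    simp only [habsH]
    have houter : ∑ k : Fin n, ∑ l : Fin (m-1), ((if k = q.1 then (1:ℝ) else 0) *
        ((if ((p.2:ℕ):ℤ) ≤ ((l:ℕ):ℤ) ∧ ((l:ℕ):ℤ) < ((q.2:ℕ):ℤ) then (1:ℝ) else 0)
          + (if ((q.2:ℕ):ℤ) ≤ ((l:ℕ):ℤ) ∧ ((l:ℕ):ℤ) < ((p.2:ℕ):ℤ) then 1 else 0)))
        = ∑ l : Fin (m-1),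
        ((if ((p.2:ℕ):ℤ) ≤ ((l:ℕ):ℤ) ∧ ((l:ℕ):ℤ) < ((q.2:ℕ):ℤ) then (1:ℝ) else 0)
          + (if ((q.2:ℕ):ℤ) ≤ ((l:ℕ):ℤ) ∧ ((l:ℕ):ℤ) < ((p.2:ℕ):ℤ) then 1 else 0)) := by
      rw [Finset.sum_comm]
      refine Finset.sum_congr rfl fun l _ => ?_
      rw [← Finset.sum_mul, Finset.sum_ite_eq' Finset.univ q.1]
      simp
    rw [houter, Finset.sum_add_distrib]
    rw [sum_interval_ind (m-1) (p.2:ℕ) (q.2:ℕ) (by have := q.2.isLt; omega)]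
    rw [sum_interval_ind (m-1) (q.2:ℕ) (p.2:ℕ) (by have := p.2.isLt; omega)]
    exact nat_abs_helper (p.2:ℕ) (q.2:ℕ)
  rw [hV, hH]
  rfl

lemma route (x x' : Fin n → Fin m → ℝ) (P : Pos n m → Pos n m → ℝ)
    (hP0 : ∀ p q, 0 ≤ P p q) (hProw : ∀ p, ∑ q, P p q = x p.1 p.2)
    (hPcol : ∀ q, ∑ p, P p q = x' q.1 q.2) :
    ∃ (δv : Fin (n-1) → Fin m → ℝ) (δh : Fin n → Fin (m-1) → ℝ),
      applyFlow x δv δh = x' ∧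
      flowNorm δv δh ≤ ∑ p, ∑ q, P p q * groundL1 p q := by
  refine ⟨fun k l => ∑ p, ∑ q, P p q * fV p q k l,
    fun k l => ∑ p, ∑ q, P p q * fH p q k l, ?_, ?_⟩
  · rw [applyFlow_iff]
    intro a
    have hlin : rdiv gs gt (flat (fun k l => ∑ p, ∑ q, P p q * fV p q k l)
        (fun k l => ∑ p, ∑ q, P p q * fH p q k l)) a
        = ∑ p, ∑ q, P p q * rdiv gs gt (flat (fV p q) (fH p q)) a := by
      unfold rdiv
      have hflat : ∀ e : FlowIdx n m, flat (fun k l => ∑ p, ∑ q, P p q * fV p q k l)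
          (fun k l => ∑ p, ∑ q, P p q * fH p q k l) e
          = ∑ p, ∑ q, P p q * flat (fV p q) (fH p q) e := by
        intro e
        cases e with
        | inl ij => rfl
        | inr ij => rfl
      simp only [hflat]
      calc ∑ e, (∑ p, ∑ q, P p q * flat (fV p q) (fH p q) e) *
            ((if gt e = a then (1:ℝ) else 0) - (if gs e = a then 1 else 0))
          = ∑ e, ∑ p, ∑ q, P p q * (flat (fV p q) (fH p q) e *
            ((if gt e = a then (1:ℝ) else 0) - (if gs e = a then 1 else 0))) := by
            refine Finset.sum_congr rfl fun e _ => ?_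
            rw [Finset.sum_mul]
            refine Finset.sum_congr rfl fun p _ => ?_
            rw [Finset.sum_mul]
            refine Finset.sum_congr rfl fun q _ => ?_
            ring
        _ = ∑ p, ∑ e, ∑ q, P p q * (flat (fV p q) (fH p q) e *
            ((if gt e = a then (1:ℝ) else 0) - (if gs e = a then 1 else 0))) :=
            Finset.sum_comm
        _ = ∑ p, ∑ q, ∑ e, P p q * (flat (fV p q) (fH p q) e *
            ((if gt e = a then (1:ℝ) else 0) - (if gs e = a then 1 else 0))) :=
            Finset.sum_congr rfl fun p _ => Finset.sum_comm
        _ = ∑ p, ∑ q, P p q * ∑ e, flat (fV p q) (fH p q) e *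
            ((if gt e = a then (1:ℝ) else 0) - (if gs e = a then 1 else 0)) := by
            refine Finset.sum_congr rfl fun p _ => Finset.sum_congr rfl fun q _ => ?_
            rw [Finset.mul_sum]
    rw [hlin]
    have hrd : ∀ p q : Pos n m, rdiv gs gt (flat (fV p q) (fH p q)) a
        = (if q = a then 1 else 0) - (if p = a then 1 else 0) := fun p q => route_div p q a
    simp only [hrd]
    have hsplit : ∑ p : Pos n m, ∑ q : Pos n m,
        P p q * ((if q = a then (1:ℝ) else 0) - (if p = a then 1 else 0))
        = x' a.1 a.2 - x a.1 a.2 := by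
      have hterm : ∀ p q : Pos n m, P p q * ((if q = a then (1:ℝ) else 0) - (if p = a then 1 else 0))
          = (if q = a then P p q else 0) - (if p = a then P p q else 0) := by
        intro p q
        split_ifs <;> ring
      simp only [hterm]
      simp only [Finset.sum_sub_distrib]
      have h1 : ∑ p : Pos n m, ∑ q : Pos n m, (if q = a then P p q else 0) = x' a.1 a.2 := by
        have hin : ∀ p : Pos n m, ∑ q : Pos n m, (if q = a then P p q else 0) = P p a := by
          intro p
          rw [Finset.sum_ite_eq' Finset.univ a]
          simp
        simp only [hin]
        exact hPcol a
      have h2 : ∑ p : Pos n m, ∑ q : Pos n m, (if p = a then P p q else 0) = x a.1 a.2 := by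
        have hin : ∀ p : Pos n m, ∑ q : Pos n m, (if p = a then P p q else 0)
            = (if p = a then x p.1 p.2 else 0) := by
          intro p
          by_cases hp : p = a
          · simp [hp, hProw p, hp ▸ hProw p]
          · simp [hp]
        simp only [hin]
        rw [Finset.sum_ite_eq' Finset.univ a]
        simp
      rw [h1, h2]
    rw [hsplit]
    ring
  · have habs1 : ∀ (k : Fin (n-1)) (l : Fin m), |∑ p, ∑ q, P p q * fV p q k l|
        ≤ ∑ p, ∑ q, P p q * |fV p q k l| := by
      intro k l
      refine (Finset.abs_sum_le_sum_abs _ _).trans (Finset.sum_le_sum fun p _ => ?_)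
      refine (Finset.abs_sum_le_sum_abs _ _).trans (Finset.sum_le_sum fun q _ => ?_)
      rw [abs_mul, abs_of_nonneg (hP0 p q)]
    have habs2 : ∀ (k : Fin n) (l : Fin (m-1)), |∑ p, ∑ q, P p q * fH p q k l|
        ≤ ∑ p, ∑ q, P p q * |fH p q k l| := by
      intro k l
      refine (Finset.abs_sum_le_sum_abs _ _).trans (Finset.sum_le_sum fun p _ => ?_)
      refine (Finset.abs_sum_le_sum_abs _ _).trans (Finset.sum_le_sum fun q _ => ?_)
      rw [abs_mul, abs_of_nonneg (hP0 p q)]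
    have swap4 : ∀ {α β : Type} [Fintype α] [Fintype β]
        (T : α → β → Pos n m → Pos n m → ℝ),
        ∑ a : α, ∑ b : β, ∑ c : Pos n m, ∑ k : Pos n m, T a b c k
          = ∑ c : Pos n m, ∑ k : Pos n m, ∑ a : α, ∑ b : β, T a b c k := by
      intro α β _ _ T
      calc ∑ a, ∑ b, ∑ c, ∑ k, T a b c k
          = ∑ a, ∑ c, ∑ b, ∑ k, T a b c k :=
            Finset.sum_congr rfl fun a _ => Finset.sum_comm
        _ = ∑ c, ∑ a, ∑ b, ∑ k, T a b c k := Finset.sum_comm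
        _ = ∑ c, ∑ a, ∑ k, ∑ b, T a b c k :=
            Finset.sum_congr rfl fun c _ => Finset.sum_congr rfl fun a _ => Finset.sum_comm
        _ = ∑ c, ∑ k, ∑ a, ∑ b, T a b c k :=
            Finset.sum_congr rfl fun c _ => Finset.sum_comm
    unfold flowNorm
    have hb1 : (∑ k : Fin (n-1), ∑ l : Fin m, |∑ p, ∑ q, P p q * fV p q k l|)
        ≤ ∑ p, ∑ q, P p q * (∑ k, ∑ l, |fV p q k l|) := by
      calc (∑ k : Fin (n-1), ∑ l : Fin m, |∑ p, ∑ q, P p q * fV p q k l|)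
          ≤ ∑ k : Fin (n-1), ∑ l : Fin m, ∑ p, ∑ q, P p q * |fV p q k l| :=
            Finset.sum_le_sum fun k _ => Finset.sum_le_sum fun l _ => habs1 k l
        _ = ∑ p, ∑ q, ∑ k : Fin (n-1), ∑ l : Fin m, P p q * |fV p q k l| :=
            swap4 _
        _ = ∑ p, ∑ q, P p q * (∑ k, ∑ l, |fV p q k l|) := by
            refine Finset.sum_congr rfl fun p _ => Finset.sum_congr rfl fun q _ => ?_
            rw [Finset.mul_sum]
            refine Finset.sum_congr rfl fun k _ => ?_
            rw [Finset.mul_sum]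
    have hb2 : (∑ k : Fin n, ∑ l : Fin (m-1), |∑ p, ∑ q, P p q * fH p q k l|)
        ≤ ∑ p, ∑ q, P p q * (∑ k, ∑ l, |fH p q k l|) := by
      calc (∑ k : Fin n, ∑ l : Fin (m-1), |∑ p, ∑ q, P p q * fH p q k l|)
          ≤ ∑ k : Fin n, ∑ l : Fin (m-1), ∑ p, ∑ q, P p q * |fH p q k l| :=
            Finset.sum_le_sum fun k _ => Finset.sum_le_sum fun l _ => habs2 k l
        _ = ∑ p, ∑ q, ∑ k : Fin n, ∑ l : Fin (m-1), P p q * |fH p q k l| :=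
            swap4 _
        _ = ∑ p, ∑ q, P p q * (∑ k, ∑ l, |fH p q k l|) := by
            refine Finset.sum_congr rfl fun p _ => Finset.sum_congr rfl fun q _ => ?_
            rw [Finset.mul_sum]
            refine Finset.sum_congr rfl fun k _ => ?_
            rw [Finset.mul_sum]
    calc (∑ k : Fin (n-1), ∑ l : Fin m, |∑ p, ∑ q, P p q * fV p q k l|)
          + (∑ k : Fin n, ∑ l : Fin (m-1), |∑ p, ∑ q, P p q * fH p q k l|)
        ≤ (∑ p, ∑ q, P p q * (∑ k, ∑ l, |fV p q k l|))
          + (∑ p, ∑ q, P p q * (∑ k, ∑ l, |fH p q k l|)) := add_le_add hb1 hb2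
      _ = ∑ p, ∑ q, P p q * groundL1 p q := by
          rw [← Finset.sum_add_distrib]
          refine Finset.sum_congr rfl fun p _ => ?_
          rw [← Finset.sum_add_distrib]
          refine Finset.sum_congr rfl fun q _ => ?_
          rw [← mul_add, route_norm]


end FlowWass

open FlowWass in
/-- For normalized distributions `x, x'` there exists a local
flow plan `δ` with `x' = Δ(x, δ)`, and the minimum of `‖δ‖₁` over all such
`δ` equals the 1-Wasserstein distance `W₁(x, x')` with `L1` ground metric. -/
theorem flow_min_eq_wasserstein {n m : ℕ} (x x' : Fin n → Fin m → ℝ)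
    (hx : IsNormalized x) (hx' : IsNormalized x') :
    (∃ (δv : Fin (n - 1) → Fin m → ℝ) (δh : Fin n → Fin (m - 1) → ℝ),
        applyFlow x δv δh = x') ∧
      IsLeast {c | ∃ (δv : Fin (n - 1) → Fin m → ℝ) (δh : Fin n → Fin (m - 1) → ℝ),
        applyFlow x δv δh = x' ∧ flowNorm δv δh = c} (W1 x x') := by

  classical
  obtain ⟨hx0, hxs⟩ := hx
  obtain ⟨hx'0, hx's⟩ := hx'
  -- sums over Pos
  have hxsum : ∑ p : Pos n m, x p.1 p.2 = 1 := by
    rw [Fintype.sum_prod_type]; exact hxs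
  have hx'sum : ∑ p : Pos n m, x' p.1 p.2 = 1 := by
    rw [Fintype.sum_prod_type]; exact hx's
  -- pointwise bound x ≤ 1
  have hxle1 : ∀ p : Pos n m, x p.1 p.2 ≤ 1 := by
    intro p
    rw [← hxsum]
    exact Finset.single_le_sum (f := fun q : Pos n m => x q.1 q.2)
      (fun q _ => hx0 q.1 q.2) (Finset.mem_univ p)
  -- the coupling set
  set K : Set (Pos n m → Pos n m → ℝ) := {P | IsCoupling x x' P} with hK
  have hKne : K.Nonempty := by
    refine ⟨fun p q => x p.1 p.2 * x' q.1 q.2, ?_, ?_, ?_⟩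
    · intro p q; exact mul_nonneg (hx0 p.1 p.2) (hx'0 q.1 q.2)
    · intro p
      rw [← Finset.mul_sum, hx'sum, mul_one]
    · intro q
      rw [← Finset.sum_mul, hxsum, one_mul]
  have hKsub : K ⊆ Set.Icc (0 : Pos n m → Pos n m → ℝ) (fun _ _ => 1) := by
    rintro P ⟨h0, hrow, _⟩
    constructor
    · intro p q; exact h0 p q
    · intro p q
      calc P p q ≤ ∑ q', P p q' :=
          Finset.single_le_sum (f := fun q' => P p q') (fun q' _ => h0 p q') (Finset.mem_univ q)
        _ = x p.1 p.2 := hrow p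
        _ ≤ 1 := hxle1 p
  have hKclosed : IsClosed K := by
    have h1 : IsClosed {P : Pos n m → Pos n m → ℝ | ∀ p q, 0 ≤ P p q} := by
      have : {P : Pos n m → Pos n m → ℝ | ∀ p q, 0 ≤ P p q}
          = ⋂ (p : Pos n m) (q : Pos n m), {P | 0 ≤ P p q} := by
        ext P; simp
      rw [this]
      exact isClosed_iInter fun p => isClosed_iInter fun q =>
        isClosed_le continuous_const ((continuous_apply q).comp (continuous_apply p))
    have h2 : IsClosed {P : Pos n m → Pos n m → ℝ | ∀ p, (∑ q, P p q) = x p.1 p.2} := by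
      have : {P : Pos n m → Pos n m → ℝ | ∀ p, (∑ q, P p q) = x p.1 p.2}
          = ⋂ (p : Pos n m), {P | (∑ q, P p q) = x p.1 p.2} := by
        ext P; simp
      rw [this]
      exact isClosed_iInter fun p => isClosed_eq
        (continuous_finset_sum _ fun q _ => (continuous_apply q).comp (continuous_apply p))
        continuous_const
    have h3 : IsClosed {P : Pos n m → Pos n m → ℝ | ∀ q, (∑ p, P p q) = x' q.1 q.2} := by
      have : {P : Pos n m → Pos n m → ℝ | ∀ q, (∑ p, P p q) = x' q.1 q.2}
          = ⋂ (q : Pos n m), {P | (∑ p, P p q) = x' q.1 q.2} := by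
        ext P; simp
      rw [this]
      exact isClosed_iInter fun q => isClosed_eq
        (continuous_finset_sum _ fun p _ => (continuous_apply q).comp (continuous_apply p))
        continuous_const
    have : K = {P : Pos n m → Pos n m → ℝ | ∀ p q, 0 ≤ P p q}
        ∩ ({P : Pos n m → Pos n m → ℝ | ∀ p, (∑ q, P p q) = x p.1 p.2}
          ∩ {P : Pos n m → Pos n m → ℝ | ∀ q, (∑ p, P p q) = x' q.1 q.2}) := by
      ext P
      simp only [hK, Set.mem_setOf_eq, Set.mem_inter_iff, IsCoupling]
    rw [this]
    exact h1.inter (h2.inter h3)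
  have hKcpt : IsCompact K :=
    IsCompact.of_isClosed_subset isCompact_Icc hKclosed hKsub
  have hcont : Continuous (transportCost (groundL1 (n := n) (m := m))) := by
    unfold transportCost
    exact continuous_finset_sum _ fun p _ => continuous_finset_sum _ fun q _ =>
      by fun_prop
  obtain ⟨P0, hP0K, hminOn⟩ := hKcpt.exists_isMinOn hKne hcont.continuousOn
  -- the set of coupling costs
  set S : Set ℝ := {c | ∃ P, IsCoupling x x' P ∧ transportCost groundL1 P = c} with hS
  have hSmem : transportCost groundL1 P0 ∈ S := ⟨P0, hP0K, rfl⟩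
  have hSlb : ∀ c ∈ S, transportCost groundL1 P0 ≤ c := by
    rintro c ⟨P, hP, rfl⟩
    exact isMinOn_iff.mp hminOn P hP
  have hW1 : W1 x x' = transportCost groundL1 P0 := by
    refine le_antisymm (csInf_le ⟨transportCost groundL1 P0, hSlb⟩ hSmem) (le_csInf ⟨_, hSmem⟩ hSlb)
  -- lower bound: any feasible flow has norm ≥ W1
  have hlower : ∀ (δv : Fin (n - 1) → Fin m → ℝ) (δh : Fin n → Fin (m - 1) → ℝ),
      applyFlow x δv δh = x' → W1 x x' ≤ flowNorm δv δh := by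
    intro δv δh happ
    have hdiv := (applyFlow_iff x x' δv δh).mp happ
    obtain ⟨PB, hPB0, hPBrow, hPBcol, hPBcost⟩ :=
      lemB gs gt groundL1 groundL1_self ground_st ground_ts
        (fun p : Pos n m => x p.1 p.2) (fun p : Pos n m => x' p.1 p.2)
        (flat δv δh) (fun p => hx0 p.1 p.2) (fun p => hx'0 p.1 p.2) hdiv
    have hmem : transportCost groundL1 PB ∈ S := ⟨PB, ⟨hPB0, hPBrow, hPBcol⟩, rfl⟩
    have hbdd : BddBelow S := ⟨0, by
      rintro c ⟨P, hP, rfl⟩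
      exact Finset.sum_nonneg fun p _ => Finset.sum_nonneg fun q _ =>
        mul_nonneg (hP.1 p q) (groundL1_nonneg p q)⟩
    calc W1 x x' ≤ transportCost groundL1 PB := csInf_le hbdd hmem
      _ ≤ ∑ e, |flat δv δh e| := hPBcost
      _ = flowNorm δv δh := (flowNorm_eq δv δh).symm
  -- upper: route the optimal coupling
  obtain ⟨δv0, δh0, happ0, hnorm0⟩ :=
    route x x' P0 hP0K.1 hP0K.2.1 hP0K.2.2
  have hnorm0' : flowNorm δv0 δh0 = W1 x x' := by
    refine le_antisymm ?_ (hlower δv0 δh0 happ0)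
    rw [hW1]
    exact hnorm0
  refine ⟨⟨δv0, δh0, happ0⟩, ⟨δv0, δh0, happ0, hnorm0'⟩, ?_⟩
  rintro c ⟨δv, δh, happ, rfl⟩
  exact hlower δv δh happ
end
end

section
/- Let v ∈ ℝ^d, let h : ℝ^d → [0,1]^k be measurable, let ε be a random vector of d i.i.d. Laplace(0, σ) coordinates, and suppose the class i satisfies E[h_i(v + ε)] ≥ e^{2√2·ρ/σ} · max_{i' ≠ i} E[h_{i'}(v + ε)]. Then for every ṽ ∈ ℝ^d with ‖v − ṽ‖₁ ≤ ρ, one has E[h_i(ṽ + ε)] ≥ max_{i' ≠ i} E[h_{i'}(ṽ + ε)]. -/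
noncomputable section

open Finset MeasureTheory

/-- Product of `d` i.i.d. Laplace distributions on `ℝ^d`. -/
def laplacePi (d : ℕ) (σ : ℝ) : Measure (Fin d → ℝ) :=
  Measure.pi fun _ => laplaceM σ

namespace LapAux

open Real Set
open scoped ENNReal

def dens (σ t : ℝ) : ℝ := (Real.sqrt 2 * σ)⁻¹ * Real.exp (-(Real.sqrt 2 * |t|) / σ)

lemma measurable_dens (σ : ℝ) : Measurable (dens σ) := by
  unfold dens; fun_prop

lemma dens_nonneg {σ : ℝ} (hσ : 0 < σ) (t : ℝ) : 0 ≤ dens σ t :=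
  mul_nonneg (inv_nonneg.2 (mul_nonneg (Real.sqrt_nonneg 2) hσ.le)) (Real.exp_pos _).le

lemma laplaceM_eq (σ : ℝ) :
    laplaceM σ = volume.withDensity fun t => ENNReal.ofReal (dens σ t) := rfl

lemma integrable_exp_neg_mul_abs {b : ℝ} (hb : 0 < b) :
    Integrable fun t : ℝ => Real.exp (-(b * |t|)) := by
  rw [← integrableOn_univ, ← Iic_union_Ioi (a := (0:ℝ)), integrableOn_union]
  constructor
  · rw [← (Measure.measurePreserving_neg (volume : Measure ℝ)).integrableOn_comp_preimage
        (Homeomorph.neg ℝ).measurableEmbedding]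
    simp only [Function.comp_def, abs_neg, neg_preimage, neg_Iic, neg_zero]
    rw [integrableOn_Ici_iff_integrableOn_Ioi]
    exact (exp_neg_integrableOn_Ioi 0 hb).congr_fun
      (fun t ht => by rw [abs_of_pos ht]; ring_nf) measurableSet_Ioi
  · exact (exp_neg_integrableOn_Ioi 0 hb).congr_fun
      (fun t ht => by rw [abs_of_pos ht]; ring_nf) measurableSet_Ioi

lemma integrable_dens {σ : ℝ} (hσ : 0 < σ) : Integrable (dens σ) := by
  have hb : 0 < Real.sqrt 2 / σ := div_pos (Real.sqrt_pos.2 two_pos) hσ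
  have : dens σ = fun t => (Real.sqrt 2 * σ)⁻¹ * Real.exp (-(Real.sqrt 2 / σ * |t|)) := by
    funext t; unfold dens; congr 1; congr 1; ring
  rw [this]
  exact (integrable_exp_neg_mul_abs hb).const_mul _

lemma isFiniteMeasure_laplaceM {σ : ℝ} (hσ : 0 < σ) : IsFiniteMeasure (laplaceM σ) := by
  constructor
  rw [laplaceM_eq, withDensity_apply _ MeasurableSet.univ, Measure.restrict_univ]
  exact (integrable_dens hσ).lintegral_lt_top

lemma lintegral_fin_pi_prod {n : ℕ} (μ : Measure ℝ) [SigmaFinite μ] (f : Fin n → ℝ → ℝ≥0∞)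
    (hf : ∀ i, Measurable (f i)) :
    ∫⁻ x : Fin n → ℝ, ∏ i, f i (x i) ∂Measure.pi (fun _ => μ) = ∏ i, ∫⁻ t, f i t ∂μ := by
  induction n with
  | zero =>
      simp [Measure.pi_of_empty, lintegral_dirac]
  | succ n ih =>
      have h := measurePreserving_piFinSuccAbove (fun _ : Fin (n + 1) => μ) 0
      have hmap := h.map_eq
      set e := MeasurableEquiv.piFinSuccAbove (fun _ : Fin (n + 1) => ℝ) 0 with he
      have := lintegral_map_equiv (μ := Measure.pi fun _ : Fin (n + 1) => μ)
        (fun y : ℝ × (Fin n → ℝ) => ∏ i, f i (e.symm y i)) e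
      rw [hmap] at this
      have hL : ∫⁻ x : Fin (n + 1) → ℝ, ∏ i, f i (x i) ∂Measure.pi (fun _ => μ)
          = ∫⁻ y : ℝ × (Fin n → ℝ), ∏ i, f i (e.symm y i)
              ∂(μ.prod (Measure.pi fun _ : Fin n => μ)) := by
        rw [this]
        refine lintegral_congr fun x => ?_
        simp
      rw [hL]
      have hsymm : ∀ (y : ℝ × (Fin n → ℝ)) (i : Fin (n + 1)),
          e.symm y i = (Fin.cons y.1 y.2 : Fin (n + 1) → ℝ) i := by
        intro y i
        simp [he, MeasurableEquiv.piFinSuccAbove_symm_apply, Fin.insertNthEquiv,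
          Fin.insertNth_zero]
      have hprod : ∀ y : ℝ × (Fin n → ℝ),
          ∏ i, f i (e.symm y i) = f 0 y.1 * ∏ j : Fin n, f j.succ (y.2 j) := by
        intro y
        simp_rw [hsymm]
        rw [Fin.prod_univ_succ]
        simp
      simp_rw [hprod]
      rw [lintegral_prod_mul (f := f 0) (g := fun y2 : Fin n → ℝ => ∏ j, f j.succ (y2 j))
        (hf 0).aemeasurable
        (Finset.measurable_prod _ fun j _ => (hf j.succ).comp (measurable_pi_apply j)).aemeasurable]
      rw [ih (fun j => f j.succ) (fun j => hf j.succ), Fin.prod_univ_succ]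

lemma laplacePi_eq {σ : ℝ} (d : ℕ) (hσ : 0 < σ) :
    laplacePi d σ = (volume : Measure (Fin d → ℝ)).withDensity
      (fun x => ∏ j, ENNReal.ofReal (dens σ (x j))) := by
  haveI := isFiniteMeasure_laplaceM hσ
  refine Measure.pi_eq fun s hs => ?_
  rw [withDensity_apply _ (MeasurableSet.univ_pi hs)]
  rw [← lintegral_indicator (MeasurableSet.univ_pi hs)]
  have hind : (Set.pi univ s).indicator (fun x => ∏ j, ENNReal.ofReal (dens σ (x j)))
      = fun x => ∏ j, (s j).indicator (fun t => ENNReal.ofReal (dens σ t)) (x j) := by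
    funext x
    by_cases hx : x ∈ Set.pi univ s
    · rw [Set.indicator_of_mem hx]
      exact Finset.prod_congr rfl fun j _ =>
        (Set.indicator_of_mem (hx j (Set.mem_univ j))
          (fun t => ENNReal.ofReal (dens σ t))).symm
    · rw [Set.indicator_of_notMem hx]
      rw [Set.mem_univ_pi] at hx
      push_neg at hx
      obtain ⟨j, hj⟩ := hx
      exact (Finset.prod_eq_zero (Finset.mem_univ j)
        (Set.indicator_of_notMem hj _)).symm
  rw [hind, volume_pi,
    lintegral_fin_pi_prod volume _
      (fun j => ((measurable_dens σ).ennreal_ofReal).indicator (hs j))]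
  refine Finset.prod_congr rfl fun j _ => ?_
  rw [lintegral_indicator (hs j), laplaceM_eq, withDensity_apply _ (hs j)]

lemma dens_shift {σ : ℝ} (hσ : 0 < σ) (a t : ℝ) :
    Real.exp (-(Real.sqrt 2 * |a|) / σ) * dens σ t ≤ dens σ (t - a) := by
  unfold dens
  have hc : (0:ℝ) ≤ (Real.sqrt 2 * σ)⁻¹ :=
    inv_nonneg.2 (mul_nonneg (Real.sqrt_nonneg 2) hσ.le)
  have hexp : Real.exp (-(Real.sqrt 2 * |a|) / σ) * Real.exp (-(Real.sqrt 2 * |t|) / σ)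
      ≤ Real.exp (-(Real.sqrt 2 * |t - a|) / σ) := by
    rw [← Real.exp_add]
    apply Real.exp_le_exp.2
    rw [← add_div, div_le_div_iff₀ hσ hσ]
    have h1 : |t - a| ≤ |t| + |a| := abs_sub t a
    have h2 := mul_le_mul_of_nonneg_right
      (mul_le_mul_of_nonneg_left h1 (Real.sqrt_nonneg 2)) hσ.le
    nlinarith [Real.sqrt_nonneg 2]
  calc Real.exp (-(Real.sqrt 2 * |a|) / σ)
        * ((Real.sqrt 2 * σ)⁻¹ * Real.exp (-(Real.sqrt 2 * |t|) / σ))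
      = (Real.sqrt 2 * σ)⁻¹ * (Real.exp (-(Real.sqrt 2 * |a|) / σ)
          * Real.exp (-(Real.sqrt 2 * |t|) / σ)) := by ring
    _ ≤ (Real.sqrt 2 * σ)⁻¹ * Real.exp (-(Real.sqrt 2 * |t - a|) / σ) :=
        mul_le_mul_of_nonneg_left hexp hc

lemma ofReal_exp_sum_abs {σ : ℝ} {d : ℕ} (c : Fin d → ℝ) :
    ENNReal.ofReal (Real.exp (-(Real.sqrt 2 * ∑ j, |c j|) / σ))
      = ∏ j, ENNReal.ofReal (Real.exp (-(Real.sqrt 2 * |c j|) / σ)) := by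
  rw [← ENNReal.ofReal_prod_of_nonneg (fun _ _ => (Real.exp_pos _).le), ← Real.exp_sum]
  congr 1
  rw [Finset.mul_sum]
  rw [← Finset.sum_div]
  rw [← Finset.sum_neg_distrib]

lemma lintegral_shift_le {σ : ℝ} {d : ℕ} (hσ : 0 < σ) (c : Fin d → ℝ)
    {g : (Fin d → ℝ) → ℝ≥0∞} (hg : Measurable g) :
    ENNReal.ofReal (Real.exp (-(Real.sqrt 2 * ∑ j, |c j|) / σ)) * ∫⁻ x, g x ∂laplacePi d σ
      ≤ ∫⁻ x, g (c + x) ∂laplacePi d σ := by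
  have hP : Measurable fun x : Fin d → ℝ => ∏ j, ENNReal.ofReal (dens σ (x j)) :=
    Finset.measurable_prod _ fun j _ =>
      ((measurable_dens σ).ennreal_ofReal).comp (measurable_pi_apply j)
  have hg2 : Measurable fun x : Fin d → ℝ => g (c + x) := by fun_prop
  rw [laplacePi_eq d hσ,
    lintegral_withDensity_eq_lintegral_mul _ hP hg,
    lintegral_withDensity_eq_lintegral_mul _ hP hg2]
  simp only [Pi.mul_apply]
  have key : ∫⁻ x, (fun y => (∏ j, ENNReal.ofReal (dens σ (y j - c j))) * g y) (c + x) ∂volume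
      = ∫⁻ y, (∏ j, ENNReal.ofReal (dens σ (y j - c j))) * g y ∂volume :=
    lintegral_add_left_eq_self (μ := (volume : Measure (Fin d → ℝ)))
      (fun y => (∏ j, ENNReal.ofReal (dens σ (y j - c j))) * g y) c
  have hre : ∀ x : Fin d → ℝ,
      (fun y => (∏ j, ENNReal.ofReal (dens σ (y j - c j))) * g y) (c + x)
        = (∏ j, ENNReal.ofReal (dens σ (x j))) * g (c + x) := by
    intro x
    simp only [Pi.add_apply, add_sub_cancel_left]
  simp_rw [hre] at key
  rw [key, ← lintegral_const_mul (f := fun x => (∏ j, ENNReal.ofReal (dens σ (x j))) * g x) _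
    (hP.mul hg)]
  refine lintegral_mono fun y => ?_
  have hpt : ENNReal.ofReal (Real.exp (-(Real.sqrt 2 * ∑ j, |c j|) / σ))
      * ∏ j, ENNReal.ofReal (dens σ (y j)) ≤ ∏ j, ENNReal.ofReal (dens σ (y j - c j)) := by
    rw [ofReal_exp_sum_abs, ← Finset.prod_mul_distrib]
    refine Finset.prod_le_prod' fun j _ => ?_
    rw [← ENNReal.ofReal_mul (Real.exp_pos _).le]
    exact ENNReal.ofReal_le_ofReal (dens_shift hσ (c j) (y j))
  calc ENNReal.ofReal (Real.exp (-(Real.sqrt 2 * ∑ j, |c j|) / σ))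
        * ((∏ j, ENNReal.ofReal (dens σ (y j))) * g y)
      = (ENNReal.ofReal (Real.exp (-(Real.sqrt 2 * ∑ j, |c j|) / σ))
          * ∏ j, ENNReal.ofReal (dens σ (y j))) * g y := by rw [mul_assoc]
    _ ≤ (∏ j, ENNReal.ofReal (dens σ (y j - c j))) * g y := mul_le_mul_left hpt _

end LapAux

open scoped ENNReal

/-- (Laplace smoothing `L1` certificate of
Lecuyer et al.) If the class `i` of the Laplace-smoothed classifier at `v`
satisfies `E[hᵢ(v+ε)] ≥ e^{2√2·ρ/σ}·E[h_{i'}(v+ε)]` for every `i' ≠ i`, then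
for every `ṽ` with `‖v - ṽ‖₁ ≤ ρ`, class `i` still has the greatest
smoothed score at `ṽ`. -/
theorem laplace_smoothing_l1_certificate {d k : ℕ} (σ ρ : ℝ) (hσ : 0 < σ)
    (h : (Fin d → ℝ) → Fin k → ℝ) (hmeas : Measurable h)
    (hrange : ∀ w i', h w i' ∈ Set.Icc (0 : ℝ) 1)
    (v : Fin d → ℝ) (i : Fin k)
    (hgap : ∀ i', i' ≠ i →
      Real.exp (2 * Real.sqrt 2 * ρ / σ) * (∫ ε, h (v + ε) i' ∂(laplacePi d σ))
        ≤ ∫ ε, h (v + ε) i ∂(laplacePi d σ))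
    (vt : Fin d → ℝ) (hnear : (∑ j, |v j - vt j|) ≤ ρ) :
    ∀ i', i' ≠ i →
      (∫ ε, h (vt + ε) i' ∂(laplacePi d σ)) ≤ ∫ ε, h (vt + ε) i ∂(laplacePi d σ) := by
  intro i' hi'
  haveI : IsFiniteMeasure (laplaceM σ) := LapAux.isFiniteMeasure_laplaceM hσ
  haveI : IsFiniteMeasure (laplacePi d σ) := by
    unfold laplacePi; infer_instance
  have hM : ∀ (w : Fin d → ℝ) (j : Fin k), Measurable fun ε => h (w + ε) j := by
    intro w j
    have h1 : Measurable fun x : Fin d → ℝ => h x j := (measurable_pi_apply j).comp hmeas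
    exact h1.comp (measurable_const.add measurable_id)
  set μ := laplacePi d σ with hμ
  set I : (Fin d → ℝ) → Fin k → ℝ≥0∞ :=
    fun w j => ∫⁻ ε, ENNReal.ofReal (h (w + ε) j) ∂μ with hI
  have hIeq : ∀ (w : Fin d → ℝ) (j : Fin k), (∫ ε, h (w + ε) j ∂μ) = (I w j).toReal := by
    intro w j
    rw [hI, integral_eq_lintegral_of_nonneg_ae
      (Filter.Eventually.of_forall fun ε => (hrange _ _).1)
      ((hM w j).aestronglyMeasurable)]
  have hIne : ∀ (w : Fin d → ℝ) (j : Fin k), I w j ≠ ⊤ := by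
    intro w j
    refine ne_top_of_le_ne_top (ne_of_lt (measure_lt_top μ Set.univ)) ?_
    calc I w j ≤ ∫⁻ _, 1 ∂μ := lintegral_mono fun ε => ENNReal.ofReal_le_one.2 (hrange _ _).2
      _ = μ Set.univ := lintegral_one
  set s : ℝ := ∑ j, |v j - vt j| with hs
  set A : ℝ≥0∞ := ENNReal.ofReal (Real.exp (-(Real.sqrt 2 * s) / σ)) with hA
  set B : ℝ≥0∞ := ENNReal.ofReal (Real.exp (2 * Real.sqrt 2 * ρ / σ)) with hB
  have habel : ∀ (a b x : Fin d → ℝ), a + ((b - a) + x) = b + x := by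
    intro a b x; abel
  have h1 : A * I vt i' ≤ I v i' := by
    have hle := LapAux.lintegral_shift_le hσ (v - vt)
      (g := fun ε => ENNReal.ofReal (h (vt + ε) i')) ((hM vt i').ennreal_ofReal)
    simp only [Pi.sub_apply, habel vt v] at hle
    rw [hI, hA, hs]
    exact hle
  have h3 : A * I v i ≤ I vt i := by
    have hle := LapAux.lintegral_shift_le hσ (vt - v)
      (g := fun ε => ENNReal.ofReal (h (v + ε) i)) ((hM v i).ennreal_ofReal)
    simp only [Pi.sub_apply, habel v vt, abs_sub_comm] at hle
    rw [hI, hA, hs]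
    exact hle
  have h2 : B * I v i' ≤ I v i := by
    have hg := hgap i' hi'
    rw [hIeq v i', hIeq v i] at hg
    calc B * I v i'
        = ENNReal.ofReal (Real.exp (2 * Real.sqrt 2 * ρ / σ) * (I v i').toReal) := by
          rw [hB, ENNReal.ofReal_mul (Real.exp_pos _).le, ENNReal.ofReal_toReal (hIne v i')]
      _ ≤ ENNReal.ofReal ((I v i).toReal) := ENNReal.ofReal_le_ofReal hg
      _ = I v i := ENNReal.ofReal_toReal (hIne v i)
  have hone : (1 : ℝ≥0∞) ≤ A * (B * A) := by
    rw [hA, hB, ← ENNReal.ofReal_mul (Real.exp_pos _).le,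
      ← ENNReal.ofReal_mul (Real.exp_pos _).le, ← ENNReal.ofReal_one]
    apply ENNReal.ofReal_le_ofReal
    rw [← Real.exp_add, ← Real.exp_add, ← Real.exp_zero]
    apply Real.exp_le_exp.2
    have harg : -(Real.sqrt 2 * s) / σ + (2 * Real.sqrt 2 * ρ / σ + -(Real.sqrt 2 * s) / σ)
        = 2 * Real.sqrt 2 * (ρ - s) / σ := by ring
    rw [harg]
    apply div_nonneg _ hσ.le
    exact mul_nonneg (mul_nonneg (by norm_num) (Real.sqrt_nonneg 2)) (sub_nonneg.2 hnear)
  have hmain : I vt i' ≤ I vt i := by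
    calc I vt i' = 1 * I vt i' := (one_mul _).symm
      _ ≤ (A * (B * A)) * I vt i' := mul_le_mul_left hone _
      _ = A * (B * (A * I vt i')) := by ring
      _ ≤ A * (B * I v i') := mul_le_mul_right (mul_le_mul_right h1 B) A
      _ ≤ A * I v i := mul_le_mul_right h2 A
      _ ≤ I vt i := h3
  rw [hIeq vt i', hIeq vt i]
  exact ENNReal.toReal_mono (hIne vt i) hmain
end
end

section
/- Let x = (x^R, x^G, x^B) and x̃ = (x̃^R, x̃^G, x̃^B) be three-channel images on an n×m grid with all entries nonnegative, normalized so that the total mass over all channels is 1, and such that the per-channel masses agree: Σ_{i,j} x^K_{i,j} = Σ_{i,j} x̃^K_{i,j} for each channel K ∈ {R, G, B}. Define the channel-restricted 1-Wasserstein distance W₁^{res}(x, x̃) as the minimum of Σ Π_{p,q}·c(p,q) over block-diagonal couplings Π (couplings whose entries between positions of different channels are zero, with row sums x and column sums x̃), where the cost c between two positions in the same channel is the L1 distance |i−i'| + |j−j'|. Then W₁^{res}(x, x̃) = Σ_{K ∈ {R,G,B}} min{ ‖δ^K‖₁ : δ^K a local flow plan with Δ(x^K, δ^K) = x̃^K }.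 -/
noncomputable section

open Finset MeasureTheory

/-- `Π` is a channel-restricted coupling of the three-channel images `x` and
`x̃`: nonnegative, with row sums `x`, column sums `x̃`, and no transport
between distinct channels. -/
def IsCouplingC {n m : ℕ} (x xt : Fin 3 → Fin n → Fin m → ℝ)
    (P : (Fin 3 × Pos n m) → (Fin 3 × Pos n m) → ℝ) : Prop :=
  (∀ p q, 0 ≤ P p q) ∧ (∀ p, (∑ q, P p q) = x p.1 p.2.1 p.2.2) ∧
    (∀ q, (∑ p, P p q) = xt q.1 q.2.1 q.2.2) ∧
    (∀ p q, p.1 ≠ q.1 → P p q = 0)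

/-- The channel-restricted 1-Wasserstein distance between three-channel
images, with `L1` ground metric within each channel. -/
def W1res {n m : ℕ} (x xt : Fin 3 → Fin n → Fin m → ℝ) : ℝ :=
  sInf {c | ∃ P, IsCouplingC x xt P ∧
    (∑ p, ∑ q, P p q * groundL1 p.2 q.2) = c}


namespace S14
open Finset

set_option linter.unusedSectionVars false
variable {V : Type*} [Fintype V] [DecidableEq V]

def Couple (y y' : V → ℝ) (P : V → V → ℝ) : Prop :=
  (∀ p q, 0 ≤ P p q) ∧ (∀ p, (∑ q, P p q) = y p) ∧ (∀ q, (∑ p, P p q) = y' q)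

def tcost (d : V → V → ℝ) (P : V → V → ℝ) : ℝ := ∑ p, ∑ q, P p q * d p q

lemma tcost_nonneg {d P : V → V → ℝ} (hd : ∀ p q, 0 ≤ d p q) (hP : ∀ p q, 0 ≤ P p q) :
    0 ≤ tcost d P :=
  Finset.sum_nonneg fun p _ => Finset.sum_nonneg fun q _ => mul_nonneg (hP p q) (hd p q)

lemma couple_exists {y y' : V → ℝ} (hy : ∀ p, 0 ≤ y p) (hy' : ∀ p, 0 ≤ y' p)
    (hm : ∑ p, y p = ∑ p, y' p) : ∃ P, Couple y y' P := by
  by_cases h0 : (∑ p, y p) = 0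
  · refine ⟨0, fun p q => le_refl 0, fun p => ?_, fun q => ?_⟩
    · simp only [Pi.zero_apply, Finset.sum_const_zero]
      exact ((Finset.sum_eq_zero_iff_of_nonneg (fun i _ => hy i)).mp h0 p (mem_univ p)).symm
    · simp only [Pi.zero_apply, Finset.sum_const_zero]
      have := hm ▸ h0
      exact ((Finset.sum_eq_zero_iff_of_nonneg (fun i _ => hy' i)).mp this q (mem_univ q)).symm
  · refine ⟨fun p q => y p * y' q / (∑ r, y r), fun p q => ?_, fun p => ?_, fun q => ?_⟩
    · have hM : 0 ≤ ∑ r, y r := Finset.sum_nonneg fun r _ => hy r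
      exact div_nonneg (mul_nonneg (hy p) (hy' q)) hM
    · simp only [← Finset.sum_div, ← Finset.mul_sum, ← hm]
      rw [mul_div_assoc, div_self h0, mul_one]
    · simp only [← Finset.sum_div, ← Finset.sum_mul]
      rw [mul_comm, mul_div_assoc, div_self h0, mul_one]

lemma couple_diag {y : V → ℝ} (hy : ∀ p, 0 ≤ y p) {d : V → V → ℝ} (hd0 : ∀ p, d p p = 0) :
    ∃ P, Couple y y P ∧ tcost d P = 0 := by
  refine ⟨fun p q => if p = q then y p else 0, ⟨fun p q => ?_, fun p => ?_, fun q => ?_⟩, ?_⟩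
  · dsimp only; split
    · exact hy p
    · exact le_refl 0
  · simp
  · simp [Finset.sum_ite_eq]
  · unfold tcost
    apply Finset.sum_eq_zero; intro p _
    apply Finset.sum_eq_zero; intro q _
    by_cases h : p = q
    · subst h; simp [hd0]
    · simp [h]

lemma glue {d : V → V → ℝ} (htri : ∀ a b c, d a c ≤ d a b + d b c)
    {y y' y'' P1 P2} (h1 : Couple y y' P1) (h2 : Couple y' y'' P2) :
    ∃ P, Couple y y'' P ∧ tcost d P ≤ tcost d P1 + tcost d P2 := by
  obtain ⟨h1n, h1r, h1c⟩ := h1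
  obtain ⟨h2n, h2r, h2c⟩ := h2
  have hy' : ∀ q, 0 ≤ y' q := fun q => (h1c q) ▸ Finset.sum_nonneg fun p _ => h1n p q
  have hz1 : ∀ p q, y' q = 0 → P1 p q = 0 := by
    intro p q h
    have := (Finset.sum_eq_zero_iff_of_nonneg (fun r _ => h1n r q)).mp ((h1c q).trans h)
    exact this p (mem_univ p)
  have hz2 : ∀ q r, y' q = 0 → P2 q r = 0 := by
    intro q r h
    have := (Finset.sum_eq_zero_iff_of_nonneg (fun s _ => h2n q s)).mp ((h2r q).trans h)
    exact this r (mem_univ r)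
  set t : V → V → V → ℝ := fun p q r => if y' q = 0 then 0 else P1 p q * P2 q r / y' q with ht
  have htnn : ∀ p q r, 0 ≤ t p q r := by
    intro p q r; simp only [ht]
    split
    · exact le_refl 0
    · exact div_nonneg (mul_nonneg (h1n p q) (h2n q r)) (hy' q)
  have hrow : ∀ p q, (∑ r, t p q r) = P1 p q := by
    intro p q; simp only [ht]
    by_cases h : y' q = 0
    · simp [h, hz1 p q h]
    · simp only [if_neg h]
      rw [← Finset.sum_div, ← Finset.mul_sum, h2r q, mul_div_assoc, div_self h, mul_one]
  have hcol : ∀ q r, (∑ p, t p q r) = P2 q r := by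
    intro q r; simp only [ht]
    by_cases h : y' q = 0
    · simp [h, hz2 q r h]
    · simp only [if_neg h]
      rw [← Finset.sum_div, ← Finset.sum_mul, h1c q]
      field_simp
  refine ⟨fun p r => ∑ q, t p q r, ⟨fun p r => Finset.sum_nonneg fun q _ => htnn p q r,
    fun p => ?_, fun r => ?_⟩, ?_⟩
  · rw [Finset.sum_comm]
    calc (∑ q, ∑ r, t p q r) = ∑ q, P1 p q := by
          exact Finset.sum_congr rfl fun q _ => hrow p q
    _ = y p := h1r p
  · calc (∑ p, ∑ q, t p q r) = ∑ q, ∑ p, t p q r := Finset.sum_comm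
    _ = ∑ q, P2 q r := Finset.sum_congr rfl fun q _ => hcol q r
    _ = y'' r := h2c r
  · unfold tcost
    calc (∑ p, ∑ r, (∑ q, t p q r) * d p r)
        = ∑ p, ∑ r, ∑ q, t p q r * d p r := by
          refine Finset.sum_congr rfl fun p _ => Finset.sum_congr rfl fun r _ => ?_
          rw [Finset.sum_mul]
    _ ≤ ∑ p, ∑ r, ∑ q, t p q r * (d p q + d q r) := by
          refine Finset.sum_le_sum fun p _ => Finset.sum_le_sum fun r _ =>
            Finset.sum_le_sum fun q _ => mul_le_mul_of_nonneg_left (htri p q r) (htnn p q r)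
    _ = (∑ p, ∑ q, ∑ r, t p q r * d p q) + ∑ p, ∑ q, ∑ r, t p q r * d q r := by
          rw [← Finset.sum_add_distrib]
          refine Finset.sum_congr rfl fun p _ => ?_
          rw [← Finset.sum_add_distrib, Finset.sum_comm]
          refine Finset.sum_congr rfl fun q _ => ?_
          rw [← Finset.sum_add_distrib]
          exact Finset.sum_congr rfl fun r _ => by ring
    _ ≤ (∑ p, ∑ q, P1 p q * d p q) + ∑ q, ∑ r, P2 q r * d q r := by
          apply add_le_add
          · refine le_of_eq (Finset.sum_congr rfl fun p _ => Finset.sum_congr rfl fun q _ => ?_)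
            rw [← Finset.sum_mul, hrow p q]
          · refine le_of_eq ?_
            rw [Finset.sum_comm]
            refine Finset.sum_congr rfl fun q _ => ?_
            rw [Finset.sum_comm]
            refine Finset.sum_congr rfl fun r _ => ?_
            rw [← Finset.sum_mul, hcol q r]



lemma cycle_or_source (S : Finset (V × V)) (hS : S.Nonempty) :
    (∃ (L : ℕ) (g : ℕ → V), 1 ≤ L ∧ g L = g 0 ∧ (∀ k, k < L → (g k, g (k + 1)) ∈ S) ∧
      (∀ k, k < L → ∀ k', k' < L → g k = g k' → k = k'))
    ∨ (∃ p q, (p, q) ∈ S ∧ ∀ r, (r, p) ∉ S) := by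
  by_cases hsrc : ∃ p q, (p, q) ∈ S ∧ ∀ r, (r, p) ∉ S
  · exact Or.inr hsrc
  push_neg at hsrc
  left
  classical
  set f : V → V := fun p => if h : ∃ r, (r, p) ∈ S then h.choose else p with hf
  have hfprop : ∀ p, (∃ q, (p, q) ∈ S) → (f p, p) ∈ S := by
    intro p hp
    obtain ⟨q, hq⟩ := hp
    obtain ⟨r, hr⟩ := hsrc p q hq
    have h : ∃ r, (r, p) ∈ S := ⟨r, hr⟩
    simp only [hf, dif_pos h]
    exact h.choose_spec
  obtain ⟨⟨p0, q0⟩, hp0⟩ := hS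
  have hiter : ∀ k, (∃ q, (f^[k] p0, q) ∈ S) ∧ (f^[k + 1] p0, f^[k] p0) ∈ S := by
    intro k
    induction k with
    | zero =>
      refine ⟨⟨q0, hp0⟩, ?_⟩
      simpa using hfprop p0 ⟨q0, hp0⟩
    | succ k ih =>
      have hout : ∃ q, (f^[k + 1] p0, q) ∈ S := ⟨f^[k] p0, ih.2⟩
      refine ⟨hout, ?_⟩
      have := hfprop (f^[k + 1] p0) hout
      rw [Function.iterate_succ_apply' f (k + 1) p0]
      exact this
  -- pigeonhole
  have hpig : ∃ i j : Fin (Fintype.card V + 1), i ≠ j ∧ f^[(i : ℕ)] p0 = f^[(j : ℕ)] p0 := by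
    have hcard : Fintype.card V < Fintype.card (Fin (Fintype.card V + 1)) := by simp
    obtain ⟨i, j, hij, h⟩ := Fintype.exists_ne_map_eq_of_card_lt
      (fun i : Fin (Fintype.card V + 1) => f^[(i : ℕ)] p0) hcard
    exact ⟨i, j, hij, h⟩
  have hP : ∃ L, 1 ≤ L ∧ ∃ i, f^[i] p0 = f^[i + L] p0 := by
    obtain ⟨i, j, hij, h⟩ := hpig
    rcases lt_or_gt_of_ne (fun hc => hij (Fin.ext hc) : (i : ℕ) ≠ (j : ℕ)) with hlt | hlt
    · exact ⟨j - i, by omega, i, by rw [h]; congr 1; omega⟩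
    · exact ⟨i - j, by omega, j, by rw [← h]; congr 1; omega⟩
  set L0 := Nat.find hP with hL0
  obtain ⟨hL1, i0, hi0⟩ := Nat.find_spec hP
  refine ⟨L0, fun k => f^[i0 + L0 - k] p0, hL1, ?_, ?_, ?_⟩
  · show f^[i0 + L0 - L0] p0 = f^[i0 + L0 - 0] p0
    rw [Nat.add_sub_cancel, Nat.sub_zero]
    exact hi0
  · intro k hk
    show (f^[i0 + L0 - k] p0, f^[i0 + L0 - (k + 1)] p0) ∈ S
    have h1 : i0 + L0 - k = (i0 + L0 - (k + 1)) + 1 := by omega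
    rw [h1]
    exact (hiter (i0 + L0 - (k + 1))).2
  · intro k hk k' hk' heq
    simp only at heq
    by_contra hne
    rcases Nat.lt_or_ge k k' with hlt | hge
    · have : f^[i0 + L0 - k'] p0 = f^[(i0 + L0 - k') + (k' - k)] p0 := by
        rw [show (i0 + L0 - k') + (k' - k) = i0 + L0 - k by omega]
        exact heq.symm
      have : ∃ L, (1 ≤ L ∧ ∃ i, f^[i] p0 = f^[i + L] p0) ∧ L < L0 :=
        ⟨k' - k, ⟨by omega, i0 + L0 - k', this⟩, by omega⟩
      obtain ⟨L, hL, hLlt⟩ := this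
      exact Nat.find_min hP hLlt hL
    · have hlt : k' < k := by omega
      have : f^[i0 + L0 - k] p0 = f^[(i0 + L0 - k) + (k - k')] p0 := by
        rw [show (i0 + L0 - k) + (k - k') = i0 + L0 - k' by omega]
        exact heq
      have : ∃ L, (1 ≤ L ∧ ∃ i, f^[i] p0 = f^[i + L] p0) ∧ L < L0 :=
        ⟨k - k', ⟨by omega, i0 + L0 - k, this⟩, by omega⟩
      obtain ⟨L, hL, hLlt⟩ := this
      exact Nat.find_min hP hLlt hL


lemma flow_to_coupling (d : V → V → ℝ) (hd0 : ∀ p, d p p = 0) (hdnn : ∀ p q, 0 ≤ d p q)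
    (htri : ∀ a b c, d a c ≤ d a b + d b c) :
    ∀ (N : ℕ) (F : V → V → ℝ), (univ.filter fun e : V × V => F e.1 e.2 ≠ 0).card ≤ N →
      (∀ p q, 0 ≤ F p q) →
      ∀ y y' : V → ℝ, (∀ p, 0 ≤ y p) → (∀ p, 0 ≤ y' p) →
      (∀ q, y' q = y q + (∑ p, F p q) - (∑ r, F q r)) →
      ∃ P, Couple y y' P ∧ tcost d P ≤ ∑ p, ∑ q, F p q * d p q := by
  intro N
  induction N with
  | zero =>
    intro F hcard hF y y' hy hy' hdiv
    have hF0 : ∀ p q, F p q = 0 := by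
      intro p q
      by_contra h
      have hmem : (p, q) ∈ univ.filter fun e : V × V => F e.1 e.2 ≠ 0 := by
        simp only [Finset.mem_filter, Finset.mem_univ, true_and]; exact h
      have := Finset.card_pos.mpr ⟨_, hmem⟩
      omega
    have hyy : y' = y := by
      funext q; rw [hdiv q]; simp [hF0]
    obtain ⟨P, hP, hc⟩ := couple_diag hy hd0
    rw [hyy]
    refine ⟨P, hP, ?_⟩
    rw [hc]
    exact Finset.sum_nonneg fun p _ => Finset.sum_nonneg fun q _ =>
      mul_nonneg (hF p q) (hdnn p q)
  | succ N ih =>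
    intro F hcard hF y y' hy hy' hdiv
    by_cases hne : (univ.filter fun e : V × V => F e.1 e.2 ≠ 0).Nonempty
    swap
    · refine ih F ?_ hF y y' hy hy' hdiv
      rw [Finset.not_nonempty_iff_eq_empty] at hne
      rw [hne]; simp
    set S := univ.filter fun e : V × V => F e.1 e.2 ≠ 0 with hSdef
    have hmemS : ∀ p q : V, (p, q) ∈ S ↔ F p q ≠ 0 := by
      intro p q; simp [hSdef]
    rcases cycle_or_source S hne with ⟨L, g, hL1, hgL, hgS, hginj⟩ | ⟨p, q0, hpq0, hsrc⟩
    · -- cycle case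
      obtain ⟨k0, hk0mem, hk0min⟩ := Finset.exists_min_image (range L)
        (fun k => F (g k) (g (k + 1))) ⟨0, Finset.mem_range.mpr hL1⟩
      set a := F (g k0) (g (k0 + 1)) with ha
      have hk0L : k0 < L := Finset.mem_range.mp hk0mem
      have hapos : 0 < a := by
        have h1 := (hmemS _ _).mp (hgS k0 hk0L)
        exact lt_of_le_of_ne (hF _ _) (Ne.symm h1)
      set C : V → V → ℝ := fun p q =>
        ∑ k ∈ range L, if g k = p ∧ g (k + 1) = q then (1 : ℝ) else 0 with hC
      have hCnn : ∀ p q, 0 ≤ C p q := fun p q =>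
        Finset.sum_nonneg fun k _ => by positivity
      have hCcases : ∀ p q, C p q = 0 ∨ (C p q = 1 ∧ a ≤ F p q) := by
        intro p q
        by_cases hex : ∃ k, k < L ∧ g k = p ∧ g (k + 1) = q
        · obtain ⟨k, hk, h1, h2⟩ := hex
          right
          constructor
          · simp only [hC]
            rw [Finset.sum_eq_single_of_mem k (Finset.mem_range.mpr hk)]
            · rw [if_pos ⟨h1, h2⟩]
            · intro k' hk' hne'
              rw [if_neg]
              rintro ⟨e1, e2⟩
              exact hne' (hginj k' (Finset.mem_range.mp hk') k hk (e1.trans h1.symm))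
          · rw [← h1, ← h2]; exact hk0min k (Finset.mem_range.mpr hk)
        · left
          simp only [hC]
          apply Finset.sum_eq_zero
          intro k hk
          rw [if_neg]
          rintro ⟨e1, e2⟩
          exact hex ⟨k, Finset.mem_range.mp hk, e1, e2⟩
      set F' : V → V → ℝ := fun p q => F p q - a * C p q with hF'
      have hF'nn : ∀ p q, 0 ≤ F' p q := by
        intro p q
        rcases hCcases p q with h | ⟨h1, h2⟩
        · simp [hF', h, hF p q]
        · simp only [hF', h1, mul_one, sub_nonneg]; exact h2
      have hF'le : ∀ p q, F' p q ≤ F p q := by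
        intro p q
        simp only [hF', sub_le_self_iff]
        exact mul_nonneg hapos.le (hCnn p q)
      have hCbal : ∀ q, (∑ p, C p q) = ∑ r, C q r := by
        intro q
        have h1 : (∑ p, C p q) = ∑ k ∈ range L, if g (k + 1) = q then (1 : ℝ) else 0 := by
          simp only [hC]
          rw [Finset.sum_comm]
          refine Finset.sum_congr rfl fun k _ => ?_
          simp only [ite_and]
          rw [Finset.sum_ite_eq univ (g k) (fun _ => if g (k + 1) = q then (1 : ℝ) else 0)]
          simp
        have h2 : (∑ r, C q r) = ∑ k ∈ range L, if g k = q then (1 : ℝ) else 0 := by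
          simp only [hC]
          rw [Finset.sum_comm]
          refine Finset.sum_congr rfl fun k _ => ?_
          by_cases h : g k = q
          · simp only [h, true_and]
            rw [Finset.sum_ite_eq univ (g (k + 1)) (fun _ => (1 : ℝ))]
            simp
          · have : ∀ r : V, (if g k = q ∧ g (k + 1) = r then (1:ℝ) else 0) = 0 := by
              intro r; rw [if_neg]; rintro ⟨e1, _⟩; exact h e1
            simp [this, h]
        rw [h1, h2]
        set hfun : ℕ → ℝ := fun k => if g k = q then (1 : ℝ) else 0 with hh
        have e1 : ∑ k ∈ range (L + 1), hfun k = (∑ k ∈ range L, hfun (k + 1)) + hfun 0 :=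
          Finset.sum_range_succ' hfun L
        have e2 : ∑ k ∈ range (L + 1), hfun k = (∑ k ∈ range L, hfun k) + hfun L :=
          Finset.sum_range_succ hfun L
        have e3 : hfun L = hfun 0 := by simp only [hh, hgL]
        have : (∑ k ∈ range L, hfun (k + 1)) = ∑ k ∈ range L, hfun k := by
          rw [e3] at e2; linarith
        exact this
      have hdiv' : ∀ q, y' q = y q + (∑ p, F' p q) - (∑ r, F' q r) := by
        intro q
        have e1 : (∑ p, F' p q) = (∑ p, F p q) - a * (∑ p, C p q) := by
          simp only [hF', Finset.sum_sub_distrib, Finset.mul_sum]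
        have e2 : (∑ r, F' q r) = (∑ r, F q r) - a * (∑ r, C q r) := by
          simp only [hF', Finset.sum_sub_distrib, Finset.mul_sum]
        rw [e1, e2, ← hCbal q, hdiv q]
        ring
      have hsub : (univ.filter fun e : V × V => F' e.1 e.2 ≠ 0) ⊆ S := by
        intro e he
        rw [Finset.mem_filter] at he
        rw [hSdef, Finset.mem_filter]
        refine ⟨Finset.mem_univ e, ?_⟩
        intro h0
        apply he.2
        rcases hCcases e.1 e.2 with h | ⟨h1, h2⟩
        · simp [hF', h, h0]
        · exfalso; rw [h0] at h2; exact absurd (hapos.trans_le h2) (lt_irrefl 0)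
      have hnotmem : (g k0, g (k0 + 1)) ∉ (univ.filter fun e : V × V => F' e.1 e.2 ≠ 0) := by
        rw [Finset.mem_filter]
        rintro ⟨-, hne'⟩
        apply hne'
        have hC1 : C (g k0) (g (k0 + 1)) = 1 := by
          rcases hCcases (g k0) (g (k0 + 1)) with h | ⟨h1, _⟩
          · exfalso
            have : (1:ℝ) ≤ C (g k0) (g (k0+1)) := by
              simp only [hC]
              calc (1:ℝ) = ∑ k ∈ range L, if k = k0 then (1:ℝ) else 0 := by
                    rw [Finset.sum_ite_eq' (range L) k0 (fun _ => (1:ℝ))]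
                    simp [hk0mem]
              _ ≤ _ := by
                    apply Finset.sum_le_sum
                    intro k hk
                    by_cases hkk : k = k0
                    · subst hkk; simp
                    · simp only [if_neg hkk]; positivity
            rw [h] at this; linarith
          · exact h1
        simp [hF', hC1, ha]
      have hcard' : (univ.filter fun e : V × V => F' e.1 e.2 ≠ 0).card ≤ N := by
        have : (univ.filter fun e : V × V => F' e.1 e.2 ≠ 0) ⊂ S :=
          (Finset.ssubset_iff_of_subset hsub).mpr ⟨_, hgS k0 hk0L, hnotmem⟩
        have := Finset.card_lt_card this
        omega
      obtain ⟨P, hP, hPc⟩ := ih F' hcard' hF'nn y y' hy hy' hdiv'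
      refine ⟨P, hP, hPc.trans ?_⟩
      exact Finset.sum_le_sum fun p _ => Finset.sum_le_sum fun q _ =>
        mul_le_mul_of_nonneg_right (hF'le p q) (hdnn p q)
    · -- source case
      have hFrp : ∀ r, F r p = 0 := by
        intro r
        have := hsrc r
        rw [hmemS] at this
        push_neg at this
        exact this
      have hFpq0 : F p q0 ≠ 0 := (hmemS p q0).mp hpq0
      have hFpp : F p p = 0 := hFrp p
      have hy'p : y' p = y p - ∑ t, F p t := by
        rw [hdiv p]
        rw [Finset.sum_eq_zero fun r _ => hFrp r]
        ring
      set y1 : V → ℝ := fun s => if s = p then y p - ∑ t, F p t else y s + F p s with hy1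
      have hy1p : y1 p = y' p := by simp only [hy1]; simp [hy'p]
      have hy1nn : ∀ s, 0 ≤ y1 s := by
        intro s
        simp only [hy1]
        by_cases hs : s = p
        · rw [if_pos hs, ← hy'p]; exact hy' p
        · rw [if_neg hs]; exact add_nonneg (hy s) (hF p s)
      set P1 : V → V → ℝ := fun r s =>
        if r = p then (if s = p then y p - ∑ t, F p t else F p s)
        else (if s = r then y r else 0) with hP1def
      have hP1 : Couple y y1 P1 := by
        refine ⟨fun r s => ?_, fun r => ?_, fun s => ?_⟩
        · simp only [hP1def]
          split_ifs
          · rw [← hy'p]; exact hy' p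
          · exact hF p _
          · exact hy r
          · exact le_refl 0
        · by_cases hr : r = p
          · subst hr
            simp only [hP1def, if_pos rfl]
            have hpt : ∀ s : V, (if s = r then y r - ∑ t, F r t else F r s)
                = F r s + (if s = r then y r - ∑ t, F r t else 0) := by
              intro s
              by_cases hs : s = r
              · rw [if_pos hs, if_pos hs, hs, hFpp]; ring
              · rw [if_neg hs, if_neg hs]; ring
            rw [Finset.sum_congr rfl fun s _ => hpt s, Finset.sum_add_distrib,
              Finset.sum_ite_eq' univ r (fun _ => y r - ∑ t, F r t)]
            simp
          · simp only [hP1def, if_neg hr]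
            rw [Finset.sum_ite_eq' univ r (fun _ => y r)]
            simp
        · by_cases hs : s = p
          · subst hs
            have hpt : ∀ r : V, P1 r s = if r = s then y s - ∑ t, F s t else 0 := by
              intro r
              simp only [hP1def]
              by_cases hr : r = s
              · subst hr; simp
              · rw [if_neg hr, if_neg (fun h : s = r => hr h.symm), if_neg hr]
            rw [Finset.sum_congr rfl fun r _ => hpt r,
              Finset.sum_ite_eq' univ s (fun _ => y s - ∑ t, F s t)]
            simp [hy1]
          · have hpt : ∀ r : V, P1 r s
                = (if r = p then F p s else 0) + (if r = s then y s else 0) := by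
              intro r
              simp only [hP1def]
              by_cases hr : r = p
              · rw [if_pos hr, if_neg hs, if_pos hr, if_neg (by rw [hr]; exact fun h => hs h.symm)]
                ring
              · rw [if_neg hr, if_neg hr]
                by_cases hrs : s = r
                · rw [if_pos hrs, if_pos hrs.symm, hrs]; ring
                · rw [if_neg hrs, if_neg (fun h : r = s => hrs h.symm)]; ring
            rw [Finset.sum_congr rfl fun r _ => hpt r, Finset.sum_add_distrib,
              Finset.sum_ite_eq' univ p (fun _ => F p s), Finset.sum_ite_eq' univ s (fun _ => y s)]
            simp [hy1, if_neg hs]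
            ring
      have hP1cost : tcost d P1 = ∑ s, F p s * d p s := by
        unfold tcost
        have hpt : ∀ r s : V, P1 r s * d r s = if r = p then F p s * d p s else 0 := by
          intro r s
          simp only [hP1def]
          by_cases hr : r = p
          · rw [if_pos hr, if_pos hr]
            by_cases hs : s = p
            · rw [if_pos hs, hr, hs, hd0, hFpp]; ring
            · rw [if_neg hs, hr]
          · rw [if_neg hr, if_neg hr]
            by_cases hrs : s = r
            · rw [if_pos hrs, hrs, hd0]; ring
            · rw [if_neg hrs]; ring
        rw [Finset.sum_congr rfl fun r _ => Finset.sum_congr rfl fun s _ => hpt r s]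
        have : ∀ r : V, (∑ s, if r = p then F p s * d p s else 0)
            = if r = p then (∑ s, F p s * d p s) else 0 := by
          intro r
          by_cases hr : r = p
          · simp only [if_pos hr]
          · simp only [if_neg hr, Finset.sum_const_zero]
        rw [Finset.sum_congr rfl fun r _ => this r,
          Finset.sum_ite_eq' univ p (fun _ => ∑ s, F p s * d p s)]
        simp
      set F'' : V → V → ℝ := fun r s => if r = p then 0 else F r s with hF''
      have hF''nn : ∀ r s, 0 ≤ F'' r s := by
        intro r s; simp only [hF'']; split_ifs
        · exact le_refl 0
        · exact hF r s
      have hdiv'' : ∀ q, y' q = y1 q + (∑ r, F'' r q) - (∑ s, F'' q s) := by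
        intro q
        by_cases hq : q = p
        · subst hq
          have e1 : (∑ r, F'' r q) = 0 := by
            apply Finset.sum_eq_zero
            intro r _
            simp only [hF'']
            split_ifs
            · rfl
            · exact hFrp r
          have e2 : (∑ s, F'' q s) = 0 := by
            apply Finset.sum_eq_zero
            intro s _
            simp [hF'']
          rw [e1, e2, hy1p]
          ring
        · have e1 : (∑ r, F'' r q) = (∑ r, F r q) - F p q := by
            have : ∀ r : V, F'' r q = F r q - (if r = p then F p q else 0) := by
              intro r
              simp only [hF'']
              by_cases hr : r = p
              · rw [if_pos hr, if_pos hr, hr]; ring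
              · rw [if_neg hr, if_neg hr]; ring
            rw [Finset.sum_congr rfl fun r _ => this r, Finset.sum_sub_distrib,
              Finset.sum_ite_eq' univ p (fun _ => F p q)]
            simp
          have e2 : (∑ s, F'' q s) = ∑ s, F q s := by
            refine Finset.sum_congr rfl fun s _ => ?_
            simp only [hF'']
            rw [if_neg hq]
          have e3 : y1 q = y q + F p q := by rw [hy1]; simp [if_neg hq]
          rw [e1, e2, e3, hdiv q]
          ring
      have hcard'' : (univ.filter fun e : V × V => F'' e.1 e.2 ≠ 0).card ≤ N := by
        have hsub : (univ.filter fun e : V × V => F'' e.1 e.2 ≠ 0) ⊆ S := by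
          intro e he
          rw [Finset.mem_filter] at he
          rw [hSdef, Finset.mem_filter]
          refine ⟨Finset.mem_univ e, ?_⟩
          intro h0
          apply he.2
          simp only [hF'']
          split_ifs
          · rfl
          · exact h0
        have hnm : (p, q0) ∉ (univ.filter fun e : V × V => F'' e.1 e.2 ≠ 0) := by
          rw [Finset.mem_filter]
          rintro ⟨-, hne'⟩
          apply hne'
          simp [hF'']
        have : (univ.filter fun e : V × V => F'' e.1 e.2 ≠ 0) ⊂ S :=
          (Finset.ssubset_iff_of_subset hsub).mpr ⟨_, hpq0, hnm⟩
        have := Finset.card_lt_card this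
        omega
      obtain ⟨P2, hP2, hP2c⟩ := ih F'' hcard'' hF''nn y1 y' hy1nn hy' hdiv''
      obtain ⟨P, hP, hPc⟩ := glue htri hP1 hP2
      refine ⟨P, hP, ?_⟩
      have hsplit : (∑ r, ∑ s, F r s * d r s)
          = (∑ r, ∑ s, F'' r s * d r s) + ∑ s, F p s * d p s := by
        have : ∀ r : V, (∑ s, F r s * d r s)
            = (∑ s, F'' r s * d r s) + (if r = p then ∑ s, F p s * d p s else 0) := by
          intro r
          by_cases hr : r = p
          · subst hr
            simp [hF'']
          · simp [hF'', hr]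
        rw [Finset.sum_congr rfl fun r _ => this r, Finset.sum_add_distrib,
          Finset.sum_ite_eq' univ p (fun _ => ∑ s, F p s * d p s)]
        simp
      rw [hsplit]
      rw [hP1cost] at hPc
      linarith

end S14

namespace S14
open Finset

section Grid
variable {n m : ℕ}

def eTail : FlowIdx n m → Pos n m :=
  Sum.elim (fun e => (vlow e.1, e.2)) (fun e => (e.1, hlow e.2))

def eHead : FlowIdx n m → Pos n m :=
  Sum.elim (fun e => (vhigh e.1, e.2)) (fun e => (e.1, hhigh e.2))

def eVal (δv : Fin (n - 1) → Fin m → ℝ) (δh : Fin n → Fin (m - 1) → ℝ) :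
    FlowIdx n m → ℝ :=
  Sum.elim (fun e => δv e.1 e.2) (fun e => δh e.1 e.2)

lemma vlow_val (k : Fin (n - 1)) : ((vlow k : Fin n) : ℕ) = (k : ℕ) := rfl
lemma vhigh_val (k : Fin (n - 1)) : ((vhigh k : Fin n) : ℕ) = (k : ℕ) + 1 := rfl
lemma hlow_val (k : Fin (m - 1)) : ((hlow k : Fin m) : ℕ) = (k : ℕ) := rfl
lemma hhigh_val (k : Fin (m - 1)) : ((hhigh k : Fin m) : ℕ) = (k : ℕ) + 1 := rfl

lemma padV_int (δv : Fin (n - 1) → Fin m → ℝ) (i : Fin n) (j : Fin m) :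
    padV δv ((i : ℕ) : ℤ) ((j : ℕ) : ℤ)
      = ∑ k : Fin (n - 1), ∑ j' : Fin m,
          if (vlow k : Fin n) = i ∧ j' = j then δv k j' else 0 := by
  unfold padV
  refine Finset.sum_congr rfl fun k _ => Finset.sum_congr rfl fun j' _ => ?_
  refine if_congr ?_ rfl rfl
  rw [Fin.ext_iff, Fin.ext_iff, vlow_val]
  constructor
  · rintro ⟨h1, h2⟩; exact ⟨by exact_mod_cast h1, by exact_mod_cast h2⟩
  · rintro ⟨h1, h2⟩; exact ⟨by exact_mod_cast h1, by exact_mod_cast h2⟩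

lemma padV_int_sub (δv : Fin (n - 1) → Fin m → ℝ) (i : Fin n) (j : Fin m) :
    padV δv (((i : ℕ) : ℤ) - 1) ((j : ℕ) : ℤ)
      = ∑ k : Fin (n - 1), ∑ j' : Fin m,
          if (vhigh k : Fin n) = i ∧ j' = j then δv k j' else 0 := by
  unfold padV
  refine Finset.sum_congr rfl fun k _ => Finset.sum_congr rfl fun j' _ => ?_
  refine if_congr ?_ rfl rfl
  rw [Fin.ext_iff, Fin.ext_iff, vhigh_val]
  constructor
  · rintro ⟨h1, h2⟩
    constructor
    · omega
    · exact_mod_cast h2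
  · rintro ⟨h1, h2⟩
    constructor
    · omega
    · exact_mod_cast h2

lemma padH_int (δh : Fin n → Fin (m - 1) → ℝ) (i : Fin n) (j : Fin m) :
    padH δh ((i : ℕ) : ℤ) ((j : ℕ) : ℤ)
      = ∑ i' : Fin n, ∑ k : Fin (m - 1),
          if i' = i ∧ (hlow k : Fin m) = j then δh i' k else 0 := by
  unfold padH
  refine Finset.sum_congr rfl fun i' _ => Finset.sum_congr rfl fun k _ => ?_
  refine if_congr ?_ rfl rfl
  rw [Fin.ext_iff, Fin.ext_iff, hlow_val]
  constructor
  · rintro ⟨h1, h2⟩; exact ⟨by exact_mod_cast h1, by exact_mod_cast h2⟩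
  · rintro ⟨h1, h2⟩; exact ⟨by exact_mod_cast h1, by exact_mod_cast h2⟩

lemma padH_int_sub (δh : Fin n → Fin (m - 1) → ℝ) (i : Fin n) (j : Fin m) :
    padH δh ((i : ℕ) : ℤ) (((j : ℕ) : ℤ) - 1)
      = ∑ i' : Fin n, ∑ k : Fin (m - 1),
          if i' = i ∧ (hhigh k : Fin m) = j then δh i' k else 0 := by
  unfold padH
  refine Finset.sum_congr rfl fun i' _ => Finset.sum_congr rfl fun k _ => ?_
  refine if_congr ?_ rfl rfl
  rw [Fin.ext_iff, Fin.ext_iff, hhigh_val]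
  constructor
  · rintro ⟨h1, h2⟩
    exact ⟨by exact_mod_cast h1, by omega⟩
  · rintro ⟨h1, h2⟩
    exact ⟨by exact_mod_cast h1, by omega⟩

/-- Bridge: `applyFlow` as a sum over edges. -/
lemma applyFlow_edges (y : Fin n → Fin m → ℝ) (δv : Fin (n - 1) → Fin m → ℝ)
    (δh : Fin n → Fin (m - 1) → ℝ) (i : Fin n) (j : Fin m) :
    applyFlow y δv δh i j = y i j +
      ∑ e : FlowIdx n m, eVal δv δh e *
        ((if eHead e = (i, j) then (1 : ℝ) else 0) - (if eTail e = (i, j) then 1 else 0)) := by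
  unfold applyFlow
  rw [padV_int, padV_int_sub, padH_int, padH_int_sub]
  rw [Fintype.sum_sum_type]
  rw [Fintype.sum_prod_type, Fintype.sum_prod_type]
  have hv : ∀ (k : Fin (n - 1)) (j' : Fin m),
      eVal δv δh (Sum.inl (k, j')) *
        ((if eHead (Sum.inl (k, j') : FlowIdx n m) = (i, j) then (1:ℝ) else 0) -
         (if eTail (Sum.inl (k, j') : FlowIdx n m) = (i, j) then 1 else 0))
      = (if (vhigh k : Fin n) = i ∧ j' = j then δv k j' else 0)
        - (if (vlow k : Fin n) = i ∧ j' = j then δv k j' else 0) := by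
    intro k j'
    simp only [eVal, eHead, eTail, Sum.elim_inl, Prod.mk.injEq]
    split_ifs <;> ring
  have hh : ∀ (i' : Fin n) (k : Fin (m - 1)),
      eVal δv δh (Sum.inr (i', k)) *
        ((if eHead (Sum.inr (i', k) : FlowIdx n m) = (i, j) then (1:ℝ) else 0) -
         (if eTail (Sum.inr (i', k) : FlowIdx n m) = (i, j) then 1 else 0))
      = (if i' = i ∧ (hhigh k : Fin m) = j then δh i' k else 0)
        - (if i' = i ∧ (hlow k : Fin m) = j then δh i' k else 0) := by
    intro i' k
    simp only [eVal, eHead, eTail, Sum.elim_inr, Prod.mk.injEq]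
    split_ifs <;> ring
  rw [Finset.sum_congr rfl fun k _ => Finset.sum_congr rfl fun j' _ => hv k j']
  rw [Finset.sum_congr rfl fun i' _ => Finset.sum_congr rfl fun k _ => hh i' k]
  simp only [Finset.sum_sub_distrib]
  ring

lemma ind_and (A B : Prop) [Decidable A] [Decidable B] :
    (if A ∧ B then (1:ℝ) else 0) = (if A then 1 else 0) * (if B then 1 else 0) := by
  split_ifs <;> simp_all

lemma sum_ind_ind {α : Type*} [Fintype α] [DecidableEq α] (a b : α) :
    (∑ x : α, (if x = a then (1:ℝ) else 0) * (if x = b then 1 else 0))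
      = if a = b then 1 else 0 := by
  have h : ∀ x : α, (if x = a then (1:ℝ) else 0) * (if x = b then 1 else 0)
      = if x = a then (if a = b then (1:ℝ) else 0) else 0 := by
    intro x
    by_cases hx : x = a
    · subst hx
      by_cases hb : x = b
      · subst hb; simp
      · simp [hb]
    · simp [hx]
  rw [Finset.sum_congr rfl fun x _ => h x,
    Finset.sum_ite_eq' Finset.univ a (fun _ => if a = b then (1:ℝ) else 0)]
  simp

lemma sum_ind (M t : ℕ) (c : ℕ → ℝ) :
    (∑ k ∈ Finset.range M, c k * (if k = t then (1:ℝ) else 0)) = if t < M then c t else 0 := by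
  have h : ∀ k, c k * (if k = t then (1:ℝ) else 0) = if k = t then c k else 0 := by
    intro k; split_ifs <;> ring
  rw [Finset.sum_congr rfl fun k _ => h k, Finset.sum_ite_eq' (Finset.range M) t c]
  simp [Finset.mem_range]

lemma sum_ind_succ (M t : ℕ) (c : ℕ → ℝ) :
    (∑ k ∈ Finset.range M, c k * (if k + 1 = t then (1:ℝ) else 0))
      = if 1 ≤ t ∧ t - 1 < M then c (t - 1) else 0 := by
  rcases t with _ | s
  · simp
  · have h : ∀ k, (if k + 1 = s + 1 then (1:ℝ) else 0) = (if k = s then 1 else 0) := by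
      intro k
      refine if_congr ?_ rfl rfl
      omega
    rw [Finset.sum_congr rfl fun k _ => by rw [h k]]
    rw [sum_ind M s c]
    refine if_congr ?_ rfl rfl
    omega

lemma oneD (M p1 q1 t : ℕ) (hp : p1 ≤ M) (hq : q1 ≤ M) (ht : t ≤ M) :
    (∑ k ∈ Finset.range M,
      ((if p1 ≤ k ∧ k < q1 then (1:ℝ) else 0) - (if q1 ≤ k ∧ k < p1 then 1 else 0)) *
        ((if k + 1 = t then (1:ℝ) else 0) - (if k = t then 1 else 0)))
      = (if t = q1 then 1 else 0) - (if t = p1 then 1 else 0) := by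
  set c : ℕ → ℝ := fun k =>
    (if p1 ≤ k ∧ k < q1 then (1:ℝ) else 0) - (if q1 ≤ k ∧ k < p1 then 1 else 0) with hc
  have hsplit : ∀ k, c k * ((if k + 1 = t then (1:ℝ) else 0) - (if k = t then 1 else 0))
      = c k * (if k + 1 = t then (1:ℝ) else 0) - c k * (if k = t then (1:ℝ) else 0) := by
    intro k; ring
  rw [Finset.sum_congr rfl fun k _ => hsplit k, Finset.sum_sub_distrib,
    sum_ind_succ M t c, sum_ind M t c]
  simp only [hc]
  split_ifs <;> (try omega) <;> norm_num

lemma abs_ind_sub (A B C : Prop) [Decidable A] [Decidable B] [Decidable C] (h : ¬(B ∧ C)) :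
    |(if A ∧ B then (1:ℝ) else 0) - (if A ∧ C then 1 else 0)|
      = (if A then (1:ℝ) else 0) * ((if B then 1 else 0) + (if C then 1 else 0)) := by
  split_ifs <;> simp_all

lemma sum_interval (M a b : ℕ) (hb : b ≤ M) :
    (∑ k ∈ Finset.range M, (if a ≤ k ∧ k < b then (1:ℝ) else 0)) = ((b - a : ℕ) : ℝ) := by
  rw [Finset.sum_boole]
  have : (Finset.range M).filter (fun k => a ≤ k ∧ k < b) = Finset.Ico a b := by
    ext k
    simp only [Finset.mem_filter, Finset.mem_range, Finset.mem_Ico]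
    omega
  rw [this, Nat.card_Ico]

lemma abs_cast_sub (a b : ℕ) : |(a:ℝ) - b| = ((a - b : ℕ) : ℝ) + ((b - a : ℕ) : ℝ) := by
  rcases le_total a b with h | h
  · rw [Nat.sub_eq_zero_of_le h, Nat.cast_zero, zero_add, abs_sub_comm,
      abs_of_nonneg (by exact sub_nonneg.mpr (Nat.cast_le.mpr h))]
    push_cast [h]
    ring
  · rw [Nat.sub_eq_zero_of_le h, Nat.cast_zero, add_zero,
      abs_of_nonneg (by exact sub_nonneg.mpr (Nat.cast_le.mpr h))]
    push_cast [h]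
    ring

lemma combine_ind (P1 Q1 T1 P2 Q2 T2 : ℕ) :
    (if P2 = T2 then (1:ℝ) else 0) * ((if T1 = Q1 then 1 else 0) - (if T1 = P1 then 1 else 0))
    + (if Q1 = T1 then 1 else 0) * ((if T2 = Q2 then 1 else 0) - (if T2 = P2 then 1 else 0))
    = (if T1 = Q1 ∧ T2 = Q2 then 1 else 0) - (if T1 = P1 ∧ T2 = P2 then 1 else 0) := by
  split_ifs <;> (try omega) <;> norm_num

def stair (p q : Pos n m) : FlowIdx n m → ℝ :=
  Sum.elim
    (fun e => (if e.2 = p.2 ∧ ((p.1 : ℕ) ≤ (e.1 : ℕ) ∧ (e.1 : ℕ) < (q.1 : ℕ)) then (1:ℝ) else 0)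
      - (if e.2 = p.2 ∧ ((q.1 : ℕ) ≤ (e.1 : ℕ) ∧ (e.1 : ℕ) < (p.1 : ℕ)) then 1 else 0))
    (fun e => (if e.1 = q.1 ∧ ((p.2 : ℕ) ≤ (e.2 : ℕ) ∧ (e.2 : ℕ) < (q.2 : ℕ)) then (1:ℝ) else 0)
      - (if e.1 = q.1 ∧ ((q.2 : ℕ) ≤ (e.2 : ℕ) ∧ (e.2 : ℕ) < (p.2 : ℕ)) then 1 else 0))

lemma stair_div (p q r : Pos n m) :
    (∑ e : FlowIdx n m, stair p q e *
      ((if eHead e = r then (1:ℝ) else 0) - (if eTail e = r then 1 else 0)))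
      = (if r = q then 1 else 0) - (if r = p then 1 else 0) := by
  rw [Fintype.sum_sum_type, Fintype.sum_prod_type, Fintype.sum_prod_type]
  have hv : ∀ (k : Fin (n - 1)) (j' : Fin m),
      stair p q (Sum.inl (k, j')) *
        ((if eHead (Sum.inl (k, j') : FlowIdx n m) = r then (1:ℝ) else 0) -
         (if eTail (Sum.inl (k, j') : FlowIdx n m) = r then 1 else 0))
      = ((if j' = p.2 then (1:ℝ) else 0) * (if j' = r.2 then 1 else 0)) *
        (((if (p.1 : ℕ) ≤ (k : ℕ) ∧ (k : ℕ) < (q.1 : ℕ) then (1:ℝ) else 0)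
          - (if (q.1 : ℕ) ≤ (k : ℕ) ∧ (k : ℕ) < (p.1 : ℕ) then 1 else 0)) *
         ((if (k : ℕ) + 1 = (r.1 : ℕ) then (1:ℝ) else 0)
          - (if (k : ℕ) = (r.1 : ℕ) then 1 else 0))) := by
    intro k j'
    simp only [stair, Sum.elim_inl, eHead, eTail]
    have h1 : (((vhigh k : Fin n), j') = r) ↔ (((k : ℕ) + 1 = (r.1 : ℕ)) ∧ j' = r.2) := by
      rw [Prod.ext_iff]
      show ((vhigh k : Fin n) = r.1 ∧ j' = r.2) ↔ _
      rw [Fin.ext_iff (a := (vhigh k : Fin n)) (b := r.1), vhigh_val]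
    have h2 : (((vlow k : Fin n), j') = r) ↔ (((k : ℕ) = (r.1 : ℕ)) ∧ j' = r.2) := by
      rw [Prod.ext_iff]
      show ((vlow k : Fin n) = r.1 ∧ j' = r.2) ↔ _
      rw [Fin.ext_iff (a := (vlow k : Fin n)) (b := r.1), vlow_val]
    simp only [h1, h2]
    simp only [ind_and]
    ring
  have hh : ∀ (i' : Fin n) (k : Fin (m - 1)),
      stair p q (Sum.inr (i', k)) *
        ((if eHead (Sum.inr (i', k) : FlowIdx n m) = r then (1:ℝ) else 0) -
         (if eTail (Sum.inr (i', k) : FlowIdx n m) = r then 1 else 0))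
      = ((if i' = q.1 then (1:ℝ) else 0) * (if i' = r.1 then 1 else 0)) *
        (((if (p.2 : ℕ) ≤ (k : ℕ) ∧ (k : ℕ) < (q.2 : ℕ) then (1:ℝ) else 0)
          - (if (q.2 : ℕ) ≤ (k : ℕ) ∧ (k : ℕ) < (p.2 : ℕ) then 1 else 0)) *
         ((if (k : ℕ) + 1 = (r.2 : ℕ) then (1:ℝ) else 0)
          - (if (k : ℕ) = (r.2 : ℕ) then 1 else 0))) := by
    intro i' k
    simp only [stair, Sum.elim_inr, eHead, eTail]
    have h1 : ((i', (hhigh k : Fin m)) = r) ↔ (i' = r.1 ∧ ((k : ℕ) + 1 = (r.2 : ℕ))) := by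
      rw [Prod.ext_iff]
      show (i' = r.1 ∧ (hhigh k : Fin m) = r.2) ↔ _
      rw [Fin.ext_iff (a := (hhigh k : Fin m)) (b := r.2), hhigh_val]
    have h2 : ((i', (hlow k : Fin m)) = r) ↔ (i' = r.1 ∧ ((k : ℕ) = (r.2 : ℕ))) := by
      rw [Prod.ext_iff]
      show (i' = r.1 ∧ (hlow k : Fin m) = r.2) ↔ _
      rw [Fin.ext_iff (a := (hlow k : Fin m)) (b := r.2), hlow_val]
    simp only [h1, h2]
    simp only [ind_and]
    ring
  rw [Finset.sum_congr rfl fun k _ => Finset.sum_congr rfl fun j' _ => hv k j']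
  rw [Finset.sum_congr rfl fun i' _ => Finset.sum_congr rfl fun k _ => hh i' k]
  have hfact : ∀ {α β : Type} [Fintype α] [Fintype β] (f : α → ℝ) (g : β → ℝ),
      (∑ b : β, ∑ a : α, f a * g b) = (∑ a : α, f a) * (∑ b : β, g b) := by
    intro α β _ _ f g
    rw [Finset.sum_comm]
    rw [Finset.sum_mul_sum]
  have hfact2 : ∀ {α β : Type} [Fintype α] [Fintype β] (f : α → ℝ) (g : β → ℝ),
      (∑ a : α, ∑ b : β, f a * g b) = (∑ a : α, f a) * (∑ b : β, g b) := by
    intro α β _ _ f g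
    rw [Finset.sum_mul_sum]
  rw [hfact (fun j' : Fin m => (if j' = p.2 then (1:ℝ) else 0) * (if j' = r.2 then 1 else 0))
      (fun k : Fin (n-1) =>
        (((if (p.1 : ℕ) ≤ (k : ℕ) ∧ (k : ℕ) < (q.1 : ℕ) then (1:ℝ) else 0)
          - (if (q.1 : ℕ) ≤ (k : ℕ) ∧ (k : ℕ) < (p.1 : ℕ) then 1 else 0)) *
         ((if (k : ℕ) + 1 = (r.1 : ℕ) then (1:ℝ) else 0)
          - (if (k : ℕ) = (r.1 : ℕ) then 1 else 0))))]
  rw [hfact2 (fun i' : Fin n => (if i' = q.1 then (1:ℝ) else 0) * (if i' = r.1 then 1 else 0))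
      (fun k : Fin (m-1) =>
        (((if (p.2 : ℕ) ≤ (k : ℕ) ∧ (k : ℕ) < (q.2 : ℕ) then (1:ℝ) else 0)
          - (if (q.2 : ℕ) ≤ (k : ℕ) ∧ (k : ℕ) < (p.2 : ℕ) then 1 else 0)) *
         ((if (k : ℕ) + 1 = (r.2 : ℕ) then (1:ℝ) else 0)
          - (if (k : ℕ) = (r.2 : ℕ) then 1 else 0))))]
  rw [sum_ind_ind (p.2) (r.2), sum_ind_ind (q.1) (r.1)]
  rw [Fin.sum_univ_eq_sum_range (fun k : ℕ =>
        (((if (p.1 : ℕ) ≤ k ∧ k < (q.1 : ℕ) then (1:ℝ) else 0)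
          - (if (q.1 : ℕ) ≤ k ∧ k < (p.1 : ℕ) then 1 else 0)) *
         ((if k + 1 = (r.1 : ℕ) then (1:ℝ) else 0)
          - (if k = (r.1 : ℕ) then 1 else 0)))) (n-1)]
  rw [Fin.sum_univ_eq_sum_range (fun k : ℕ =>
        (((if (p.2 : ℕ) ≤ k ∧ k < (q.2 : ℕ) then (1:ℝ) else 0)
          - (if (q.2 : ℕ) ≤ k ∧ k < (p.2 : ℕ) then 1 else 0)) *
         ((if k + 1 = (r.2 : ℕ) then (1:ℝ) else 0)
          - (if k = (r.2 : ℕ) then 1 else 0)))) (m-1)]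
  rw [oneD (n-1) (p.1 : ℕ) (q.1 : ℕ) (r.1 : ℕ)
      (by have := p.1.isLt; omega) (by have := q.1.isLt; omega) (by have := r.1.isLt; omega)]
  rw [oneD (m-1) (p.2 : ℕ) (q.2 : ℕ) (r.2 : ℕ)
      (by have := p.2.isLt; omega) (by have := q.2.isLt; omega) (by have := r.2.isLt; omega)]
  rw [if_congr (Fin.ext_iff (a := p.2) (b := r.2)) rfl rfl,
    if_congr (Fin.ext_iff (a := q.1) (b := r.1)) rfl rfl]
  have hq' : (r = q) ↔ (((r.1 : ℕ) = (q.1 : ℕ)) ∧ ((r.2 : ℕ) = (q.2 : ℕ))) := by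
    rw [Prod.ext_iff, Fin.ext_iff, Fin.ext_iff]
  have hp' : (r = p) ↔ (((r.1 : ℕ) = (p.1 : ℕ)) ∧ ((r.2 : ℕ) = (p.2 : ℕ))) := by
    rw [Prod.ext_iff, Fin.ext_iff, Fin.ext_iff]
  rw [if_congr hq' rfl rfl, if_congr hp' rfl rfl]
  exact combine_ind (p.1 : ℕ) (q.1 : ℕ) (r.1 : ℕ) (p.2 : ℕ) (q.2 : ℕ) (r.2 : ℕ)

lemma stair_norm (p q : Pos n m) :
    (∑ e : FlowIdx n m, |stair p q e|) = groundL1 p q := by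
  rw [Fintype.sum_sum_type, Fintype.sum_prod_type, Fintype.sum_prod_type]
  have hv : ∀ (k : Fin (n - 1)) (j' : Fin m),
      |stair p q (Sum.inl (k, j'))|
      = (if j' = p.2 then (1:ℝ) else 0) *
        ((if (p.1 : ℕ) ≤ (k : ℕ) ∧ (k : ℕ) < (q.1 : ℕ) then (1:ℝ) else 0)
         + (if (q.1 : ℕ) ≤ (k : ℕ) ∧ (k : ℕ) < (p.1 : ℕ) then 1 else 0)) := by
    intro k j'
    simp only [stair, Sum.elim_inl]
    exact abs_ind_sub _ _ _ (by omega)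
  have hh : ∀ (i' : Fin n) (k : Fin (m - 1)),
      |stair p q (Sum.inr (i', k))|
      = (if i' = q.1 then (1:ℝ) else 0) *
        ((if (p.2 : ℕ) ≤ (k : ℕ) ∧ (k : ℕ) < (q.2 : ℕ) then (1:ℝ) else 0)
         + (if (q.2 : ℕ) ≤ (k : ℕ) ∧ (k : ℕ) < (p.2 : ℕ) then 1 else 0)) := by
    intro i' k
    simp only [stair, Sum.elim_inr]
    exact abs_ind_sub _ _ _ (by omega)
  rw [Finset.sum_congr rfl fun k _ => Finset.sum_congr rfl fun j' _ => hv k j']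
  rw [Finset.sum_congr rfl fun i' _ => Finset.sum_congr rfl fun k _ => hh i' k]
  have hjsum : ∀ c : ℝ, (∑ j' : Fin m, (if j' = p.2 then (1:ℝ) else 0) * c) = c := by
    intro c
    rw [← Finset.sum_mul]
    rw [Finset.sum_ite_eq' Finset.univ p.2 (fun _ => (1:ℝ))]
    simp
  have hisum : ∀ c : ℝ, (∑ i' : Fin n, (if i' = q.1 then (1:ℝ) else 0) * c) = c := by
    intro c
    rw [← Finset.sum_mul]
    rw [Finset.sum_ite_eq' Finset.univ q.1 (fun _ => (1:ℝ))]
    simp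
  have h1 : (∑ k : Fin (n-1), ∑ j' : Fin m, (if j' = p.2 then (1:ℝ) else 0) *
      ((if (p.1 : ℕ) ≤ (k : ℕ) ∧ (k : ℕ) < (q.1 : ℕ) then (1:ℝ) else 0)
       + (if (q.1 : ℕ) ≤ (k : ℕ) ∧ (k : ℕ) < (p.1 : ℕ) then 1 else 0)))
      = |((p.1 : ℕ) : ℝ) - ((q.1 : ℕ) : ℝ)| := by
    rw [Finset.sum_congr rfl fun k _ => hjsum _]
    rw [Fin.sum_univ_eq_sum_range (fun k : ℕ =>
        ((if (p.1 : ℕ) ≤ k ∧ k < (q.1 : ℕ) then (1:ℝ) else 0)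
         + (if (q.1 : ℕ) ≤ k ∧ k < (p.1 : ℕ) then 1 else 0))) (n-1)]
    rw [Finset.sum_add_distrib,
      sum_interval (n-1) (p.1 : ℕ) (q.1 : ℕ) (by have := q.1.isLt; omega),
      sum_interval (n-1) (q.1 : ℕ) (p.1 : ℕ) (by have := p.1.isLt; omega),
      abs_cast_sub (p.1 : ℕ) (q.1 : ℕ)]
    ring
  have h2 : (∑ i' : Fin n, ∑ k : Fin (m-1), (if i' = q.1 then (1:ℝ) else 0) *
      ((if (p.2 : ℕ) ≤ (k : ℕ) ∧ (k : ℕ) < (q.2 : ℕ) then (1:ℝ) else 0)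
       + (if (q.2 : ℕ) ≤ (k : ℕ) ∧ (k : ℕ) < (p.2 : ℕ) then 1 else 0)))
      = |((p.2 : ℕ) : ℝ) - ((q.2 : ℕ) : ℝ)| := by
    rw [Finset.sum_comm]
    rw [Finset.sum_congr rfl fun k _ => hisum _]
    rw [Fin.sum_univ_eq_sum_range (fun k : ℕ =>
        ((if (p.2 : ℕ) ≤ k ∧ k < (q.2 : ℕ) then (1:ℝ) else 0)
         + (if (q.2 : ℕ) ≤ k ∧ k < (p.2 : ℕ) then 1 else 0))) (m-1)]
    rw [Finset.sum_add_distrib,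
      sum_interval (m-1) (p.2 : ℕ) (q.2 : ℕ) (by have := q.2.isLt; omega),
      sum_interval (m-1) (q.2 : ℕ) (p.2 : ℕ) (by have := p.2.isLt; omega),
      abs_cast_sub (p.2 : ℕ) (q.2 : ℕ)]
    ring
  rw [h1, h2]
  rfl



lemma groundL1_self (p : Pos n m) : groundL1 p p = 0 := by
  simp [groundL1]

lemma groundL1_nonneg (p q : Pos n m) : 0 ≤ groundL1 p q :=
  add_nonneg (abs_nonneg _) (abs_nonneg _)

lemma groundL1_tri (a b c : Pos n m) : groundL1 a c ≤ groundL1 a b + groundL1 b c := by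
  unfold groundL1
  have h1 := abs_sub_le ((a.1 : ℕ) : ℝ) ((b.1 : ℕ) : ℝ) ((c.1 : ℕ) : ℝ)
  have h2 := abs_sub_le ((a.2 : ℕ) : ℝ) ((b.2 : ℕ) : ℝ) ((c.2 : ℕ) : ℝ)
  linarith

lemma eVal_of_fun (δ : FlowIdx n m → ℝ) :
    eVal (fun i j => δ (Sum.inl (i, j))) (fun i j => δ (Sum.inr (i, j))) = δ := by
  funext e
  rcases e with ⟨k, j⟩ | ⟨i, k⟩ <;> rfl

lemma flowNorm_eval (δv : Fin (n - 1) → Fin m → ℝ) (δh : Fin n → Fin (m - 1) → ℝ) :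
    flowNorm δv δh = ∑ e : FlowIdx n m, |eVal δv δh e| := by
  rw [Fintype.sum_sum_type, Fintype.sum_prod_type, Fintype.sum_prod_type]
  rfl

lemma sum_sum_ite_pair (c : Pos n m → Pos n m → ℝ) (a b : Pos n m) :
    (∑ r : Pos n m, ∑ s : Pos n m, if a = r ∧ b = s then c r s else 0) = c a b := by
  have hpt : ∀ r s : Pos n m, (if a = r ∧ b = s then c r s else 0)
      = if a = r then (if b = s then c r s else 0) else 0 := by
    intro r s
    rw [ite_and]
  rw [Finset.sum_congr rfl fun r _ => Finset.sum_congr rfl fun s _ => hpt r s]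
  have hin : ∀ r : Pos n m, (∑ s : Pos n m, if a = r then (if b = s then c r s else 0) else 0)
      = if a = r then c r b else 0 := by
    intro r
    by_cases hr : a = r
    · simp only [if_pos hr]
      rw [Finset.sum_ite_eq Finset.univ b (fun s => c r s)]
      simp
    · simp [hr]
  rw [Finset.sum_congr rfl fun r _ => hin r,
    Finset.sum_ite_eq Finset.univ a (fun r => c r b)]
  simp

lemma max_sub_max_neg (a : ℝ) : max a 0 - max (-a) 0 = a := by
  rcases le_total a 0 with h | h
  · rw [max_eq_right h, max_eq_left (neg_nonneg.mpr h)]; ring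
  · rw [max_eq_left h, max_eq_right (neg_nonpos.mpr h)]; ring

lemma max_add_max_neg (a : ℝ) : max a 0 + max (-a) 0 = |a| := by
  rcases le_total a 0 with h | h
  · rw [max_eq_right h, max_eq_left (neg_nonneg.mpr h), abs_of_nonpos h]; ring
  · rw [max_eq_left h, max_eq_right (neg_nonpos.mpr h), abs_of_nonneg h]; ring

lemma d_tail_head (e : FlowIdx n m) : groundL1 (eTail e) (eHead e) = 1 := by
  rcases e with ⟨k, j⟩ | ⟨i, k⟩
  · show groundL1 (vlow k, j) (vhigh k, j) = 1
    unfold groundL1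
    simp only [vlow_val, vhigh_val]
    push_cast
    rw [sub_self, abs_zero, add_zero,
      show ((k : ℕ) : ℝ) - (((k : ℕ) : ℝ) + 1) = -1 by ring, abs_neg, abs_one]
  · show groundL1 (i, hlow k) (i, hhigh k) = 1
    unfold groundL1
    simp only [hlow_val, hhigh_val]
    push_cast
    rw [sub_self, abs_zero, zero_add,
      show ((k : ℕ) : ℝ) - (((k : ℕ) : ℝ) + 1) = -1 by ring, abs_neg, abs_one]

lemma d_head_tail (e : FlowIdx n m) : groundL1 (eHead e) (eTail e) = 1 := by
  rcases e with ⟨k, j⟩ | ⟨i, k⟩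
  · show groundL1 (vhigh k, j) (vlow k, j) = 1
    unfold groundL1
    simp only [vlow_val, vhigh_val]
    push_cast
    rw [sub_self, abs_zero, add_zero,
      show (((k : ℕ) : ℝ) + 1) - ((k : ℕ) : ℝ) = 1 by ring, abs_one]
  · show groundL1 (i, hhigh k) (i, hlow k) = 1
    unfold groundL1
    simp only [hlow_val, hhigh_val]
    push_cast
    rw [sub_self, abs_zero, zero_add,
      show (((k : ℕ) : ℝ) + 1) - ((k : ℕ) : ℝ) = 1 by ring, abs_one]

/-- From a coupling, construct a flow plan of no greater norm. -/
lemma coupling_to_flow (y y' : Fin n → Fin m → ℝ) (P : Pos n m → Pos n m → ℝ)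
    (hP : Couple (fun p => y p.1 p.2) (fun p => y' p.1 p.2) P) :
    ∃ (δv : Fin (n - 1) → Fin m → ℝ) (δh : Fin n → Fin (m - 1) → ℝ),
      applyFlow y δv δh = y' ∧ flowNorm δv δh ≤ tcost groundL1 P := by
  obtain ⟨hPn, hPr, hPc⟩ := hP
  set δ : FlowIdx n m → ℝ := fun e => ∑ p : Pos n m, ∑ q : Pos n m, P p q * stair p q e with hδ
  have heval : eVal (fun i j => δ (Sum.inl (i, j))) (fun i j => δ (Sum.inr (i, j))) = δ :=
    eVal_of_fun δ
  refine ⟨fun i j => δ (Sum.inl (i, j)), fun i j => δ (Sum.inr (i, j)), ?_, ?_⟩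
  · funext i j
    rw [applyFlow_edges, heval]
    set r : Pos n m := (i, j) with hr
    set w : FlowIdx n m → ℝ := fun e =>
      (if eHead e = r then (1 : ℝ) else 0) - (if eTail e = r then 1 else 0) with hw
    have hswap : (∑ e : FlowIdx n m, δ e * w e)
        = ∑ p : Pos n m, ∑ q : Pos n m, P p q * (∑ e : FlowIdx n m, stair p q e * w e) := by
      calc (∑ e : FlowIdx n m, δ e * w e)
          = ∑ e : FlowIdx n m, ∑ p : Pos n m, ∑ q : Pos n m, P p q * stair p q e * w e := by
            refine Finset.sum_congr rfl fun e _ => ?_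
            simp only [hδ]
            rw [Finset.sum_mul]
            exact Finset.sum_congr rfl fun p _ => by rw [Finset.sum_mul]
        _ = ∑ p : Pos n m, ∑ e : FlowIdx n m, ∑ q : Pos n m, P p q * stair p q e * w e :=
            Finset.sum_comm
        _ = ∑ p : Pos n m, ∑ q : Pos n m, ∑ e : FlowIdx n m, P p q * stair p q e * w e :=
            Finset.sum_congr rfl fun p _ => Finset.sum_comm
        _ = ∑ p : Pos n m, ∑ q : Pos n m, P p q * (∑ e : FlowIdx n m, stair p q e * w e) := by
            refine Finset.sum_congr rfl fun p _ => Finset.sum_congr rfl fun q _ => ?_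
            rw [Finset.mul_sum]
            exact Finset.sum_congr rfl fun e _ => by ring
    rw [hswap]
    have hsd : ∀ p q : Pos n m, (∑ e : FlowIdx n m, stair p q e * w e)
        = (if r = q then (1:ℝ) else 0) - (if r = p then 1 else 0) := fun p q => stair_div p q r
    rw [Finset.sum_congr rfl fun p _ => Finset.sum_congr rfl fun q _ => by rw [hsd p q]]
    have hfinal : (∑ p : Pos n m, ∑ q : Pos n m,
        P p q * ((if r = q then (1:ℝ) else 0) - (if r = p then 1 else 0)))
        = y' r.1 r.2 - y r.1 r.2 := by
      have hterm : ∀ p q : Pos n m,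
          P p q * ((if r = q then (1:ℝ) else 0) - (if r = p then 1 else 0))
          = (if r = q then P p q else 0) - (if r = p then P p q else 0) := by
        intro p q; split_ifs <;> ring
      rw [Finset.sum_congr rfl fun p _ => Finset.sum_congr rfl fun q _ => hterm p q]
      rw [Finset.sum_congr rfl fun p _ => Finset.sum_sub_distrib _ _, Finset.sum_sub_distrib]
      have h1 : (∑ p : Pos n m, ∑ q : Pos n m, if r = q then P p q else 0) = y' r.1 r.2 := by
        rw [Finset.sum_congr rfl fun p _ => Finset.sum_ite_eq Finset.univ r (fun q => P p q)]
        simp only [Finset.mem_univ, if_true]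
        exact hPc r
      have h2 : (∑ p : Pos n m, ∑ q : Pos n m, if r = p then P p q else 0) = y r.1 r.2 := by
        have : ∀ p : Pos n m, (∑ q : Pos n m, if r = p then P p q else 0)
            = if r = p then (∑ q : Pos n m, P p q) else 0 := by
          intro p; by_cases hp : r = p <;> simp [hp]
        rw [Finset.sum_congr rfl fun p _ => this p,
          Finset.sum_ite_eq Finset.univ r (fun p => ∑ q : Pos n m, P p q)]
        simp only [Finset.mem_univ, if_true]
        exact hPr r
      rw [h1, h2]
    rw [hfinal]
    show y i j + (y' r.1 r.2 - y r.1 r.2) = y' i j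
    ring
  · rw [flowNorm_eval, heval]
    have hbound : ∀ e : FlowIdx n m,
        |δ e| ≤ ∑ p : Pos n m, ∑ q : Pos n m, P p q * |stair p q e| := by
      intro e
      calc |δ e| ≤ ∑ p : Pos n m, |∑ q : Pos n m, P p q * stair p q e| :=
            Finset.abs_sum_le_sum_abs _ _
        _ ≤ ∑ p : Pos n m, ∑ q : Pos n m, |P p q * stair p q e| :=
            Finset.sum_le_sum fun p _ => Finset.abs_sum_le_sum_abs _ _
        _ = ∑ p : Pos n m, ∑ q : Pos n m, P p q * |stair p q e| := by
            refine Finset.sum_congr rfl fun p _ => Finset.sum_congr rfl fun q _ => ?_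
            rw [abs_mul, abs_of_nonneg (hPn p q)]
    calc (∑ e : FlowIdx n m, |δ e|)
        ≤ ∑ e : FlowIdx n m, ∑ p : Pos n m, ∑ q : Pos n m, P p q * |stair p q e| :=
          Finset.sum_le_sum fun e _ => hbound e
      _ = ∑ p : Pos n m, ∑ q : Pos n m, ∑ e : FlowIdx n m, P p q * |stair p q e| := by
          rw [Finset.sum_comm]
          exact Finset.sum_congr rfl fun p _ => Finset.sum_comm
      _ = ∑ p : Pos n m, ∑ q : Pos n m, P p q * groundL1 p q := by
          refine Finset.sum_congr rfl fun p _ => Finset.sum_congr rfl fun q _ => ?_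
          rw [← Finset.mul_sum, stair_norm]
      _ = tcost groundL1 P := rfl

/-- From a flow plan, construct a coupling of no greater cost. -/
lemma flow_coupling_grid (y y' : Fin n → Fin m → ℝ) (hy : ∀ i j, 0 ≤ y i j)
    (hy' : ∀ i j, 0 ≤ y' i j) (δv : Fin (n - 1) → Fin m → ℝ) (δh : Fin n → Fin (m - 1) → ℝ)
    (happ : applyFlow y δv δh = y') :
    ∃ P, Couple (fun p => y p.1 p.2) (fun p => y' p.1 p.2) P ∧
      tcost groundL1 P ≤ flowNorm δv δh := by
  set v : FlowIdx n m → ℝ := eVal δv δh with hv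
  set Fm : Pos n m → Pos n m → ℝ := fun r s =>
    (∑ e : FlowIdx n m, if eTail e = r ∧ eHead e = s then max (v e) 0 else 0)
    + (∑ e : FlowIdx n m, if eTail e = s ∧ eHead e = r then max (-(v e)) 0 else 0) with hFm
  have hFnn : ∀ r s, 0 ≤ Fm r s := by
    intro r s
    simp only [hFm]
    refine add_nonneg (Finset.sum_nonneg fun e _ => ?_) (Finset.sum_nonneg fun e _ => ?_) <;>
      · split_ifs
        · exact le_max_right _ _
        · exact le_refl 0
  have hpt1 : ∀ (e : FlowIdx n m) (r : Pos n m) (c : ℝ),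
      (∑ s : Pos n m, if eTail e = s ∧ eHead e = r then c else 0)
        = if eHead e = r then c else 0 := by
    intro e r c
    have h : ∀ s, (if eTail e = s ∧ eHead e = r then c else 0)
        = if eTail e = s then (if eHead e = r then c else 0) else 0 := fun s => ite_and _ _ _ _
    rw [Finset.sum_congr rfl fun s _ => h s,
      Finset.sum_ite_eq Finset.univ (eTail e) (fun _ => if eHead e = r then c else 0)]
    simp
  have hpt2 : ∀ (e : FlowIdx n m) (r : Pos n m) (c : ℝ),
      (∑ s : Pos n m, if eTail e = r ∧ eHead e = s then c else 0)
        = if eTail e = r then c else 0 := by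
    intro e r c
    have h : ∀ s, (if eTail e = r ∧ eHead e = s then c else 0)
        = if eHead e = s then (if eTail e = r then c else 0) else 0 := by
      intro s
      rw [if_congr (and_comm) rfl rfl, ite_and]
    rw [Finset.sum_congr rfl fun s _ => h s,
      Finset.sum_ite_eq Finset.univ (eHead e) (fun _ => if eTail e = r then c else 0)]
    simp
  have hin : ∀ r : Pos n m, (∑ s : Pos n m, Fm s r)
      = (∑ e : FlowIdx n m, if eHead e = r then max (v e) 0 else 0)
        + (∑ e : FlowIdx n m, if eTail e = r then max (-(v e)) 0 else 0) := by
    intro r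
    simp only [hFm]
    rw [Finset.sum_add_distrib]
    congr 1
    · rw [Finset.sum_comm]
      exact Finset.sum_congr rfl fun e _ => hpt1 e r _
    · rw [Finset.sum_comm]
      exact Finset.sum_congr rfl fun e _ => hpt2 e r _
  have hout : ∀ r : Pos n m, (∑ s : Pos n m, Fm r s)
      = (∑ e : FlowIdx n m, if eTail e = r then max (v e) 0 else 0)
        + (∑ e : FlowIdx n m, if eHead e = r then max (-(v e)) 0 else 0) := by
    intro r
    simp only [hFm]
    rw [Finset.sum_add_distrib]
    congr 1
    · rw [Finset.sum_comm]
      exact Finset.sum_congr rfl fun e _ => hpt2 e r _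
    · rw [Finset.sum_comm]
      exact Finset.sum_congr rfl fun e _ => hpt1 e r _
  have hdivr : ∀ r : Pos n m, (fun p : Pos n m => y' p.1 p.2) r
      = (fun p : Pos n m => y p.1 p.2) r + (∑ s : Pos n m, Fm s r) - (∑ s : Pos n m, Fm r s) := by
    intro r
    have happ' : y' r.1 r.2 = y r.1 r.2 + ∑ e : FlowIdx n m, v e *
        ((if eHead e = r then (1:ℝ) else 0) - (if eTail e = r then 1 else 0)) := by
      conv_lhs => rw [← happ]
      exact applyFlow_edges y δv δh r.1 r.2
    have hterm : ∀ e : FlowIdx n m, v e *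
        ((if eHead e = r then (1:ℝ) else 0) - (if eTail e = r then 1 else 0))
        = ((if eHead e = r then max (v e) 0 else 0) + (if eTail e = r then max (-(v e)) 0 else 0))
          - ((if eTail e = r then max (v e) 0 else 0)
            + (if eHead e = r then max (-(v e)) 0 else 0)) := by
      intro e
      have hm := max_sub_max_neg (v e)
      by_cases h1 : eHead e = r <;> by_cases h2 : eTail e = r <;> simp [h1, h2] <;> linarith
    show y' r.1 r.2 = y r.1 r.2 + (∑ s : Pos n m, Fm s r) - (∑ s : Pos n m, Fm r s)
    rw [hin, hout, happ', Finset.sum_congr rfl fun e _ => hterm e, Finset.sum_sub_distrib,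
      Finset.sum_add_distrib, Finset.sum_add_distrib]
    ring
  obtain ⟨P, hP, hPc⟩ := flow_to_coupling groundL1 groundL1_self groundL1_nonneg groundL1_tri
    ((Finset.univ.filter fun e : Pos n m × Pos n m => Fm e.1 e.2 ≠ 0).card) Fm (le_refl _)
    hFnn (fun p => y p.1 p.2) (fun p => y' p.1 p.2) (fun p => hy p.1 p.2)
    (fun p => hy' p.1 p.2) hdivr
  refine ⟨P, hP, hPc.trans (le_of_eq ?_)⟩
  have hterm2 : ∀ r s : Pos n m, Fm r s * groundL1 r s
      = (∑ e : FlowIdx n m, if eTail e = r ∧ eHead e = s then max (v e) 0 * groundL1 r s else 0)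
        + (∑ e : FlowIdx n m,
            if eHead e = r ∧ eTail e = s then max (-(v e)) 0 * groundL1 r s else 0) := by
    intro r s
    simp only [hFm]
    rw [add_mul, Finset.sum_mul, Finset.sum_mul]
    congr 1
    · refine Finset.sum_congr rfl fun e _ => ?_
      split_ifs <;> ring
    · refine Finset.sum_congr rfl fun e _ => ?_
      rw [if_congr (and_comm) rfl rfl]
      split_ifs <;> ring
  rw [Finset.sum_congr rfl fun r _ => Finset.sum_congr rfl fun s _ => hterm2 r s]
  rw [Finset.sum_congr rfl fun r _ => Finset.sum_add_distrib, Finset.sum_add_distrib]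
  have h1 : (∑ r : Pos n m, ∑ s : Pos n m, ∑ e : FlowIdx n m,
      if eTail e = r ∧ eHead e = s then max (v e) 0 * groundL1 r s else 0)
      = ∑ e : FlowIdx n m, max (v e) 0 := by
    rw [Finset.sum_congr rfl fun r (_ : r ∈ Finset.univ) => Finset.sum_comm, Finset.sum_comm]
    refine Finset.sum_congr rfl fun e _ => ?_
    rw [sum_sum_ite_pair (fun r s => max (v e) 0 * groundL1 r s) (eTail e) (eHead e),
      d_tail_head, mul_one]
  have h2 : (∑ r : Pos n m, ∑ s : Pos n m, ∑ e : FlowIdx n m,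
      if eHead e = r ∧ eTail e = s then max (-(v e)) 0 * groundL1 r s else 0)
      = ∑ e : FlowIdx n m, max (-(v e)) 0 := by
    rw [Finset.sum_congr rfl fun r (_ : r ∈ Finset.univ) => Finset.sum_comm, Finset.sum_comm]
    refine Finset.sum_congr rfl fun e _ => ?_
    rw [sum_sum_ite_pair (fun r s => max (-(v e)) 0 * groundL1 r s) (eHead e) (eTail e),
      d_head_tail, mul_one]
  rw [h1, h2, ← Finset.sum_add_distrib, flowNorm_eval]
  exact Finset.sum_congr rfl fun e _ => max_add_max_neg (v e)

lemma flowNorm_nonneg (δv : Fin (n - 1) → Fin m → ℝ) (δh : Fin n → Fin (m - 1) → ℝ) :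
    0 ≤ flowNorm δv δh := by
  rw [flowNorm_eval]
  exact Finset.sum_nonneg fun e _ => abs_nonneg _

lemma channel_eq (y y' : Fin n → Fin m → ℝ) (hy : ∀ i j, 0 ≤ y i j) (hy' : ∀ i j, 0 ≤ y' i j)
    (hm : (∑ i, ∑ j, y i j) = ∑ i, ∑ j, y' i j) :
    sInf {c | ∃ P, Couple (fun p : Pos n m => y p.1 p.2) (fun p => y' p.1 p.2) P ∧
        tcost groundL1 P = c}
      = sInf {c | ∃ (δv : Fin (n - 1) → Fin m → ℝ) (δh : Fin n → Fin (m - 1) → ℝ),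
          applyFlow y δv δh = y' ∧ flowNorm δv δh = c} := by
  have hmass : (∑ p : Pos n m, y p.1 p.2) = ∑ p : Pos n m, y' p.1 p.2 := by
    rw [Fintype.sum_prod_type, Fintype.sum_prod_type]
    exact hm
  have hAne : ∃ c, ∃ P, Couple (fun p : Pos n m => y p.1 p.2)
      (fun p : Pos n m => y' p.1 p.2) P ∧ tcost groundL1 P = c := by
    obtain ⟨P, hP⟩ := couple_exists (fun p : Pos n m => hy p.1 p.2)
      (fun p : Pos n m => hy' p.1 p.2) hmass
    exact ⟨_, P, hP, rfl⟩
  have hBne : ∃ c, ∃ (δv : Fin (n - 1) → Fin m → ℝ) (δh : Fin n → Fin (m - 1) → ℝ),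
      applyFlow y δv δh = y' ∧ flowNorm δv δh = c := by
    obtain ⟨c, P, hP, _⟩ := hAne
    obtain ⟨δv, δh, h1, _⟩ := coupling_to_flow y y' P hP
    exact ⟨_, δv, δh, h1, rfl⟩
  have hAbdd : BddBelow {c | ∃ P, Couple (fun p : Pos n m => y p.1 p.2)
      (fun p => y' p.1 p.2) P ∧ tcost groundL1 P = c} := by
    refine ⟨0, fun c hc => ?_⟩
    obtain ⟨P, hP, rfl⟩ := hc
    exact tcost_nonneg groundL1_nonneg hP.1
  have hBbdd : BddBelow {c | ∃ (δv : Fin (n - 1) → Fin m → ℝ) (δh : Fin n → Fin (m - 1) → ℝ),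
      applyFlow y δv δh = y' ∧ flowNorm δv δh = c} := by
    refine ⟨0, fun c hc => ?_⟩
    obtain ⟨δv, δh, _, rfl⟩ := hc
    exact flowNorm_nonneg δv δh
  apply le_antisymm
  · apply le_csInf hBne
    rintro c ⟨δv, δh, h1, rfl⟩
    obtain ⟨P, hP, hc⟩ := flow_coupling_grid y y' hy hy' δv δh h1
    exact (csInf_le hAbdd ⟨P, hP, rfl⟩).trans hc
  · apply le_csInf hAne
    rintro c ⟨P, hP, rfl⟩
    obtain ⟨δv, δh, h1, hc⟩ := coupling_to_flow y y' P hP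
    exact (csInf_le hBbdd ⟨δv, δh, h1, rfl⟩).trans hc

end Grid
end S14


/-- For three-channel images `x, x̃` with nonnegative
entries, total mass one, and equal per-channel masses, the channel-restricted
1-Wasserstein distance equals the sum over channels of the minimum flow-plan
`L1` norm: `W₁ʳᵉˢ(x, x̃) = Σ_K min{‖δᴷ‖₁ : Δ(xᴷ, δᴷ) = x̃ᴷ}`. -/
theorem W1res_eq_sum_min_flowNorm {n m : ℕ}
    (x xt : Fin 3 → Fin n → Fin m → ℝ)
    (hx_nonneg : ∀ K i j, 0 ≤ x K i j) (hxt_nonneg : ∀ K i j, 0 ≤ xt K i j)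
    (hx_sum : (∑ K, ∑ i, ∑ j, x K i j) = 1)
    (hxt_sum : (∑ K, ∑ i, ∑ j, xt K i j) = 1)
    (hmass : ∀ K, (∑ i, ∑ j, x K i j) = ∑ i, ∑ j, xt K i j) :
    W1res x xt =
      ∑ K : Fin 3,
        sInf {c | ∃ (δv : Fin (n - 1) → Fin m → ℝ)
          (δh : Fin n → Fin (m - 1) → ℝ),
          applyFlow (x K) δv δh = xt K ∧ flowNorm δv δh = c} := by
  classical
  have key : W1res x xt = ∑ K : Fin 3,
      sInf {c | ∃ P, S14.Couple (fun p : Pos n m => x K p.1 p.2)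
        (fun p : Pos n m => xt K p.1 p.2) P ∧ S14.tcost groundL1 P = c} := by
    -- notation
    set AK : Fin 3 → Set ℝ := fun K => {c | ∃ P, S14.Couple (fun p : Pos n m => x K p.1 p.2)
        (fun p : Pos n m => xt K p.1 p.2) P ∧ S14.tcost groundL1 P = c} with hAK
    have hmassP : ∀ K, (∑ p : Pos n m, x K p.1 p.2) = ∑ p : Pos n m, xt K p.1 p.2 := by
      intro K
      rw [Fintype.sum_prod_type, Fintype.sum_prod_type]
      exact hmass K
    have hAKne : ∀ K, (AK K).Nonempty := by
      intro K
      obtain ⟨P, hP⟩ := S14.couple_exists (fun p : Pos n m => hx_nonneg K p.1 p.2)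
        (fun p : Pos n m => hxt_nonneg K p.1 p.2) (hmassP K)
      exact ⟨_, P, hP, rfl⟩
    have hAKbdd : ∀ K, BddBelow (AK K) := by
      intro K
      refine ⟨0, fun c hc => ?_⟩
      obtain ⟨P, hP, rfl⟩ := hc
      exact S14.tcost_nonneg S14.groundL1_nonneg hP.1
    -- restriction of a channel coupling
    have hrestrict : ∀ P, IsCouplingC x xt P → ∀ K : Fin 3,
        S14.Couple (fun p : Pos n m => x K p.1 p.2) (fun p => xt K p.1 p.2)
          (fun p q => P (K, p) (K, q)) := by
      rintro P ⟨hn, hr, hc, hz⟩ K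
      refine ⟨fun p q => hn _ _, fun p => ?_, fun q => ?_⟩
      · have h := hr (K, p)
        rw [Fintype.sum_prod_type] at h
        have h2 : (∑ K' : Fin 3, ∑ q : Pos n m, P (K, p) (K', q))
            = ∑ q : Pos n m, P (K, p) (K, q) :=
          Finset.sum_eq_single_of_mem K (Finset.mem_univ K) fun K' _ hne =>
            Finset.sum_eq_zero fun q _ => hz (K, p) (K', q) (Ne.symm hne)
        exact h2.symm.trans h
      · have h := hc (K, q)
        rw [Fintype.sum_prod_type] at h
        have h2 : (∑ K' : Fin 3, ∑ p : Pos n m, P (K', p) (K, q))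
            = ∑ p : Pos n m, P (K, p) (K, q) :=
          Finset.sum_eq_single_of_mem K (Finset.mem_univ K) fun K' _ hne =>
            Finset.sum_eq_zero fun p _ => hz (K', p) (K, q) hne
        exact h2.symm.trans h
    have hcost_split : ∀ P, IsCouplingC x xt P →
        (∑ p : Fin 3 × Pos n m, ∑ q : Fin 3 × Pos n m, P p q * groundL1 p.2 q.2)
        = ∑ K : Fin 3, S14.tcost groundL1 (fun p q => P (K, p) (K, q)) := by
      rintro P ⟨hn, hr, hc, hz⟩
      rw [Fintype.sum_prod_type]
      refine Finset.sum_congr rfl fun K _ => ?_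
      refine Finset.sum_congr rfl fun p _ => ?_
      rw [Fintype.sum_prod_type]
      exact Finset.sum_eq_single_of_mem K (Finset.mem_univ K) fun K' _ hne =>
        Finset.sum_eq_zero fun q _ => by
          rw [hz (K, p) (K', q) (Ne.symm hne), zero_mul]
    -- combination of per-channel couplings
    have hcombine : ∀ (Pc : Fin 3 → Pos n m → Pos n m → ℝ),
        (∀ K, S14.Couple (fun p : Pos n m => x K p.1 p.2) (fun p : Pos n m => xt K p.1 p.2) (Pc K)) →
        IsCouplingC x xt (fun a b => if a.1 = b.1 then Pc a.1 a.2 b.2 else 0) ∧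
        (∑ a : Fin 3 × Pos n m, ∑ b : Fin 3 × Pos n m,
          (if a.1 = b.1 then Pc a.1 a.2 b.2 else 0) * groundL1 a.2 b.2)
          = ∑ K : Fin 3, S14.tcost groundL1 (Pc K) := by
      intro Pc hPc
      constructor
      · refine ⟨fun a b => ?_, fun a => ?_, fun b => ?_, fun a b hab => if_neg hab⟩
        · dsimp only
          split_ifs
          · exact (hPc _).1 _ _
          · exact le_refl 0
        · dsimp only
          rw [Fintype.sum_prod_type]
          have hin : ∀ K' : Fin 3, (∑ q : Pos n m, if a.1 = K' then Pc a.1 a.2 q else 0)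
              = if a.1 = K' then (∑ q : Pos n m, Pc a.1 a.2 q) else 0 := by
            intro K'
            by_cases h : a.1 = K' <;> simp [h]
          rw [Finset.sum_congr rfl fun K' _ => hin K',
            Finset.sum_ite_eq Finset.univ a.1 (fun _ => ∑ q : Pos n m, Pc a.1 a.2 q)]
          simp only [Finset.mem_univ, if_true]
          exact (hPc a.1).2.1 a.2
        · dsimp only
          rw [Fintype.sum_prod_type]
          have hin : ∀ K : Fin 3, (∑ p : Pos n m, if K = b.1 then Pc K p b.2 else 0)
              = if K = b.1 then (∑ p : Pos n m, Pc b.1 p b.2) else 0 := by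
            intro K
            by_cases h : K = b.1
            · subst h; simp
            · simp [h]
          rw [Finset.sum_congr rfl fun K _ => hin K,
            Finset.sum_ite_eq' Finset.univ b.1 (fun _ => ∑ p : Pos n m, Pc b.1 p b.2)]
          simp only [Finset.mem_univ, if_true]
          exact (hPc b.1).2.2 b.2
      · rw [Fintype.sum_prod_type]
        refine Finset.sum_congr rfl fun K _ => ?_
        refine Finset.sum_congr rfl fun p _ => ?_
        rw [Fintype.sum_prod_type]
        have hin : ∀ K' : Fin 3, (∑ q : Pos n m,
            (if K = K' then Pc K p q else 0) * groundL1 p q)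
            = if K = K' then (∑ q : Pos n m, Pc K p q * groundL1 p q) else 0 := by
          intro K'
          by_cases h : K = K' <;> simp [h]
        rw [Finset.sum_congr rfl fun K' _ => hin K',
          Finset.sum_ite_eq Finset.univ K (fun _ => ∑ q : Pos n m, Pc K p q * groundL1 p q)]
        simp
    have hA3ne : {c | ∃ P, IsCouplingC x xt P ∧
        (∑ p, ∑ q, P p q * groundL1 p.2 q.2) = c}.Nonempty := by
      have hex : ∀ K : Fin 3, ∃ P, S14.Couple (fun p : Pos n m => x K p.1 p.2)
          (fun p : Pos n m => xt K p.1 p.2) P := fun K =>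
        S14.couple_exists (fun p : Pos n m => hx_nonneg K p.1 p.2)
          (fun p : Pos n m => hxt_nonneg K p.1 p.2) (hmassP K)
      choose Pc hPc using hex
      obtain ⟨h1, _⟩ := hcombine Pc hPc
      exact ⟨_, _, h1, rfl⟩
    have hA3bdd : BddBelow {c | ∃ P, IsCouplingC x xt P ∧
        (∑ p, ∑ q, P p q * groundL1 p.2 q.2) = c} := by
      refine ⟨0, fun c hc => ?_⟩
      obtain ⟨P, hP, rfl⟩ := hc
      exact Finset.sum_nonneg fun p _ => Finset.sum_nonneg fun q _ =>
        mul_nonneg (hP.1 p q) (S14.groundL1_nonneg _ _)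
    rw [W1res]
    apply le_antisymm
    · apply le_of_forall_pos_le_add
      intro ε hε
      have hlt : ∀ K : Fin 3, ∃ c ∈ AK K, c < sInf (AK K) + ε / 3 := by
        intro K
        exact exists_lt_of_csInf_lt (hAKne K) (lt_add_of_pos_right _ (by positivity))
      choose c hcmem hclt using hlt
      have hPex : ∀ K : Fin 3, ∃ P, S14.Couple (fun p : Pos n m => x K p.1 p.2)
          (fun p : Pos n m => xt K p.1 p.2) P ∧ S14.tcost groundL1 P = c K := fun K => hcmem K
      choose Pc hPc hPce using hPex
      obtain ⟨h1, h2⟩ := hcombine Pc hPc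
      have hmem : (∑ K : Fin 3, c K) ∈ {c | ∃ P, IsCouplingC x xt P ∧
          (∑ p, ∑ q, P p q * groundL1 p.2 q.2) = c} := by
        refine ⟨_, h1, ?_⟩
        rw [h2]
        exact Finset.sum_congr rfl fun K _ => hPce K
      calc sInf {c | ∃ P, IsCouplingC x xt P ∧ (∑ p, ∑ q, P p q * groundL1 p.2 q.2) = c}
          ≤ ∑ K : Fin 3, c K := csInf_le hA3bdd hmem
        _ ≤ ∑ K : Fin 3, (sInf (AK K) + ε / 3) :=
            Finset.sum_le_sum fun K _ => (hclt K).le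
        _ = (∑ K : Fin 3, sInf (AK K)) + ε := by
            rw [Finset.sum_add_distrib, Finset.sum_const]
            simp only [Finset.card_univ, Fintype.card_fin]
            ring_nf
    · apply le_csInf hA3ne
      rintro c ⟨P, hPC, rfl⟩
      rw [hcost_split P hPC]
      exact Finset.sum_le_sum fun K _ =>
        csInf_le (hAKbdd K) ⟨_, hrestrict P hPC K, rfl⟩
  rw [key]
  exact Finset.sum_congr rfl fun K _ =>
    S14.channel_eq (x K) (xt K) (hx_nonneg K) (hxt_nonneg K) (hmass K)
end
end

section
/- Let x be an image on an n×m grid and let P = {a+1,…,a+k} × {b+1,…,b+k} be a k×k patch lying strictly in the interior of the grid (i.e., 1 ≤ a, a+k ≤ n−1, 1 ≤ b, b+k ≤ m−1). Let δ be a random local flow plan whose entries are independent, each with mean 0 and variance σ². Then the aggregate intensity of the patch after applying the flow, Σ_{(i,j)∈P} Δ(x, δ)_{i,j}, equals Σ_{(i,j)∈P} x_{i,j} plus a signed sum of exactly 4k distinct entries of δ (those on edges crossing the boundary of P), and hence its variance equals 4k·σ². In particular, under Wasserstein (flow-domain) smoothing the variance of the patch-aggregate feature is proportional to the perimeter of the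 patch rather than its area. -/
noncomputable section

open Finset MeasureTheory

/-- The two pixels joined by a flow-plan coordinate (an edge of the grid). -/
def edgeEnds {n m : ℕ} : FlowIdx n m → Pos n m × Pos n m
  | Sum.inl (i, j) => ((vlow i, j), (vhigh i, j))
  | Sum.inr (i, j) => ((i, hlow j), (i, hhigh j))

/-- The `k × k` patch `{a+1,…,a+k} × {b+1,…,b+k}` (one-based indexing), i.e.
`{a,…,a+k-1} × {b,…,b+k-1}` in zero-based indexing. -/
def patchF (n m a b k : ℕ) : Finset (Pos n m) :=
  Finset.univ.filter fun p =>
    a ≤ (p.1 : ℕ) ∧ (p.1 : ℕ) < a + k ∧ b ≤ (p.2 : ℕ) ∧ (p.2 : ℕ) < b + k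

/-- An edge crosses the boundary of the patch if exactly one of its two
adjacent pixels lies in the patch. -/
def crossesBoundary (n m a b k : ℕ) (e : FlowIdx n m) : Prop :=
  ((edgeEnds e).1 ∈ patchF n m a b k ∧ (edgeEnds e).2 ∉ patchF n m a b k) ∨
    ((edgeEnds e).1 ∉ patchF n m a b k ∧ (edgeEnds e).2 ∈ patchF n m a b k)

instance (n m a b k : ℕ) : DecidablePred (crossesBoundary n m a b k) := fun e =>
  by unfold crossesBoundary; infer_instance

/-! ### Auxiliary lemmas -/

lemma mem_patchF {n m a b k : ℕ} {p : Pos n m} :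
    p ∈ patchF n m a b k ↔
      a ≤ (p.1 : ℕ) ∧ (p.1 : ℕ) < a + k ∧ b ≤ (p.2 : ℕ) ∧ (p.2 : ℕ) < b + k := by
  simp [patchF]

/-- The sign of an edge in the boundary sum. -/
def sgn (n m a b k : ℕ) (e : FlowIdx n m) : ℝ :=
  (if (edgeEnds e).2 ∈ patchF n m a b k then (1 : ℝ) else 0)
    - (if (edgeEnds e).1 ∈ patchF n m a b k then (1 : ℝ) else 0)

lemma sum_padV_up {n m : ℕ} (P : Finset (Pos n m)) (δv : Fin (n - 1) → Fin m → ℝ) :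
    ∑ p ∈ P, padV δv (((p.1 : ℕ) : ℤ) - 1) ((p.2 : ℕ) : ℤ) =
      ∑ i : Fin (n - 1), ∑ j : Fin m, if ((vhigh i, j) : Pos n m) ∈ P then δv i j else 0 := by
  unfold padV
  rw [Finset.sum_comm]
  refine Finset.sum_congr rfl fun i _ => ?_
  rw [Finset.sum_comm]
  refine Finset.sum_congr rfl fun j _ => ?_
  have h : ∀ p : Pos n m,
      ((((i : ℕ) : ℤ) = ((p.1 : ℕ) : ℤ) - 1 ∧ ((j : ℕ) : ℤ) = ((p.2 : ℕ) : ℤ)) ↔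
        p = ((vhigh i, j) : Pos n m)) := by
    intro p
    rw [Prod.ext_iff, Fin.ext_iff, Fin.ext_iff]
    simp only [vhigh]
    omega
  simp_rw [h]
  exact Finset.sum_ite_eq' P _ (fun _ => δv i j)

lemma sum_padV_dn {n m : ℕ} (P : Finset (Pos n m)) (δv : Fin (n - 1) → Fin m → ℝ) :
    ∑ p ∈ P, padV δv ((p.1 : ℕ) : ℤ) ((p.2 : ℕ) : ℤ) =
      ∑ i : Fin (n - 1), ∑ j : Fin m, if ((vlow i, j) : Pos n m) ∈ P then δv i j else 0 := by
  unfold padV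
  rw [Finset.sum_comm]
  refine Finset.sum_congr rfl fun i _ => ?_
  rw [Finset.sum_comm]
  refine Finset.sum_congr rfl fun j _ => ?_
  have h : ∀ p : Pos n m,
      ((((i : ℕ) : ℤ) = ((p.1 : ℕ) : ℤ) ∧ ((j : ℕ) : ℤ) = ((p.2 : ℕ) : ℤ)) ↔
        p = ((vlow i, j) : Pos n m)) := by
    intro p
    rw [Prod.ext_iff, Fin.ext_iff, Fin.ext_iff]
    simp only [vlow]
    omega
  simp_rw [h]
  exact Finset.sum_ite_eq' P _ (fun _ => δv i j)

lemma sum_padH_up {n m : ℕ} (P : Finset (Pos n m)) (δh : Fin n → Fin (m - 1) → ℝ) :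
    ∑ p ∈ P, padH δh ((p.1 : ℕ) : ℤ) (((p.2 : ℕ) : ℤ) - 1) =
      ∑ i : Fin n, ∑ j : Fin (m - 1), if ((i, hhigh j) : Pos n m) ∈ P then δh i j else 0 := by
  unfold padH
  rw [Finset.sum_comm]
  refine Finset.sum_congr rfl fun i _ => ?_
  rw [Finset.sum_comm]
  refine Finset.sum_congr rfl fun j _ => ?_
  have h : ∀ p : Pos n m,
      ((((i : ℕ) : ℤ) = ((p.1 : ℕ) : ℤ) ∧ ((j : ℕ) : ℤ) = ((p.2 : ℕ) : ℤ) - 1) ↔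
        p = ((i, hhigh j) : Pos n m)) := by
    intro p
    rw [Prod.ext_iff, Fin.ext_iff, Fin.ext_iff]
    simp only [hhigh]
    omega
  simp_rw [h]
  exact Finset.sum_ite_eq' P _ (fun _ => δh i j)

lemma sum_padH_dn {n m : ℕ} (P : Finset (Pos n m)) (δh : Fin n → Fin (m - 1) → ℝ) :
    ∑ p ∈ P, padH δh ((p.1 : ℕ) : ℤ) ((p.2 : ℕ) : ℤ) =
      ∑ i : Fin n, ∑ j : Fin (m - 1), if ((i, hlow j) : Pos n m) ∈ P then δh i j else 0 := by
  unfold padH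
  rw [Finset.sum_comm]
  refine Finset.sum_congr rfl fun i _ => ?_
  rw [Finset.sum_comm]
  refine Finset.sum_congr rfl fun j _ => ?_
  have h : ∀ p : Pos n m,
      ((((i : ℕ) : ℤ) = ((p.1 : ℕ) : ℤ) ∧ ((j : ℕ) : ℤ) = ((p.2 : ℕ) : ℤ)) ↔
        p = ((i, hlow j) : Pos n m)) := by
    intro p
    rw [Prod.ext_iff, Fin.ext_iff, Fin.ext_iff]
    simp only [hlow]
    omega
  simp_rw [h]
  exact Finset.sum_ite_eq' P _ (fun _ => δh i j)

lemma patch_sum_identity {n m a b k : ℕ} (x : Fin n → Fin m → ℝ) (δ' : FlowIdx n m → ℝ) :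
    (∑ p ∈ patchF n m a b k, applyFlow x (vPart δ') (hPart δ') p.1 p.2) =
      (∑ p ∈ patchF n m a b k, x p.1 p.2) + ∑ e, sgn n m a b k e * δ' e := by
  set P := patchF n m a b k with hP
  have hsplit : (∑ p ∈ P, applyFlow x (vPart δ') (hPart δ') p.1 p.2) =
      (∑ p ∈ P, x p.1 p.2)
        + ((∑ p ∈ P, padV (vPart δ') (((p.1 : ℕ) : ℤ) - 1) ((p.2 : ℕ) : ℤ))
          - ∑ p ∈ P, padV (vPart δ') ((p.1 : ℕ) : ℤ) ((p.2 : ℕ) : ℤ))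
        + ((∑ p ∈ P, padH (hPart δ') ((p.1 : ℕ) : ℤ) (((p.2 : ℕ) : ℤ) - 1))
          - ∑ p ∈ P, padH (hPart δ') ((p.1 : ℕ) : ℤ) ((p.2 : ℕ) : ℤ)) := by
    simp only [applyFlow, ← Finset.sum_add_distrib, ← Finset.sum_sub_distrib]
    exact Finset.sum_congr rfl fun p _ => by ring
  rw [hsplit, sum_padV_up, sum_padV_dn, sum_padH_up, sum_padH_dn]
  have hR : (∑ e, sgn n m a b k e * δ' e) =
      ((∑ i : Fin (n - 1), ∑ j : Fin m, if ((vhigh i, j) : Pos n m) ∈ P then vPart δ' i j else 0)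
        - ∑ i : Fin (n - 1), ∑ j : Fin m, if ((vlow i, j) : Pos n m) ∈ P then vPart δ' i j else 0)
      + ((∑ i : Fin n, ∑ j : Fin (m - 1), if ((i, hhigh j) : Pos n m) ∈ P then hPart δ' i j else 0)
        - ∑ i : Fin n, ∑ j : Fin (m - 1), if ((i, hlow j) : Pos n m) ∈ P then hPart δ' i j else 0) := by
    rw [Fintype.sum_sum_type]
    rw [Fintype.sum_prod_type (f := fun q : Fin (n-1) × Fin m => sgn n m a b k (Sum.inl q) * δ' (Sum.inl q))]
    rw [Fintype.sum_prod_type (f := fun q : Fin n × Fin (m-1) => sgn n m a b k (Sum.inr q) * δ' (Sum.inr q))]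
    simp only [sgn, edgeEnds, sub_mul, ite_mul, one_mul, zero_mul,
      Finset.sum_sub_distrib]
    congr 1 <;> congr 1 <;>
      refine Finset.sum_congr rfl fun i _ => Finset.sum_congr rfl fun j _ => ?_ <;>
      exact (boole_mul _ _)
  rw [hR]
  ring

lemma cross_inl {n m a b k : ℕ} (hk : 0 < k) (ha1 : 1 ≤ a) (ha2 : a + k ≤ n - 1)
    (i : Fin (n - 1)) (j : Fin m) :
    crossesBoundary n m a b k (Sum.inl (i, j)) ↔
      (((i : ℕ) = a - 1 ∨ (i : ℕ) = a + k - 1) ∧ (b ≤ (j : ℕ) ∧ (j : ℕ) < b + k)) := by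
  have hi := i.isLt
  simp only [crossesBoundary, edgeEnds, mem_patchF, vlow, vhigh]
  omega

lemma cross_inr {n m a b k : ℕ} (hk : 0 < k) (hb1 : 1 ≤ b) (hb2 : b + k ≤ m - 1)
    (i : Fin n) (j : Fin (m - 1)) :
    crossesBoundary n m a b k (Sum.inr (i, j)) ↔
      ((a ≤ (i : ℕ) ∧ (i : ℕ) < a + k) ∧ ((j : ℕ) = b - 1 ∨ (j : ℕ) = b + k - 1)) := by
  have hj := j.isLt
  simp only [crossesBoundary, edgeEnds, mem_patchF, hlow, hhigh]
  omega

lemma cnt_pair {N a1 a2 : ℕ} (h1 : a1 < N) (h2 : a2 < N) (hne : a1 ≠ a2) :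
    (∑ i : Fin N, if (i : ℕ) = a1 ∨ (i : ℕ) = a2 then 1 else 0) = 2 := by
  rw [← Finset.card_filter]
  have : Finset.univ.filter (fun i : Fin N => (i : ℕ) = a1 ∨ (i : ℕ) = a2) =
      {(⟨a1, h1⟩ : Fin N), ⟨a2, h2⟩} := by
    ext i
    simp [Fin.ext_iff]
  rw [this]
  rw [Finset.card_insert_of_notMem (by simp [Fin.ext_iff, hne])]
  simp

lemma cnt_Ico {M c d : ℕ} (h : d ≤ M) :
    (∑ j : Fin M, if c ≤ (j : ℕ) ∧ (j : ℕ) < d then 1 else 0) = d - c := by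
  rw [← Finset.card_filter]
  have hlt : ∀ t ∈ Finset.Ico c d, t < M := fun t ht => by
    have := (Finset.mem_Ico.mp ht).2; omega
  have : Finset.univ.filter (fun j : Fin M => c ≤ (j : ℕ) ∧ (j : ℕ) < d) =
      (Finset.Ico c d).attachFin hlt := by
    ext j
    simp [Finset.mem_attachFin, Finset.mem_Ico]
  rw [this, Finset.card_attachFin, Nat.card_Ico]

lemma card_crossing {n m a b k : ℕ} (hk : 0 < k) (ha1 : 1 ≤ a) (ha2 : a + k ≤ n - 1)
    (hb1 : 1 ≤ b) (hb2 : b + k ≤ m - 1) :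
    (Finset.univ.filter (crossesBoundary n m a b k)).card = 4 * k := by
  rw [Finset.card_filter]
  rw [Fintype.sum_sum_type]
  rw [Fintype.sum_prod_type (f := fun q : Fin (n-1) × Fin m =>
    if crossesBoundary n m a b k (Sum.inl q) then 1 else 0)]
  rw [Fintype.sum_prod_type (f := fun q : Fin n × Fin (m-1) =>
    if crossesBoundary n m a b k (Sum.inr q) then 1 else 0)]
  have e1 : ∀ (i : Fin (n-1)) (j : Fin m),
      (if crossesBoundary n m a b k (Sum.inl (i, j)) then (1:ℕ) else 0) =
        (if (i : ℕ) = a - 1 ∨ (i : ℕ) = a + k - 1 then 1 else 0) *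
          (if b ≤ (j : ℕ) ∧ (j : ℕ) < b + k then 1 else 0) := by
    intro i j
    simp only [cross_inl hk ha1 ha2]
    by_cases h1 : (i : ℕ) = a - 1 ∨ (i : ℕ) = a + k - 1 <;>
      by_cases h2 : b ≤ (j : ℕ) ∧ (j : ℕ) < b + k <;> simp [h1, h2]
  have e2 : ∀ (i : Fin n) (j : Fin (m-1)),
      (if crossesBoundary n m a b k (Sum.inr (i, j)) then (1:ℕ) else 0) =
        (if a ≤ (i : ℕ) ∧ (i : ℕ) < a + k then 1 else 0) *
          (if (j : ℕ) = b - 1 ∨ (j : ℕ) = b + k - 1 then 1 else 0) := by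
    intro i j
    simp only [cross_inr hk hb1 hb2]
    by_cases h1 : a ≤ (i : ℕ) ∧ (i : ℕ) < a + k <;>
      by_cases h2 : (j : ℕ) = b - 1 ∨ (j : ℕ) = b + k - 1 <;> simp_all
  simp only [e1, e2]
  rw [← Finset.sum_mul_sum, ← Finset.sum_mul_sum]
  rw [cnt_pair (a1 := a - 1) (a2 := a + k - 1) (by omega) (by omega) (by omega),
    cnt_pair (a1 := b - 1) (a2 := b + k - 1) (by omega) (by omega) (by omega),
    cnt_Ico (by omega), cnt_Ico (by omega)]
  omega

lemma variance_const_add {Ω : Type} [MeasurableSpace Ω] (μ : MeasureTheory.Measure Ω)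
    [MeasureTheory.IsProbabilityMeasure μ] (c : ℝ) (X : Ω → ℝ)
    (hX : MeasureTheory.MemLp X 2 μ) :
    ProbabilityTheory.variance (fun ω => c + X ω) μ = ProbabilityTheory.variance X μ := by
  have h1 : MeasureTheory.MemLp (fun ω => c + X ω) 2 μ :=
    (MeasureTheory.memLp_const c).add hX
  rw [ProbabilityTheory.variance_eq_integral h1.aestronglyMeasurable.aemeasurable,
    ProbabilityTheory.variance_eq_integral hX.aestronglyMeasurable.aemeasurable]
  have hint : (∫ ω, (c + X ω) ∂μ) = c + ∫ ω, X ω ∂μ := by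
    rw [MeasureTheory.integral_add (MeasureTheory.integrable_const c)
      (hX.integrable one_le_two)]
    simp
  congr 1
  funext ω
  simp only [Pi.pow_apply, Pi.sub_apply, hint]
  ring

open ProbabilityTheory in
/-- For a `k × k` patch `P` strictly in the interior of the
grid and a random local flow plan `δ` with independent mean-zero,
variance-`σ²` entries: the aggregate patch intensity after applying the flow
equals the aggregate intensity of `x` on `P` plus a signed sum of exactly
`4k` distinct entries of `δ` (those on edges crossing the boundary of `P`),
and hence its variance is `4k·σ²` — proportional to the perimeter of the
patch rather than its area. -/
theorem patch_aggregate_variance {n m k a b : ℕ} (σ : ℝ)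
    (x : Fin n → Fin m → ℝ) (hk : 0 < k)
    (ha1 : 1 ≤ a) (ha2 : a + k ≤ n - 1) (hb1 : 1 ≤ b) (hb2 : b + k ≤ m - 1)
    {Ω : Type} [MeasurableSpace Ω] (μ : Measure Ω) [IsProbabilityMeasure μ]
    (δ : Ω → FlowIdx n m → ℝ)
    (hmeas : ∀ e, Measurable fun ω => δ ω e)
    (hindep : iIndepFun (fun e ω => δ ω e) μ)
    (hL2 : ∀ e, MemLp (fun ω => δ ω e) 2 μ)
    (hmean : ∀ e, (∫ ω, δ ω e ∂μ) = 0)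
    (hvar : ∀ e, variance (fun ω => δ ω e) μ = σ ^ 2) :
    (∃ s : FlowIdx n m → ℝ,
      (∀ e, crossesBoundary n m a b k e → s e = 1 ∨ s e = -1) ∧
      (∀ e, ¬crossesBoundary n m a b k e → s e = 0) ∧
      (Finset.univ.filter (crossesBoundary n m a b k)).card = 4 * k ∧
      ∀ δ' : FlowIdx n m → ℝ,
        (∑ p ∈ patchF n m a b k, applyFlow x (vPart δ') (hPart δ') p.1 p.2) =
          (∑ p ∈ patchF n m a b k, x p.1 p.2) + ∑ e, s e * δ' e) ∧
    variance
        (fun ω => ∑ p ∈ patchF n m a b k,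
          applyFlow x (vPart (δ ω)) (hPart (δ ω)) p.1 p.2) μ
      = 4 * (k : ℝ) * σ ^ 2 := by
  classical
  constructor
  · refine ⟨sgn n m a b k, ?_, ?_, card_crossing hk ha1 ha2 hb1 hb2,
      fun δ' => patch_sum_identity x δ'⟩
    · intro e he
      rcases he with ⟨h1, h2⟩ | ⟨h1, h2⟩
      · right; simp [sgn, h1, h2]
      · left; simp [sgn, h1, h2]
    · intro e he
      unfold crossesBoundary at he
      by_cases h1 : (edgeEnds e).1 ∈ patchF n m a b k <;>
        by_cases h2 : (edgeEnds e).2 ∈ patchF n m a b k <;>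
        simp_all [sgn]
  · have hId : (fun ω => ∑ p ∈ patchF n m a b k,
        applyFlow x (vPart (δ ω)) (hPart (δ ω)) p.1 p.2)
        = fun ω => (∑ p ∈ patchF n m a b k, x p.1 p.2)
            + ∑ e, sgn n m a b k e * δ ω e := by
      funext ω; exact patch_sum_identity x (δ ω)
    rw [hId]
    set C := ∑ p ∈ patchF n m a b k, x p.1 p.2 with hC
    set Y : FlowIdx n m → Ω → ℝ := fun e ω => sgn n m a b k e * δ ω e with hYdef
    have hY : ∀ e, MemLp (Y e) 2 μ := fun e => (hL2 e).const_mul _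
    have hXfun : (fun ω => ∑ e, sgn n m a b k e * δ ω e) = ∑ e, Y e := by
      funext ω; simp [hYdef, Finset.sum_apply]
    have hsum : MemLp (fun ω => ∑ e, sgn n m a b k e * δ ω e) 2 μ := by
      rw [hXfun]; exact memLp_finset_sum' _ (fun e _ => hY e)
    have hpair : (↑(Finset.univ : Finset (FlowIdx n m)) : Set (FlowIdx n m)).Pairwise
        fun e e' => ProbabilityTheory.IndepFun (Y e) (Y e') μ := by
      intro e _ e' _ hne
      exact (hindep.indepFun hne).comp
        (measurable_const_mul (sgn n m a b k e)) (measurable_const_mul (sgn n m a b k e'))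
    have hsq : ∀ e, (sgn n m a b k e) ^ 2
        = if crossesBoundary n m a b k e then (1 : ℝ) else 0 := by
      intro e
      by_cases h1 : (edgeEnds e).1 ∈ patchF n m a b k <;>
        by_cases h2 : (edgeEnds e).2 ∈ patchF n m a b k <;>
        simp [sgn, crossesBoundary, h1, h2]
    calc ProbabilityTheory.variance (fun ω => C + ∑ e, sgn n m a b k e * δ ω e) μ
        = ProbabilityTheory.variance (fun ω => ∑ e, sgn n m a b k e * δ ω e) μ :=
          variance_const_add μ C _ hsum
      _ = ProbabilityTheory.variance (∑ e, Y e) μ := by rw [hXfun]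
      _ = ∑ e, ProbabilityTheory.variance (Y e) μ :=
          ProbabilityTheory.IndepFun.variance_sum (fun e _ => hY e) hpair
      _ = ∑ e, (if crossesBoundary n m a b k e then (1 : ℝ) else 0) * σ ^ 2 := by
          refine Finset.sum_congr rfl fun e _ => ?_
          rw [show Y e = fun ω => sgn n m a b k e * δ ω e from rfl,
            ProbabilityTheory.variance_const_mul, hvar e, hsq e]
      _ = ((Finset.univ.filter (crossesBoundary n m a b k)).card : ℝ) * σ ^ 2 := by
          rw [← Finset.sum_mul, Finset.sum_boole]
      _ = 4 * (k : ℝ) * σ ^ 2 := by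
          rw [card_crossing hk ha1 ha2 hb1 hb2]; push_cast; ring
end
end
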